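/- arXiv:0909.1346 — 11 statements merged into one kernel-verified Lean document; each statement's English description precedes it below -/
import Mathlib

section
/- For every integer c ≥ 2 and every ε > 0 there exists an integer n₀ such that for every n ≥ n₀ and every recursive order ⪯ on the tuple space {1,…,n} × {0,1}^{c−1}, there exist a set T of n distinct tuples and a permutation σ of the c components with the following property: for every recursive order ⪯′ on the σ-permuted tuple space, the RunCount of the ⪯-sorted list of T is at least (c − ε) times the RunCount of the ⪯′-sorted list of σ(T). In other words, the number of column runs after the application of any recursive-order function can vary by a factor arbitrarily close to c under permutation of the columns. -/
/-- The number of runs in column `i` of a list of rows: `1 +` the number of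
adjacent pairs differing in component `i`, and `0` for the empty list. -/
def runsCol {c : ℕ} {N : Fin c → ℕ} (i : Fin c) :
    List (∀ k : Fin c, Fin (N k)) → ℕ
  | [] => 0
  | a :: l => 1 + ((a :: l).zip l).countP (fun ab => decide (ab.1 i ≠ ab.2 i))

/-- The RunCount of a list of rows: the sum over all columns of the number of runs. -/
def runCount {c : ℕ} {N : Fin c → ℕ} (l : List (∀ k : Fin c, Fin (N k))) : ℕ :=
  ∑ i : Fin c, runsCol i l


lemma aux_mem_zip_tail {α : Type*} : ∀ (l : List α) (x y : α),
    (x, y) ∈ l.zip l.tail → ∃ (j : ℕ) (hj : j + 1 < l.length),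
      x = l[j]'(by omega) ∧ y = l[j+1] := by
  intro l
  induction l with
  | nil => intro x y h; simp at h
  | cons a l ih =>
    intro x y h
    cases l with
    | nil => simp at h
    | cons b l' =>
      simp only [List.tail_cons, List.zip_cons_cons, List.mem_cons] at h
      rcases h with h | h
      · refine ⟨0, by simp, ?_, ?_⟩ <;> simp [Prod.ext_iff] at h <;> simp [h]
      · obtain ⟨j, hj, hx, hy⟩ := ih x y (by simpa using h)
        refine ⟨j+1, by simpa using Nat.succ_lt_succ hj, ?_, ?_⟩
        · simpa using hx
        · simpa using hy

lemma aux_sublist_pair {α : Type*} : ∀ (L : List α) (u v : α), List.Sublist [u, v] L →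
    ∃ (j k : ℕ) (hjk : j < k) (hk : k < L.length), L[j]'(by omega) = u ∧ L[k] = v := by
  intro L
  induction L with
  | nil => intro u v h; simp at h
  | cons a L ih =>
    intro u v h
    cases h with
    | cons _ h =>
      obtain ⟨j, k, hjk, hk, hu, hv⟩ := ih u v h
      exact ⟨j+1, k+1, by omega, by simpa using Nat.succ_lt_succ hk, by simpa using hu,
        by simpa using hv⟩
    | cons_cons _ h =>
      have hv : v ∈ L := (List.singleton_sublist.mp h)
      obtain ⟨k, hk, hvk⟩ := List.mem_iff_getElem.mp hv
      exact ⟨0, k+1, by omega, by simpa using Nat.succ_lt_succ hk, by simp,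
        by simpa using hvk⟩

lemma aux_two_of_countP {α : Type*} (p : α → Bool) (L : List α) (h : 2 ≤ L.countP p) :
    ∃ u v, List.Sublist [u, v] L ∧ p u ∧ p v := by
  rw [List.countP_eq_length_filter] at h
  match hf : (List.filter p L), h with
  | u :: v :: rest, h =>
    refine ⟨u, v, ?_, ?_, ?_⟩
    · have h1 : List.Sublist [u, v] (List.filter p L) := by rw [hf]; exact .cons₂ _ (.cons₂ _ (List.nil_sublist _))
      exact h1.trans (List.filter_sublist (l := L))
    · exact List.of_mem_filter (p := p) (by rw [hf]; simp)
    · exact List.of_mem_filter (p := p) (by rw [hf]; simp)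
  | [], h => simp at h
  | [u], h => simp at h

lemma aux_sorted_getElem {α : Type*} {le : α → α → Prop} {l : List α}
    (hs : l.Pairwise le) (hrefl : ∀ a, le a a) (j k : ℕ) (hjk : j ≤ k) (hk : k < l.length) :
    le (l[j]'(by omega)) (l[k]) := by
  rcases eq_or_lt_of_le hjk with rfl | hlt
  · exact hrefl _
  · have := hs.rel_get_of_lt (a := ⟨j, by omega⟩) (b := ⟨k, hk⟩) (by simpa using hlt)
    simpa using this

lemma aux_two_changes {α : Type*} (p : α × α → Bool) (l : List α)
    (h : 2 ≤ (l.zip l.tail).countP p) :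
    ∃ (j k : ℕ) (hjk : j < k) (hk : k + 1 < l.length),
      p (l[j]'(by omega), l[j+1]'(by omega)) ∧ p (l[k]'(by omega), l[k+1]) := by
  obtain ⟨u, v, hsub, hpu, hpv⟩ := aux_two_of_countP p _ h
  obtain ⟨j, k, hjk, hk, hu, hv⟩ := aux_sublist_pair _ u v hsub
  have hlen : (l.zip l.tail).length = l.length - 1 := by
    rw [List.length_zip, List.length_tail]; omega
  have hk1 : k + 1 < l.length := by omega
  have hj1 : j + 1 < l.length := by omega
  refine ⟨j, k, hjk, hk1, ?_, ?_⟩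
  · have : (l.zip l.tail)[j]'(by omega) = (l[j]'(by omega), l[j+1]'(by omega)) := by
      rw [List.getElem_zip, List.getElem_tail]
    rw [← this, hu]; exact hpu
  · have : (l.zip l.tail)[k]'(by omega) = (l[k]'(by omega), l[k+1]) := by
      rw [List.getElem_zip, List.getElem_tail]
    rw [← this, hv]; exact hpv

lemma aux_changes_le_one {α β : Type*} [DecidableEq β] {le : α → α → Prop} (g : α → β)
    {l : List α} (hs : l.Pairwise le) (hrefl : ∀ a, le a a)
    (hrec : ∀ a b d, le a b → le b d → g a = g d → g b = g a)
    (h2 : ∀ x ∈ l, ∀ y ∈ l, ∀ z ∈ l, g x ≠ g y → g z ≠ g y → g z = g x) :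
    (l.zip l.tail).countP (fun ab => decide (g ab.1 ≠ g ab.2)) ≤ 1 := by
  by_contra hcon
  push_neg at hcon
  obtain ⟨j, k, hjk, hk, hpj, hpk⟩ := aux_two_changes _ l hcon
  simp only [decide_eq_true_eq] at hpj hpk
  have hj1 : j + 1 < l.length := by omega
  have hmem : ∀ m (hm : m < l.length), l[m] ∈ l := fun m hm => List.getElem_mem hm
  by_cases hjk0 : g (l[j]'(by omega)) = g (l[k]'(by omega))
  · have := hrec (l[j]'(by omega)) (l[j+1]'(by omega)) (l[k]'(by omega))
      (aux_sorted_getElem hs hrefl j (j+1) (by omega) (by omega))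
      (aux_sorted_getElem hs hrefl (j+1) k (by omega) (by omega)) hjk0
    exact hpj this.symm
  · have hz : g (l[k+1]) = g (l[j]'(by omega)) :=
      h2 _ (hmem j (by omega)) _ (hmem k (by omega)) _ (hmem (k+1) hk) hjk0 (Ne.symm hpk)
    have := hrec (l[j]'(by omega)) (l[j+1]'(by omega)) (l[k+1])
      (aux_sorted_getElem hs hrefl j (j+1) (by omega) (by omega))
      (aux_sorted_getElem hs hrefl (j+1) (k+1) (by omega) hk) hz.symm
    exact hpj this.symm

lemma aux_runsCol_ne_nil {c : ℕ} {N : Fin c → ℕ} (i : Fin c)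
    (M : List (∀ k : Fin c, Fin (N k))) (h : M ≠ []) :
    runsCol i M = 1 + ((M.zip M.tail).countP (fun ab => decide (ab.1 i ≠ ab.2 i))) := by
  cases M with
  | nil => exact absurd rfl h
  | cons a l => rfl

/-- A relation on the tuple space `∏ i, {0,…,N i − 1}` is a *recursive order* if for
every `j` and all tuples `a ⪯ b ⪯ d` agreeing (`a` with `d`) on the first `j`
components, `b` also agrees with `a` on the first `j` components. -/
def IsRecursiveOrder {c : ℕ} (N : Fin c → ℕ)
    (le : (∀ k : Fin c, Fin (N k)) → (∀ k : Fin c, Fin (N k)) → Prop) : Prop :=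
  ∀ (j : ℕ) (a b d : ∀ k : Fin c, Fin (N k)), le a b → le b d →
    (∀ i : Fin c, (i : ℕ) < j → a i = d i) → ∀ i : Fin c, (i : ℕ) < j → b i = a i

/-- For every `c ≥ 2` and `ε > 0`, for all large enough `n`: for every recursive
order on the tuple space `{1,…,n} × {0,1}^{c−1}`, there is a table `T` of `n`
distinct tuples and a permutation `σ` of the columns such that every recursive
order on the `σ`-permuted tuple space sorts `σ(T)` with at least `(c − ε)` times
fewer runs: the RunCount after any recursive order can vary by a factor
arbitrarily close to `c` under permutation of the columns. -/
theorem recursive_order_runCount_varies_by_factor_c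
    (c : ℕ) (hc : 2 ≤ c) (ε : ℝ) (hε : 0 < ε) :
    ∃ n₀ : ℕ, ∀ n : ℕ, n₀ ≤ n → ∀ N : Fin c → ℕ,
      (∀ i : Fin c, (i : ℕ) = 0 → N i = n) →
      (∀ i : Fin c, (i : ℕ) ≠ 0 → N i = 2) →
      ∀ le : (∀ k : Fin c, Fin (N k)) → (∀ k : Fin c, Fin (N k)) → Prop,
        IsLinearOrder _ le → IsRecursiveOrder N le →
        ∃ (T : Finset (∀ k : Fin c, Fin (N k))) (σ : Equiv.Perm (Fin c)),
          T.card = n ∧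
          ∀ le' : (∀ k : Fin c, Fin (N (σ k))) → (∀ k : Fin c, Fin (N (σ k))) → Prop,
            IsLinearOrder _ le' → IsRecursiveOrder (fun k => N (σ k)) le' →
            ∀ (l : List (∀ k : Fin c, Fin (N k)))
              (l' : List (∀ k : Fin c, Fin (N (σ k)))),
              l.Pairwise le → l.Nodup → (∀ x, x ∈ l ↔ x ∈ T) →
              l'.Pairwise le' → l'.Nodup →
              (∀ x, x ∈ l' ↔ ∃ t ∈ T, (fun k => t (σ k)) = x) →
              ((c : ℝ) - ε) * (runCount l' : ℝ) ≤ (runCount l : ℝ) := by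
  classical
  refine ⟨max 1 ⌈(2*(c:ℝ)*((c:ℝ)-1))/ε⌉₊, ?_⟩
  intro n hn N h0 h1 le hlin hrec
  haveI := hlin
  have hn1 : 1 ≤ n := le_trans (le_max_left _ _) hn
  have hcpos : 0 < c := by omega
  have htrans : ∀ {x y z}, le x y → le y z → le x z :=
    fun {x y z} h1 h2 => IsTrans.trans x y z h1 h2
  have htot : ∀ x y, le x y ∨ le y x := fun x y => total_of le x y
  have hanti : ∀ {x y}, le x y → le y x → x = y := fun {x y} h1 h2 => antisymm h1 h2
  have hrfl : ∀ x, le x x := fun x => refl_of le x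
  obtain ⟨i0, hi0v⟩ : ∃ i : Fin c, (i : ℕ) = 0 := ⟨⟨0, hcpos⟩, rfl⟩
  obtain ⟨ilast, hilv⟩ : ∃ i : Fin c, (i : ℕ) = c - 1 := ⟨⟨c-1, by omega⟩, rfl⟩
  have hi0last : i0 ≠ ilast := by
    intro h; rw [h] at hi0v; omega
  have hN0 : N i0 = n := h0 i0 hi0v
  -- the reference embedding E
  obtain ⟨E, hE⟩ : ∃ E : Fin (N i0) → ∀ k, Fin (N k),
      ∀ (x : Fin (N i0)) (k : Fin c), (k : ℕ) = 0 → (E x k).val = x.val := by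
    refine ⟨fun x k => if h : (k:ℕ) = 0 then ⟨x.val, ?_⟩ else ⟨0, ?_⟩, ?_⟩
    · rw [h0 k h, ← hN0]; exact x.isLt
    · rw [h1 k h]; omega
    · intro x k h; simp [h]
  have hEi0 : ∀ x, E x i0 = x := fun x => Fin.ext (hE x i0 hi0v)
  -- key lemma A: comparisons are determined by the first column
  have hA : ∀ f g : (∀ k, Fin (N k)), le f g → f i0 ≠ g i0 →
      le (E (f i0)) (E (g i0)) := by
    intro f g hfg hne
    by_contra hcon
    have hgf : le (E (g i0)) (E (f i0)) := (htot _ _).resolve_left hcon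
    have hag : ∀ i : Fin c, (i:ℕ) < 1 → E (g i0) i = g i := by
      intro i hi
      have hieq : i = i0 := Fin.ext (by omega)
      rw [hieq, hEi0]
    rcases htot (E (f i0)) f with h | h
    · have := hrec 1 (E (g i0)) f g (htrans hgf h) hfg hag i0 (by omega)
      rw [hEi0] at this
      exact hne this
    · rcases htot g (E (f i0)) with h' | h'
      · have haf : ∀ i : Fin c, (i:ℕ) < 1 → f i = E (f i0) i := by
          intro i hi
          have hieq : i = i0 := Fin.ext (by omega)
          rw [hieq, hEi0]
        have := hrec 1 f g (E (f i0)) hfg h' haf i0 (by omega)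
        exact hne this.symm
      · have := hrec 1 (E (g i0)) (E (f i0)) g hgf h' hag i0 (by omega)
        rw [hEi0, hEi0] at this
        exact hne this
  -- the coercion from Fin n to the first column
  obtain ⟨cv, hcv⟩ : ∃ cv : Fin n → Fin (N i0), ∀ v, (cv v).val = v.val :=
    ⟨fun v => ⟨v.val, by rw [hN0]; exact v.isLt⟩, fun v => rfl⟩
  have hcvinj : Function.Injective cv := by
    intro a b h
    exact Fin.ext (by rw [← hcv a, ← hcv b, h])
  -- boolean comparison on Fin n
  obtain ⟨rB, hrB⟩ : ∃ rB : Fin n → Fin n → Bool,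
      ∀ v w, rB v w = true ↔ le (E (cv v)) (E (cv w)) :=
    ⟨fun v w => decide (le (E (cv v)) (E (cv w))), fun v w => by simp⟩
  obtain ⟨vs, hvs⟩ : ∃ vs : List (Fin n), vs = (List.finRange n).mergeSort rB := ⟨_, rfl⟩
  have hvperm : List.Perm vs (List.finRange n) := hvs ▸ List.mergeSort_perm _ _
  have hvnodup : vs.Nodup := hvperm.nodup_iff.mpr (List.nodup_finRange n)
  have hvlen : vs.length = n := by rw [hvperm.length_eq, List.length_finRange]
  have hvsort : List.Pairwise (fun a b => le (E (cv a)) (E (cv b))) vs := by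
    have := List.pairwise_mergeSort (le := rB)
      (fun a b d hab hbd => (hrB a d).mpr (htrans ((hrB a b).mp hab) ((hrB b d).mp hbd)))
      (fun a b => by
        rcases htot (E (cv a)) (E (cv b)) with h | h
        · simp [(hrB a b).mpr h]
        · simp [(hrB b a).mpr h])
      (List.finRange n)
    rw [← hvs] at this
    exact this.imp (fun h => (hrB _ _).mp h)
  have hvsR : ∀ (j k : ℕ) (hj : j < k) (hk : k < vs.length),
      le (E (cv (vs[j]'(by omega)))) (E (cv (vs[k]))) := by
    intro j k hj hk
    exact List.pairwise_iff_getElem.mp hvsort j k (by omega) hk hj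
  have hvlt : ∀ k : Fin n, (k:ℕ) < vs.length := fun k => by
    rw [hvlen]; exact k.isLt
  obtain ⟨w, hw⟩ : ∃ w : Fin n → Fin n,
      ∀ (k : Fin n) (h : (k:ℕ) < vs.length), w k = vs[(k:ℕ)]'h :=
    ⟨fun k => vs[(k:ℕ)]'(hvlt k), fun k h => rfl⟩
  have hwinj : Function.Injective w := by
    intro a b h
    rw [hw a (hvlt a), hw b (hvlt b)] at h
    have hinj := List.nodup_iff_injective_get.mp hvnodup
    have := hinj (show vs.get ⟨(a:ℕ), hvlt a⟩ = vs.get ⟨(b:ℕ), hvlt b⟩ by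
      simpa using h)
    exact Fin.ext (by simpa using congrArg Fin.val this)
  -- the table rows
  obtain ⟨g, hg0, hgb⟩ : ∃ g : Fin n → ∀ k, Fin (N k),
      (∀ (p : Fin n) (k : Fin c), (k:ℕ) = 0 → ((g p) k).val = (w p).val) ∧
      (∀ (p : Fin n) (k : Fin c), (k:ℕ) ≠ 0 → ((g p) k).val = (p:ℕ) % 2) := by
    refine ⟨fun p k => if h : (k:ℕ) = 0 then ⟨(w p).val, ?_⟩ else ⟨(p:ℕ) % 2, ?_⟩, ?_, ?_⟩
    · rw [h0 k h]; exact (w p).isLt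
    · rw [h1 k h]; omega
    · intro p k h; simp [h]
    · intro p k h; simp [h]
  have hginj : Function.Injective g := by
    intro a b h
    have hv : ((g a) i0).val = ((g b) i0).val := by rw [h]
    rw [hg0 a i0 hi0v, hg0 b i0 hi0v] at hv
    exact hwinj (Fin.ext hv)
  have hgmono : ∀ a b : Fin n, a < b → le (g a) (g b) := by
    intro a b hab
    have hRab : le (E (cv (w a))) (E (cv (w b))) := by
      rw [hw a (hvlt a), hw b (hvlt b)]; exact hvsR (a:ℕ) (b:ℕ) hab (hvlt b)
    by_contra hcon
    have hba : le (g b) (g a) := (htot _ _).resolve_left hcon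
    have hwne : w b ≠ w a := fun h => (ne_of_lt hab).symm (hwinj h)
    have hne2 : (g b) i0 ≠ (g a) i0 := by
      intro h
      have := congrArg Fin.val h
      rw [hg0 b i0 hi0v, hg0 a i0 hi0v] at this
      exact hwne (Fin.ext this)
    have hle2 := hA (g b) (g a) hba hne2
    have he1 : (g b) i0 = cv (w b) := Fin.ext (by rw [hg0 b i0 hi0v, hcv])
    have he2 : (g a) i0 = cv (w a) := Fin.ext (by rw [hg0 a i0 hi0v, hcv])
    rw [he1, he2] at hle2
    have heq : E (cv (w a)) = E (cv (w b)) := hanti hRab hle2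
    have := congrFun heq i0
    rw [hEi0, hEi0] at this
    exact hwne (hcvinj this).symm
  -- the list L and the table T
  obtain ⟨L, hL⟩ : ∃ L : List (∀ k, Fin (N k)), L = (List.finRange n).map g := ⟨_, rfl⟩
  have hLlen : L.length = n := by rw [hL]; simp
  have hLnodup : L.Nodup := by
    rw [hL]; exact (List.nodup_finRange n).map hginj
  have hLget : ∀ (j : ℕ) (hj : j < n), ∃ p : Fin n, (p:ℕ) = j ∧
      L[j]'(by rw [hLlen]; exact hj) = g p := by
    intro j hj
    refine ⟨⟨j, hj⟩, rfl, ?_⟩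
    rw [List.getElem_of_eq hL, List.getElem_map]
    exact congrArg g (Fin.ext (by simp [List.getElem_finRange]))
  have hLsorted : L.Pairwise le := by
    rw [hL, List.pairwise_map]
    exact (List.pairwise_lt_finRange n).imp (fun h => hgmono _ _ h)
  have hLmem : ∀ x, x ∈ L ↔ ∃ p : Fin n, g p = x := by
    intro x; rw [hL]; simp [List.mem_map]
  refine ⟨L.toFinset, Equiv.swap i0 ilast, ?_, ?_⟩
  · rw [List.toFinset_card_of_nodup hLnodup, hLlen]
  intro le' hlin' hrec' l l' hsl hnl hml hsl' hnl' hml'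
  haveI := hlin'
  have htrans' : ∀ {x y z}, le' x y → le' y z → le' x z :=
    fun {x y z} h1 h2 => IsTrans.trans x y z h1 h2
  have hrfl' : ∀ x, le' x x := fun x => refl_of le' x
  -- l = L
  have hleq : l = L := by
    refine List.Perm.eq_of_pairwise' hsl hLsorted ?_
    refine (List.perm_ext_iff_of_nodup hnl hLnodup).mpr (fun x => ?_)
    rw [hml x, List.mem_toFinset]
  -- runCount l = c * n
  have hrunl : runCount l = c * n := by
    subst hleq
    have hcount : ∀ i : Fin c,
        (l.zip l.tail).countP (fun ab => decide (ab.1 i ≠ ab.2 i)) = n - 1 := by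
      intro i
      have hall : ∀ ab ∈ l.zip l.tail,
          (fun ab => decide (ab.1 i ≠ ab.2 i)) ab = true := by
        rintro ⟨x, y⟩ hab
        obtain ⟨j, hj, hx, hy⟩ := aux_mem_zip_tail l x y hab
        rw [hLlen] at hj
        obtain ⟨p, hp, hgp⟩ := hLget j (by omega)
        obtain ⟨q, hq, hgq⟩ := hLget (j+1) hj
        simp only [decide_eq_true_eq]
        rw [hx, hy, hgp, hgq]
        by_cases h : (i:ℕ) = 0
        · intro heq
          have := congrArg Fin.val heq
          rw [hg0 p i h, hg0 q i h] at this
          have hpq : p = q := hwinj (Fin.ext this)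
          have := congrArg Fin.val hpq
          omega
        · intro heq
          have := congrArg Fin.val heq
          rw [hgb p i h, hgb q i h, hp, hq] at this
          omega
      rw [List.countP_eq_length.mpr hall, List.length_zip, List.length_tail, hLlen]
      omega
    have hrc : ∀ i : Fin c, runsCol i l = n := by
      intro i
      have hne : l ≠ [] := by
        intro h; rw [h] at hLlen; simp at hLlen; omega
      rw [aux_runsCol_ne_nil i l hne, hcount i]
      omega
    rw [runCount]
    rw [Finset.sum_congr rfl (fun i _ => hrc i)]
    simp [Finset.sum_const, Finset.card_univ, mul_comm]
  -- facts about the permutation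
  have hσi0 : Equiv.swap i0 ilast i0 = ilast := Equiv.swap_apply_left _ _
  have hσval : ∀ i : Fin c, i ≠ ilast → ((Equiv.swap i0 ilast i : Fin c) : ℕ) ≠ 0 := by
    intro i hi
    by_cases h : i = i0
    · rw [h, hσi0, hilv]; omega
    · rw [Equiv.swap_apply_of_ne_of_ne h hi]
      intro hv; exact h (Fin.ext (by omega))
  have hNσ0 : N (Equiv.swap i0 ilast i0) = 2 := by
    rw [hσi0]; exact h1 ilast (by rw [hilv]; omega)
  -- members of l'
  have hmem' : ∀ x ∈ l', ∃ p : Fin n, ∀ i : Fin c, i ≠ ilast →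
      (x i).val = (p:ℕ) % 2 := by
    intro x hx
    obtain ⟨t, ht, hteq⟩ := (hml' x).mp hx
    rw [List.mem_toFinset] at ht
    obtain ⟨p, hp⟩ := (hLmem t).mp ht
    refine ⟨p, fun i hi => ?_⟩
    have hxi : x i = t (Equiv.swap i0 ilast i) := (congrFun hteq i).symm
    rw [hxi, ← hp]
    exact hgb p _ (hσval i hi)
  have hval0 : ∀ x ∈ l', ∀ i : Fin c, i ≠ ilast → (x i).val = (x i0).val := by
    intro x hx i hi
    obtain ⟨p, hp⟩ := hmem' x hx
    rw [hp i hi, hp i0 hi0last]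
  -- length of l'
  have hinj2 : Function.Injective
      (fun (t : ∀ k, Fin (N k)) => (fun k => t (Equiv.swap i0 ilast k))) := by
    intro s t h
    funext k
    obtain ⟨k', rfl⟩ : ∃ k', Equiv.swap i0 ilast k' = k :=
      ⟨(Equiv.swap i0 ilast).symm k, Equiv.apply_symm_apply _ _⟩
    exact congrFun h k'
  have hlen' : l'.length = n := by
    have hts : l'.toFinset =
        L.toFinset.image (fun t => (fun k => t (Equiv.swap i0 ilast k))) := by
      ext x
      rw [List.mem_toFinset, hml' x]
      simp [Finset.mem_image]
    have hcc := congrArg Finset.card hts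
    rw [List.toFinset_card_of_nodup hnl'] at hcc
    rw [hcc, Finset.card_image_of_injective _ hinj2,
      List.toFinset_card_of_nodup hLnodup, hLlen]
  have hl'ne : l' ≠ [] := by
    intro h; rw [h] at hlen'; simp at hlen'; omega
  -- at most one change in the first column of l'
  have hc0 : (l'.zip l'.tail).countP (fun ab => decide (ab.1 i0 ≠ ab.2 i0)) ≤ 1 := by
    apply aux_changes_le_one (le := le') (g := fun x => x i0) hsl' hrfl'
    · intro a b d hab hbd had
      exact hrec' 1 a b d hab hbd (fun i hi => by
        have hii : i = i0 := Fin.ext (by omega)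
        rwa [hii]) i0 (by omega)
    · intro x hx y hy z hz hxy hzy
      have hx2 : (x i0).val < 2 := by rw [← hNσ0]; exact (x i0).isLt
      have hy2 : (y i0).val < 2 := by rw [← hNσ0]; exact (y i0).isLt
      have hz2 : (z i0).val < 2 := by rw [← hNσ0]; exact (z i0).isLt
      have hxyv : (x i0).val ≠ (y i0).val := fun h => hxy (Fin.ext h)
      have hzyv : (z i0).val ≠ (y i0).val := fun h => hzy (Fin.ext h)
      exact Fin.ext (by omega)
  -- column bounds for l'
  have hcol : ∀ i : Fin c, i ≠ ilast → runsCol i l' ≤ 2 := by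
    intro i hi
    rw [aux_runsCol_ne_nil i l' hl'ne]
    have hmono : (l'.zip l'.tail).countP (fun ab => decide (ab.1 i ≠ ab.2 i)) ≤
        (l'.zip l'.tail).countP (fun ab => decide (ab.1 i0 ≠ ab.2 i0)) := by
      apply List.countP_mono_left
      rintro ⟨x, y⟩ hab
      have hx := (List.of_mem_zip hab).1
      have hy := List.mem_of_mem_tail (List.of_mem_zip hab).2
      simp only [decide_eq_true_eq]
      intro hne heq
      apply hne
      refine Fin.ext ?_
      rw [hval0 x hx i hi, hval0 y hy i hi, heq]
    omega
  have hlast : runsCol ilast l' ≤ n := by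
    rw [aux_runsCol_ne_nil ilast l' hl'ne]
    have hcle := List.countP_le_length (l := l'.zip l'.tail)
      (p := fun (ab : (∀ k : Fin c, Fin (N (Equiv.swap i0 ilast k))) ×
        (∀ k : Fin c, Fin (N (Equiv.swap i0 ilast k)))) => decide (ab.1 ilast ≠ ab.2 ilast))
    rw [List.length_zip, List.length_tail, hlen'] at hcle
    omega
  have hrunl' : runCount l' ≤ n + 2 * (c - 1) := by
    rw [runCount, ← Finset.add_sum_erase _ _ (Finset.mem_univ ilast)]
    have hsum : ∑ i ∈ Finset.univ.erase ilast, runsCol i l' ≤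
        ∑ _i ∈ Finset.univ.erase ilast, 2 :=
      Finset.sum_le_sum (fun i hi => hcol i (Finset.ne_of_mem_erase hi))
    have hcard : (Finset.univ.erase ilast).card = c - 1 := by
      rw [Finset.card_erase_of_mem (Finset.mem_univ _), Finset.card_univ, Fintype.card_fin]
    rw [Finset.sum_const, hcard, smul_eq_mul] at hsum
    omega
  -- final arithmetic
  rw [hrunl]
  rcases le_or_gt ((c:ℝ) - ε) 0 with hce | hce
  · calc ((c:ℝ) - ε) * (runCount l' : ℝ) ≤ 0 :=
        mul_nonpos_of_nonpos_of_nonneg hce (by positivity)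
      _ ≤ ((c * n : ℕ) : ℝ) := by positivity
  · have hb : (runCount l' : ℝ) ≤ (n : ℝ) + 2*((c:ℝ) - 1) := by
      calc (runCount l' : ℝ) ≤ ((n + 2 * (c-1) : ℕ) : ℝ) := by exact_mod_cast hrunl'
        _ = (n : ℝ) + 2*((c:ℝ) - 1) := by
          push_cast [Nat.cast_sub (show 1 ≤ c by omega)]
          ring
    have hceil : ((2*(c:ℝ)*((c:ℝ)-1))/ε) ≤ (n:ℝ) := by
      have hcn : ⌈(2*(c:ℝ)*((c:ℝ)-1))/ε⌉₊ ≤ n := le_trans (le_max_right _ _) hn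
      exact_mod_cast Nat.ceil_le.mp hcn
    have hεn : 2*(c:ℝ)*((c:ℝ)-1) ≤ ε * n := by
      rw [div_le_iff₀ hε] at hceil
      linarith
    have hcast : ((c * n : ℕ) : ℝ) = (c:ℝ) * n := by push_cast; ring
    rw [hcast]
    have hc2 : (2:ℝ) ≤ (c:ℝ) := by exact_mod_cast hc
    calc ((c:ℝ) - ε) * (runCount l' : ℝ) ≤ ((c:ℝ) - ε) * ((n:ℝ) + 2*((c:ℝ)-1)) :=
        mul_le_mul_of_nonneg_left hb hce.le
      _ ≤ (c:ℝ) * n := by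
        nlinarith [hεn, hε.le, mul_nonneg hε.le (show (0:ℝ) ≤ (c:ℝ)-1 by linarith)]
end

section
/- There exists a set T of 13 pairwise-distinct 2-tuples such that: (i) some ordering of the rows of T has RunCount equal to 14 (which equals n + c − 1 with n = 13 rows and c = 2 columns, the minimum possible for distinct rows), and (ii) for each of the two possible orderings of the columns and every recursive order ⪯ on the corresponding tuple space, the ⪯-sorted list of T (respectively of the column-swapped table) has RunCount strictly greater than 14. That is, there are tables for which no recursive order minimizes the number of runs, even after reordering the columns. -/
set_option maxHeartbeats 2000000


namespace RunsAux

abbrev NN : Fin 2 → ℕ := fun _ => 6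

abbrev Cell : Type := ∀ k : Fin 2, Fin (NN k)

def c2 (a b : Fin 6) : Cell := ![a, b]

def oneB (a b : Cell) : Bool :=
  (decide (a 0 = b 0) && !(decide (a 1 = b 1))) ||
  (!(decide (a 0 = b 0)) && decide (a 1 = b 1))

def ceq (a b : Cell) : Bool := decide (a 0 = b 0) && decide (a 1 = b 1)

lemma cell_ext {a b : Cell} (h0 : a 0 = b 0) (h1 : a 1 = b 1) : a = b := by
  funext k; fin_cases k
  · exact h0
  · exact h1

lemma ceq_iff {a b : Cell} : ceq a b = true ↔ a = b := by
  constructor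
  · intro h
    simp only [ceq, Bool.and_eq_true, decide_eq_true_eq] at h
    exact cell_ext h.1 h.2
  · rintro rfl; simp [ceq]

def memB (a : Cell) (p : List Cell) : Bool := p.any (fun x => ceq x a)

lemma memB_iff {a : Cell} {p : List Cell} : memB a p = true ↔ a ∈ p := by
  simp only [memB, List.any_eq_true]
  constructor
  · rintro ⟨x, hx, h⟩; rwa [ceq_iff.1 h] at hx
  · intro h; exact ⟨a, h, ceq_iff.2 rfl⟩

def okB (a : Cell) : List Cell → Bool
  | [] => true
  | b :: p => decide (a 0 = b 0) || (b :: p).all (fun x => !(decide (x 0 = a 0)))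

def hdOne (a : Cell) : List Cell → Bool
  | [] => false
  | b :: _ => oneB a b

def exts (M : List Cell) (p : List Cell) : List (List Cell) :=
  (M.filter (fun a => !(memB a p) && hdOne a p && okB a p)).map (fun a => a :: p)

def pathsAux (M : List Cell) : ℕ → List (List Cell)
  | 0 => M.map (fun a => [a])
  | n + 1 => (pathsAux M n).flatMap (exts M)

def BC (l : List Cell) : Prop :=
  ∀ i j k : Fin l.length, i < j → j < k →
    l.get i 0 = l.get k 0 → l.get j 0 = l.get i 0

lemma BC_tail {a : Cell} {l : List Cell} (h : BC (a :: l)) : BC l := by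
  intro i j k hij hjk he
  have hi : (i : ℕ) + 1 < (a :: l).length := by
    simp only [List.length_cons]; exact Nat.succ_lt_succ i.isLt
  have hj : (j : ℕ) + 1 < (a :: l).length := by
    simp only [List.length_cons]; exact Nat.succ_lt_succ j.isLt
  have hk : (k : ℕ) + 1 < (a :: l).length := by
    simp only [List.length_cons]; exact Nat.succ_lt_succ k.isLt
  have := h ⟨(i : ℕ) + 1, hi⟩ ⟨(j : ℕ) + 1, hj⟩ ⟨(k : ℕ) + 1, hk⟩
    (Nat.succ_lt_succ hij) (Nat.succ_lt_succ hjk)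
  simp only [List.get_cons_succ] at this
  exact this (by simpa using he)

lemma mem_paths (M : List Cell) :
    ∀ (n : ℕ) (l : List Cell), l.length = n + 1 → l.Nodup →
      (∀ x ∈ l, x ∈ M) → l.Chain' (fun a b => oneB a b = true) → BC l →
      l ∈ pathsAux M n := by
  intro n
  induction n with
  | zero =>
    intro l hlen _ hmem _ _
    cases l with
    | nil => simp at hlen
    | cons a l2 =>
      have h2 : l2 = [] := List.length_eq_zero_iff.1 (by simpa using hlen)
      subst h2
      simp only [pathsAux, List.mem_map]
      exact ⟨a, hmem a (by simp), rfl⟩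
  | succ n ih =>
    intro l hlen hnd hmem hch hbc
    cases l with
    | nil => simp at hlen
    | cons a l' =>
      have hlen' : l'.length = n + 1 := by simpa using hlen
      obtain ⟨b, t, rfl⟩ : ∃ b t, l' = b :: t := by
        cases l' with
        | nil => simp at hlen'
        | cons b t => exact ⟨b, t, rfl⟩
      have hone : oneB a b = true := (List.isChain_cons_cons.1 hch).1
      have hmem' : (b :: t) ∈ pathsAux M n :=
        ih (b :: t) hlen' hnd.of_cons
          (fun x hx => hmem x (List.mem_cons_of_mem _ hx))
          (List.isChain_cons_cons.1 hch).2 (BC_tail hbc)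
      show a :: b :: t ∈ (pathsAux M n).flatMap (exts M)
      refine List.mem_flatMap.2 ⟨b :: t, hmem', ?_⟩
      refine List.mem_map.2 ⟨a, List.mem_filter.2 ⟨hmem a (by simp), ?_⟩, rfl⟩
      have hnotmem : a ∉ (b :: t) := (List.nodup_cons.1 hnd).1
      have hok : okB a (b :: t) = true := by
        by_cases h0 : a 0 = b 0
        · simp [okB, h0]
        · simp only [okB, Bool.or_eq_true, List.all_eq_true]
          right
          intro x hx
          simp only [Bool.not_eq_true', decide_eq_false_iff_not]
          intro hx0
          obtain ⟨m, rfl⟩ := List.mem_iff_get.1 hx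
          rcases m with ⟨mv, hmv⟩
          cases mv with
          | zero => exact h0 hx0.symm
          | succ mm =>
            have hk2 : mm + 2 < (a :: b :: t).length := by
              simp only [List.length_cons] at hmv ⊢; omega
            have hgk : (a :: b :: t).get ⟨mm + 2, hk2⟩ = (b :: t).get ⟨mm + 1, hmv⟩ := by
              simp [List.get_cons_succ]
            have := hbc ⟨0, by simp⟩ ⟨1, by simp⟩ ⟨mm + 2, hk2⟩
              (by simp [Fin.lt_def]) (by simp [Fin.lt_def])
              (by rw [hgk]; exact hx0.symm)
            exact h0 this.symm
      simp only [Bool.and_eq_true, Bool.not_eq_true']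
      exact ⟨⟨by rw [← Bool.not_eq_true, memB_iff]; exact hnotmem, by simpa [hdOne] using hone⟩, hok⟩

def cnt (i : Fin 2) (l : List Cell) : ℕ :=
  (l.zip l.tail).countP (fun ab => decide (ab.1 i ≠ ab.2 i))

lemma cnt_cons (i : Fin 2) (a b : Cell) (t : List Cell) :
    cnt i (a :: b :: t) = cnt i (b :: t) + (if a i = b i then 0 else 1) := by
  by_cases h : a i = b i <;>
    simp [cnt, List.countP_cons, h]

lemma sum_ind {a b : Cell} (h : a ≠ b) :
    1 ≤ (if a 0 = b 0 then 0 else 1) + (if a 1 = b 1 then 0 else 1) := by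
  by_cases h0 : a 0 = b 0 <;> by_cases h1 : a 1 = b 1
  · exact absurd (cell_ext h0 h1) h
  all_goals simp [h0, h1]

lemma oneB_of_sum {a b : Cell} (hne : a ≠ b)
    (h : (if a 0 = b 0 then 0 else 1) + (if a 1 = b 1 then 0 else 1) ≤ 1) :
    oneB a b = true := by
  by_cases h0 : a 0 = b 0 <;> by_cases h1 : a 1 = b 1
  · exact absurd (cell_ext h0 h1) hne
  · simp [oneB, h0, h1]
  · simp [oneB, h0, h1]
  · simp [h0, h1] at h

lemma len_bound : ∀ (l : List Cell), l.Chain' (· ≠ ·) →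
    l.length ≤ 1 + cnt 0 l + cnt 1 l
  | [] => by intro _; simp [cnt]
  | [a] => by intro _; simp [cnt]
  | a :: b :: t => by
    intro h
    simp only [List.Chain', List.isChain_cons_cons] at h
    have ih := len_bound (b :: t) h.2
    have hs := sum_ind h.1
    rw [cnt_cons 0, cnt_cons 1]
    have hlbt : (b :: t).length = t.length + 1 := rfl
    have hlabt : (a :: b :: t).length = t.length + 2 := rfl
    rw [hlbt] at ih
    rw [hlabt]
    omega

lemma exact_one : ∀ (l : List Cell), l.Chain' (· ≠ ·) →
    cnt 0 l + cnt 1 l + 1 ≤ l.length →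
    l.Chain' (fun a b => oneB a b = true)
  | [] => by intro _ _; exact List.isChain_nil
  | [a] => by intro _ _; exact List.isChain_singleton _
  | a :: b :: t => by
    intro h hc
    simp only [List.Chain', List.isChain_cons_cons] at h ⊢
    have ih := len_bound (b :: t) h.2
    have hs := sum_ind h.1
    rw [cnt_cons 0, cnt_cons 1] at hc
    have hlbt : (b :: t).length = t.length + 1 := rfl
    have hlabt : (a :: b :: t).length = t.length + 2 := rfl
    rw [hlabt] at hc
    rw [hlbt] at ih
    constructor
    · exact oneB_of_sum h.1 (by omega)
    · exact exact_one (b :: t) h.2 (by omega)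

lemma runCount_eq (l : List Cell) : runCount l = runsCol 0 l + runsCol 1 l :=
  Fin.sum_univ_two _

lemma key (M l : List Cell) (hM : M.Nodup) (hMlen : M.length = 13)
    (hpaths : pathsAux M 12 = [])
    (hn : l.Nodup) (hmem : ∀ x, x ∈ l ↔ x ∈ M) (hbc : BC l)
    (hrc : runCount l ≤ 14) : False := by
  have htf : l.toFinset = M.toFinset := by
    ext x; simp [List.mem_toFinset, hmem]
  have hlen : l.length = 13 := by
    rw [← List.toFinset_card_of_nodup hn, htf, List.toFinset_card_of_nodup hM, hMlen]
  have hchne : l.Chain' (· ≠ ·) := hn.isChain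
  obtain ⟨a, t, rfl⟩ : ∃ a t, l = a :: t := by
    cases l with
    | nil => simp at hlen
    | cons a t => exact ⟨a, t, rfl⟩
  have hcnt : cnt 0 (a :: t) + cnt 1 (a :: t) + 2 ≤ 14 := by
    have h0 : runsCol 0 (a :: t) = 1 + cnt 0 (a :: t) := rfl
    have h1 : runsCol 1 (a :: t) = 1 + cnt 1 (a :: t) := rfl
    rw [runCount_eq, h0, h1] at hrc
    omega
  have hch1 : (a :: t).Chain' (fun a b => oneB a b = true) :=
    exact_one _ hchne (by omega)
  have := mem_paths M 12 (a :: t) (by omega) hn (fun x hx => (hmem x).1 hx) hch1 hbc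
  rw [hpaths] at this
  exact List.not_mem_nil this

-- the table
def L0 : List Cell :=
  [c2 0 0, c2 0 2, c2 0 4, c2 1 2, c2 1 5, c2 2 4, c2 2 5,
   c2 3 1, c2 4 3, c2 4 5, c2 5 0, c2 5 1, c2 5 2]

def L1 : List Cell :=
  [c2 0 0, c2 2 0, c2 4 0, c2 2 1, c2 5 1, c2 4 2, c2 5 2,
   c2 1 3, c2 3 4, c2 5 4, c2 0 5, c2 1 5, c2 2 5]

def P0 : List Cell :=
  [c2 3 1, c2 5 1, c2 5 0, c2 5 2, c2 1 2, c2 0 2, c2 0 0,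
   c2 0 4, c2 2 4, c2 2 5, c2 1 5, c2 4 5, c2 4 3]

end RunsAux

open RunsAux

set_option maxHeartbeats 2000000 in
/-- There is a table of 13 pairwise-distinct 2-tuples some ordering of whose rows
has RunCount `14 = n + c − 1` (the minimum possible for distinct rows), yet for
both orderings of the columns, every recursive order sorts the table with
RunCount strictly greater than 14: no recursive order minimizes the number of
runs, even after reordering the columns. -/
theorem exists_table_no_recursive_order_optimal :
    ∃ (N : Fin 2 → ℕ) (T : Finset (∀ k : Fin 2, Fin (N k))),
      T.card = 13 ∧
      (∃ l : List (∀ k : Fin 2, Fin (N k)),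
        l.Nodup ∧ (∀ x, x ∈ l ↔ x ∈ T) ∧ runCount l = 14) ∧
      (∀ (σ : Equiv.Perm (Fin 2))
         (le : (∀ k : Fin 2, Fin (N (σ k))) → (∀ k : Fin 2, Fin (N (σ k))) → Prop),
         IsLinearOrder _ le → IsRecursiveOrder (fun k => N (σ k)) le →
         ∀ l : List (∀ k : Fin 2, Fin (N (σ k))),
           l.Pairwise le → l.Nodup →
           (∀ x, x ∈ l ↔ ∃ t ∈ T, (fun k => t (σ k)) = x) →
           14 < runCount l) := by
  refine ⟨NN, L0.toFinset, by decide, ⟨P0, by decide, by decide, by decide⟩, ?_⟩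
  intro σ le hlin hrec l hsort hnd hmem
  by_contra hlt
  push_neg at hlt
  have hbc : BC l := by
    intro i j k hij hjk he
    have hab := hsort.rel_get_of_lt hij
    have hbd := hsort.rel_get_of_lt hjk
    have := hrec 1 (l.get i) (l.get j) (l.get k) hab hbd
      (fun m hm => by
        have hm0 : m = 0 := by
          apply Fin.ext; simpa using Nat.lt_one_iff.1 hm
        rw [hm0]; exact he)
      0 (by norm_num)
    exact this
  have hσ : σ = Equiv.refl (Fin 2) ∨ σ = Equiv.swap 0 1 :=
    (by decide : ∀ τ : Equiv.Perm (Fin 2), τ = Equiv.refl (Fin 2) ∨ τ = Equiv.swap 0 1) σ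
  rcases hσ with rfl | rfl
  · have hmem' : ∀ x, x ∈ l ↔ x ∈ L0 := by
      intro x
      rw [hmem x]
      exact (by decide : ∀ y : Cell,
        ((∃ t ∈ L0.toFinset, (fun k => t (Equiv.refl (Fin 2) k)) = y) ↔ y ∈ L0)) x
    exact key L0 l (by decide) (by decide) (by decide) hnd hmem' hbc hlt
  · have hmem' : ∀ x, x ∈ l ↔ x ∈ L1 := by
      intro x
      rw [hmem x]
      exact (by decide : ∀ y : Cell,
        ((∃ t ∈ L0.toFinset, (fun k => t (Equiv.swap 0 1 k)) = y) ↔ y ∈ L1)) x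
    exact key L1 l (by decide) (by decide) (by decide) hnd hmem' hbc hlt
end

section
/- Any list of n ≥ 1 pairwise-distinct c-tuples has RunCount at least n + c − 1. -/
lemma runsCol_cons_cons {c : ℕ} {N : Fin c → ℕ} (i : Fin c)
    (a b : ∀ k : Fin c, Fin (N k)) (l : List (∀ k : Fin c, Fin (N k))) :
    runsCol i (a :: b :: l) =
      runsCol i (b :: l) + (if a i ≠ b i then 1 else 0) := by
  simp only [runsCol, List.zip_cons_cons, List.countP_cons]
  simp only [decide_not]
  by_cases h : a i = b i <;> simp [h] <;> omega

/-- Any list of `n ≥ 1` pairwise-distinct `c`-tuples has RunCount at least `n + c - 1`. -/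
theorem runCount_ge_of_nodup {c : ℕ} {N : Fin c → ℕ}
    (l : List (∀ k : Fin c, Fin (N k))) (hne : l ≠ []) (hnd : l.Nodup) :
    l.length + c - 1 ≤ runCount l := by
  induction l with
  | nil => exact absurd rfl hne
  | cons a l ih =>
    match l with
    | [] =>
      simp [runCount, runsCol]
    | b :: l =>
      have hnd' : (b :: l).Nodup := hnd.of_cons
      have hab : a ≠ b := by
        intro h; subst h
        exact (List.nodup_cons.mp hnd).1 List.mem_cons_self
      have hrec := ih (by simp) hnd'
      have hkey : runCount (b :: l) + 1 ≤ runCount (a :: b :: l) := by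
        have hsum : runCount (a :: b :: l) =
            runCount (b :: l) + ∑ i : Fin c, (if a i ≠ b i then 1 else 0) := by
          simp [runCount, runsCol_cons_cons, Finset.sum_add_distrib]
        obtain ⟨i, hi⟩ := Function.ne_iff.mp hab
        have h1 : 1 ≤ ∑ i : Fin c, (if a i ≠ b i then 1 else 0) := by
          calc 1 = (if a i ≠ b i then 1 else 0) := by simp [hi]
            _ ≤ _ := Finset.single_le_sum (f := fun i => if a i ≠ b i then 1 else 0)
              (fun _ _ => Nat.zero_le _) (Finset.mem_univ i)
        omega
      simp only [List.length_cons] at *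
      omega
end

section
/- Let T be a set of n ≥ 1 distinct tuples in ∏_{i=1}^c {1,…,N_i} and let ⪯ be any recursive order on this tuple space. Then in the ⪯-sorted list of T, the number of runs in column j is at most min(n, ∏_{i=1}^j N_i) for every j; consequently the RunCount of the ⪯-sorted list of T is at most μ times the minimum RunCount over all orderings of the rows of T, where μ = (∑_{j=1}^c min(n, ∏_{i=1}^j N_i)) / (n + c − 1). That is, recursive ordering is μ-optimal for the problem of minimizing the number of runs. -/
def runsBy {α β : Type*} [DecidableEq β] (g : α → β) : List α → ℕ
  | [] => 0
  | a :: l => 1 + ((a :: l).zip l).countP (fun ab => decide (g ab.1 ≠ g ab.2))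

lemma runsBy_le_toFinset_card {α β : Type*} [DecidableEq β] (r : α → α → Prop) (g : α → β)
    (hconv : ∀ x y z, r x y → r y z → g x = g z → g y = g x) :
    ∀ l : List α, l.Pairwise r → runsBy g l ≤ (l.map g).toFinset.card := by
  intro l
  induction l with
  | nil => intro _; simp [runsBy]
  | cons a t ih =>
    intro hs
    match t with
    | [] => simp [runsBy]
    | b :: t' =>
      have hst : (b :: t').Pairwise r := hs.of_cons
      have hab : r a b := (List.pairwise_cons.mp hs).1 b (by simp)
      have ih' := ih hst
      by_cases hgh : g a = g b
      · have he : runsBy g (a :: b :: t') = runsBy g (b :: t') := by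
          simp [runsBy, List.countP_cons, hgh]
        rw [he]
        refine le_trans ih' (Finset.card_le_card ?_)
        intro x hx
        simp only [List.map_cons, List.toFinset_cons, Finset.mem_insert] at hx ⊢
        tauto
      · have hnotin : g a ∉ ((b :: t').map g).toFinset := by
          simp only [List.mem_toFinset, List.mem_map]
          rintro ⟨x, hx, hgx⟩
          rcases List.mem_cons.mp hx with rfl | hx'
          · exact hgh hgx.symm
          · have hbx : r b x := (List.pairwise_cons.mp hst).1 x hx'
            exact hgh (hconv a b x hab hbx hgx.symm).symm
        have he : runsBy g (a :: b :: t') = runsBy g (b :: t') + 1 := by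
          simp [runsBy, List.countP_cons, hgh]
          omega
        have hc : ((a :: b :: t').map g).toFinset.card = ((b :: t').map g).toFinset.card + 1 := by
          simp only [List.map_cons, List.toFinset_cons]
          rw [Finset.card_insert_of_notMem]
          simpa using hnotin
        rw [he, hc]
        omega

lemma length_le_sum_countP {ι γ : Type*} (s : Finset ι) (p : ι → γ → Bool) :
    ∀ m : List γ, (∀ x ∈ m, ∃ j ∈ s, p j x = true) → m.length ≤ ∑ j ∈ s, m.countP (p j) := by
  intro m
  induction m with
  | nil => simp
  | cons a t ih =>
    intro h
    have ht := ih (fun x hx => h x (List.mem_cons_of_mem a hx))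
    obtain ⟨j0, hj0, hpj0⟩ := h a (List.mem_cons_self)
    have hsum : ∑ j ∈ s, (a :: t).countP (p j)
        = (∑ j ∈ s, t.countP (p j)) + ∑ j ∈ s, (if p j a then 1 else 0) := by
      simp [List.countP_cons, Finset.sum_add_distrib]
    have h1 : 1 ≤ ∑ j ∈ s, (if p j a then 1 else 0) := by
      refine le_trans ?_ (Finset.single_le_sum (f := fun j => if p j a then 1 else 0)
        (fun _ _ => Nat.zero_le _) hj0)
      simp [hpj0]
    rw [List.length_cons, hsum]
    omega

lemma ne_of_mem_zip_tail {α : Type*} :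
    ∀ {l : List α}, l.Nodup → ∀ ab ∈ l.zip l.tail, ab.1 ≠ ab.2 := by
  intro l
  induction l with
  | nil => simp
  | cons a t ih =>
    intro h ab hab
    match t with
    | [] => simp at hab
    | b :: t' =>
      simp only [List.tail_cons, List.zip_cons_cons, List.mem_cons] at hab
      rcases hab with rfl | hab'
      · intro he
        simp only at he
        exact (List.nodup_cons.mp h).1 (he ▸ List.mem_cons_self)
      · exact ih (List.nodup_cons.mp h).2 ab hab'

lemma runsCol_eq_runsBy {c : ℕ} {N : Fin c → ℕ} (j : Fin c)
    (l : List (∀ k : Fin c, Fin (N k))) :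
    runsCol j l = runsBy (fun t => t j) l := by
  cases l <;> rfl

lemma runsBy_mono {α β γ : Type*} [DecidableEq β] [DecidableEq γ] (g : α → β) (h : α → γ)
    (H : ∀ x y, h x = h y → g x = g y) : ∀ l : List α, runsBy g l ≤ runsBy h l := by
  intro l
  cases l with
  | nil => exact le_refl 0
  | cons a t =>
    refine Nat.add_le_add_left (List.countP_mono_left ?_) 1
    intro ab _ hab
    simp only [decide_eq_true_eq] at hab ⊢
    exact fun hh => hab (H _ _ hh)

lemma runsBy_le_length {α β : Type*} [DecidableEq β] (g : α → β) :
    ∀ l : List α, l ≠ [] → runsBy g l ≤ l.length := by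
  intro l hl
  match l with
  | a :: t =>
    have h1 : ((a :: t).zip t).countP (fun ab => decide (g ab.1 ≠ g ab.2)) ≤ t.length := by
      refine le_trans (List.countP_le_length) ?_
      simp [List.length_zip]
    simp only [runsBy, List.length_cons]
    omega


/-- On a table `T` of `n ≥ 1` distinct rows, any recursive order yields at most
`min (n, ∏_{i≤j} N_i)` runs in column `j`, and its RunCount is at most
`μ = (∑_j min (n, ∏_{i≤j} N_i)) / (n + c − 1)` times the RunCount of any
ordering of the rows of `T`: recursive ordering is `μ`-optimal. -/
theorem recursive_order_mu_optimal {c : ℕ} {N : Fin c → ℕ}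
    (T : Finset (∀ k : Fin c, Fin (N k))) (hT : 1 ≤ T.card)
    (le : (∀ k : Fin c, Fin (N k)) → (∀ k : Fin c, Fin (N k)) → Prop)
    (hlin : IsLinearOrder _ le) (hrec : IsRecursiveOrder N le)
    (l : List (∀ k : Fin c, Fin (N k)))
    (hs : l.Pairwise le) (hnd : l.Nodup) (hmem : ∀ x, x ∈ l ↔ x ∈ T) :
    (∀ j : Fin c, runsCol j l ≤ min T.card (∏ i ∈ Finset.Iic j, N i)) ∧
    (∀ l' : List (∀ k : Fin c, Fin (N k)), l'.Nodup → (∀ x, x ∈ l' ↔ x ∈ T) →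
      (runCount l : ℝ) ≤
        (((∑ j : Fin c, min T.card (∏ i ∈ Finset.Iic j, N i) : ℕ) : ℝ) /
            ((T.card : ℝ) + (c : ℝ) - 1)) * (runCount l' : ℝ)) := by
  classical
  obtain ⟨t0, ht0T⟩ := Finset.card_pos.mp hT
  have ht0l : t0 ∈ l := (hmem t0).mpr ht0T
  have hlT : l.toFinset = T := by ext x; simp [hmem]
  have hlen : l.length = T.card := by rw [← hlT, List.toFinset_card_of_nodup hnd]
  have hlne : l ≠ [] := List.ne_nil_of_mem ht0l
  have part1 : ∀ j : Fin c, runsCol j l ≤ min T.card (∏ i ∈ Finset.Iic j, N i) := by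
    intro j
    refine le_min ?_ ?_
    · rw [← hlen, runsCol_eq_runsBy]
      exact runsBy_le_length _ l hlne
    · set g : (∀ k : Fin c, Fin (N k)) → (∀ k : Fin c, Fin (N k)) :=
        fun t i => if i ≤ j then t i else t0 i with hg
    
      have hconv : ∀ x y z, le x y → le y z → g x = g z → g y = g x := by
        intro x y z hxy hyz hxz
        have hxz' : ∀ i : Fin c, (i : ℕ) < (j : ℕ) + 1 → x i = z i := by
          intro i hi
          have hij : i ≤ j := Fin.le_def.mpr (Nat.lt_succ_iff.mp hi)
          have h := congrFun hxz i
          simpa [hg, hij] using h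
        have hy := hrec ((j : ℕ) + 1) x y z hxy hyz hxz'
        funext i
        by_cases hi : i ≤ j
        · simp [hg, hi, hy i (Nat.lt_succ_of_le (Fin.le_def.mp hi))]
        · simp [hg, hi]
      have h1 : runsCol j l ≤ runsBy g l := by
        rw [runsCol_eq_runsBy]
        refine runsBy_mono _ _ ?_ l
        intro x y hh
        simpa [hg] using congrFun hh j
      have h2 := runsBy_le_toFinset_card le g hconv l hs
      have h3 : ((l.map g).toFinset).card ≤ ∏ i ∈ Finset.Iic j, N i := by
        have hinj : Set.InjOn
            (fun (v : ∀ k : Fin c, Fin (N k)) =>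
              (fun i : (Finset.Iic j : Finset (Fin c)) => v i.1))
            ((l.map g).toFinset : Set (∀ k : Fin c, Fin (N k))) := by
          intro v hv w hw hvw
          simp only [Finset.coe_sort_coe, List.coe_toFinset, Set.mem_setOf_eq,
            List.mem_map] at hv hw
          obtain ⟨x, hx, rfl⟩ := hv
          obtain ⟨y, hy, rfl⟩ := hw
          funext i
          by_cases hi : i ≤ j
          · have := congrFun hvw ⟨i, Finset.mem_Iic.mpr hi⟩
            simpa using this
          · simp [hg, hi]
        have hcard := Finset.card_le_card_of_injOn
          (t := (Finset.univ : Finset (∀ i : (Finset.Iic j : Finset (Fin c)), Fin (N i.1))))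
          _ (fun _ _ => Finset.mem_univ _) hinj
        refine le_trans hcard ?_
        rw [Finset.card_univ, Fintype.card_pi]
        simp only [Fintype.card_fin]
        rw [Finset.prod_coe_sort]
      exact le_trans h1 (le_trans h2 h3)
  refine ⟨part1, ?_⟩
  intro l' hnd' hmem'
  have hS : runCount l ≤ ∑ j : Fin c, min T.card (∏ i ∈ Finset.Iic j, N i) :=
    Finset.sum_le_sum (fun j _ => part1 j)
  rcases Nat.eq_zero_or_pos c with hc | hc
  · subst hc
    simp [runCount]
  · have hl'T : l'.toFinset = T := by ext x; simp [hmem']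
    have hlen' : l'.length = T.card := by rw [← hl'T, List.toFinset_card_of_nodup hnd']
    have hl'ne : l' ≠ [] := by
      intro h; rw [h] at hlen'; simp at hlen'; omega
    obtain ⟨a, t, rfl⟩ := List.exists_cons_of_ne_nil hl'ne
    have hlow : T.card + c - 1 ≤ runCount (a :: t) := by
      have hzlen : ((a :: t).zip t).length = t.length := by
        simp [List.length_zip]
      have hle : t.length ≤ ∑ j : Fin c,
          ((a :: t).zip t).countP (fun ab => decide (ab.1 j ≠ ab.2 j)) := by
        rw [← hzlen]
        refine length_le_sum_countP Finset.univ _ _ ?_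
        intro ab hab
        have hne := ne_of_mem_zip_tail hnd' ab (by simpa using hab)
        obtain ⟨j, hj⟩ := Function.ne_iff.mp hne
        exact ⟨j, Finset.mem_univ j, by simpa using hj⟩
      have hrc : runCount (a :: t) = c + ∑ j : Fin c,
          ((a :: t).zip t).countP (fun ab => decide (ab.1 j ≠ ab.2 j)) := by
        unfold runCount
        have : ∀ j : Fin c, runsCol j (a :: t)
            = 1 + ((a :: t).zip t).countP (fun ab => decide (ab.1 j ≠ ab.2 j)) :=
          fun j => rfl
        simp_rw [this]
        rw [Finset.sum_add_distrib]
        simp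
      have hT' : T.card = t.length + 1 := by simpa using hlen'.symm
      omega
    have hD0 : (0 : ℝ) < (T.card : ℝ) + (c : ℝ) - 1 := by
      have h1 : (1 : ℝ) ≤ (T.card : ℝ) := by exact_mod_cast hT
      have h2 : (1 : ℝ) ≤ (c : ℝ) := by exact_mod_cast hc
      linarith
    have hlowR : (T.card : ℝ) + (c : ℝ) - 1 ≤ (runCount (a :: t) : ℝ) := by
      have h1 : 1 ≤ T.card + c := by omega
      have h2 : ((T.card + c - 1 : ℕ) : ℝ) ≤ (runCount (a :: t) : ℝ) := by
        exact_mod_cast hlow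
      rwa [Nat.cast_sub h1, Nat.cast_add, Nat.cast_one] at h2
    calc (runCount l : ℝ)
        ≤ ((∑ j : Fin c, min T.card (∏ i ∈ Finset.Iic j, N i) : ℕ) : ℝ) := by
          exact_mod_cast hS
      _ = ((∑ j : Fin c, min T.card (∏ i ∈ Finset.Iic j, N i) : ℕ) : ℝ)
            / ((T.card : ℝ) + (c : ℝ) - 1) * ((T.card : ℝ) + (c : ℝ) - 1) := by
          field_simp
      _ ≤ _ := by
          refine mul_le_mul_of_nonneg_left hlowR ?_
          exact div_nonneg (Nat.cast_nonneg _) (le_of_lt hD0)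
end

section
/- Let T be a set of n ≥ 1 distinct tuples in ∏_{i=1}^c {1,…,N_i} and let ⪯ be any recursive Gray-code order on this tuple space. Then in the ⪯-sorted list of T, the number of runs in column j is at most min(n, 1 + (N_j − 1)·∏_{i=1}^{j−1} N_i) for every j; consequently the RunCount of the ⪯-sorted list of T is at most μ_GC times the minimum RunCount over all orderings of the rows of T, where μ_GC = (∑_{j=1}^c min(n, 1 + (N_j − 1)·∏_{i=1}^{j−1} N_i)) / (n + c − 1). -/
section Aux
variable {γ : Type*} {β : Type*} [DecidableEq β]

/-- number of adjacent changes of `f` along a list -/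
def chgP (f : γ → β) (q : List γ) : ℕ :=
  (q.zip q.tail).countP (fun ab => decide (f ab.1 ≠ f ab.2))

lemma chgP_nil (f : γ → β) : chgP f ([] : List γ) = 0 := rfl
lemma chgP_single (f : γ → β) (x : γ) : chgP f [x] = 0 := rfl

lemma chgP_cons_cons (f : γ → β) (x y : γ) (t : List γ) :
    chgP f (x :: y :: t) = chgP f (y :: t) + (if f x ≠ f y then 1 else 0) := by
  simp [chgP, List.countP_cons]

lemma chgP_cons_le (f : γ → β) (a : γ) (L : List γ) :
    chgP f L ≤ chgP f (a :: L) := by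
  cases L with
  | nil => simp [chgP]
  | cons x t => rw [chgP_cons_cons]; omega

lemma chgP_cons_le_cons_cons (f : γ → β) (b a : γ) (L : List γ) :
    chgP f (b :: L) ≤ chgP f (b :: a :: L) := by
  cases L with
  | nil => simp [chgP_single, chgP_cons_cons]
  | cons x t =>
    rw [chgP_cons_cons, chgP_cons_cons, chgP_cons_cons]
    by_cases h1 : f b = f a <;> by_cases h2 : f a = f x <;>
      by_cases h3 : f b = f x <;> simp [h1, h2, h3] <;> omega

lemma chgP_sublist_cons (f : γ → β) {l L : List γ} (h : l.Sublist L) :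
    ∀ b, chgP f (b :: l) ≤ chgP f (b :: L) := by
  induction h with
  | slnil => intro b; exact le_refl _
  | cons a h ih =>
    intro b
    exact le_trans (ih b) (chgP_cons_le_cons_cons f b a _)
  | cons_cons a h ih =>
    intro b
    rw [chgP_cons_cons, chgP_cons_cons]
    exact Nat.add_le_add_right (ih a) _

lemma chgP_sublist (f : γ → β) {l L : List γ} (h : l.Sublist L) :
    chgP f l ≤ chgP f L := by
  induction h with
  | slnil => exact le_refl _
  | cons a h ih => exact le_trans ih (chgP_cons_le f a _)
  | cons_cons a h _ => exact chgP_sublist_cons f h a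

lemma countP_eq_card_filter_univ (p : γ → Bool) (q : List γ) :
    q.countP p = (Finset.univ.filter (fun k : Fin q.length => p (q.get k))).card := by
  induction q with
  | nil => simp
  | cons a q ih =>
    have h2 : (Finset.univ.filter (fun k : Fin (a::q).length => p ((a::q).get k) = true)).card
        = (if p a = true then 1 else 0) + ∑ i : Fin q.length, (if p (q.get i) = true then 1 else 0) := by
      rw [Finset.card_filter]
      exact Fin.sum_univ_succ (fun i : Fin (q.length + 1) => if p ((a::q).get i) = true then 1 else 0)
    rw [List.countP_cons, ih, Finset.card_filter, h2]
    exact Nat.add_comm _ _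

lemma length_le_sum_countP_s4 {c : ℕ} (q : List γ) (p : Fin c → γ → Bool)
    (h : ∀ x ∈ q, ∃ j, p j x = true) : q.length ≤ ∑ j : Fin c, q.countP (p j) := by
  induction q with
  | nil => simp
  | cons a q ih =>
    obtain ⟨j0, hj0⟩ := h a (List.mem_cons_self)
    have h' : ∀ x ∈ q, ∃ j, p j x = true := fun x hx => h x (List.mem_cons_of_mem a hx)
    simp only [List.countP_cons, Finset.sum_add_distrib, List.length_cons]
    have h1 : 1 ≤ ∑ j : Fin c, (if p j a = true then 1 else 0) := by
      have := Finset.single_le_sum (f := fun j : Fin c => if p j a = true then 1 else 0)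
        (fun i _ => Nat.zero_le _) (Finset.mem_univ j0)
      simpa [hj0] using this
    have := ih h'
    omega

lemma zip_tail_rel {r : γ → γ → Prop} {q : List γ} (h : q.Chain' r) :
    ∀ x ∈ q.zip q.tail, r x.1 x.2 := by
  induction q with
  | nil => simp
  | cons a q ih =>
    cases q with
    | nil => simp
    | cons b t =>
      intro x hx
      rw [List.tail_cons, List.zip_cons_cons, List.mem_cons] at hx
      rcases hx with h1 | h2
      · subst h1; exact (List.isChain_cons_cons.mp h).1
      · exact ih (List.isChain_cons_cons.mp h).2 x h2

lemma exists_min_of_linear {α : Type*} (le : α → α → Prop) (hlin : IsLinearOrder α le)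
    (s : Finset α) (hs : s.Nonempty) : ∃ m ∈ s, ∀ x ∈ s, le m x := by
  classical
  haveI := hlin
  induction s using Finset.induction_on with
  | empty => exact absurd hs (by simp)
  | @insert a s ha ih =>
    by_cases hsne : s.Nonempty
    · obtain ⟨m, hm, hmin⟩ := ih hsne
      by_cases ham : le a m
      · refine ⟨a, Finset.mem_insert_self a s, ?_⟩
        intro x hx
        rcases Finset.mem_insert.mp hx with rfl | hx
        · exact refl_of le x
        · exact trans_of le ham (hmin x hx)
      · have hma : le m a := (total_of le a m).resolve_left ham
        refine ⟨m, Finset.mem_insert_of_mem hm, ?_⟩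
        intro x hx
        rcases Finset.mem_insert.mp hx with rfl | hx
        · exact hma
        · exact hmin x hx
    · have hse : s = ∅ := Finset.not_nonempty_iff_eq_empty.mp hsne
      subst hse
      exact ⟨a, Finset.mem_insert_self a ∅, by
        intro x hx
        rcases Finset.mem_insert.mp hx with rfl | hx
        · exact refl_of le x
        · simp at hx⟩

end Aux

lemma key_bound {c : ℕ} {N : Fin c → ℕ}
    (le : (∀ k : Fin c, Fin (N k)) → (∀ k : Fin c, Fin (N k)) → Prop)
    (hlin : IsLinearOrder _ le) (hrec : IsRecursiveOrder N le)
    (w : ∀ k : Fin c, Fin (N k))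
    (L : List (∀ k : Fin c, Fin (N k))) (hLs : L.Pairwise le)
    (hch : L.Chain' (fun a b => ∃! i : Fin c, a i ≠ b i)) (j : Fin c) :
    chgP (fun x => x j) L ≤ (N j - 1) * ∏ i ∈ Finset.Iio j, N i := by
  classical
  haveI := hlin
  -- the block Finset and its min
  have hexm : ∀ u : (∀ k : Fin c, Fin (N k)), ∃ m ∈
      Finset.univ.filter (fun x => ∀ i : Fin c, (i : ℕ) < (j : ℕ) → x i = u i),
      ∀ x ∈ Finset.univ.filter (fun x => ∀ i : Fin c, (i : ℕ) < (j : ℕ) → x i = u i), le m x :=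
    fun u => exists_min_of_linear le hlin _
      ⟨u, Finset.mem_filter.mpr ⟨Finset.mem_univ _, fun i _ => rfl⟩⟩
  have hm_mem : ∀ u, ∀ i : Fin c, (i : ℕ) < (j : ℕ) → (hexm u).choose i = u i := by
    intro u
    have h := (hexm u).choose_spec.1
    rw [Finset.mem_filter] at h
    exact h.2
  have hm_min : ∀ u x, (∀ i : Fin c, (i : ℕ) < (j : ℕ) → x i = u i) → le ((hexm u).choose) x :=
    fun u x hx => (hexm u).choose_spec.2 x (Finset.mem_filter.mpr ⟨Finset.mem_univ _, hx⟩)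
  -- the ambient Finset A
  set A : Finset (∀ k : Fin c, Fin (N k)) := Fintype.piFinset
    (fun i => if (i : ℕ) < (j : ℕ) then (Finset.univ : Finset (Fin (N i))) else {w i}) with hA
  have hAcard : A.card = ∏ i ∈ Finset.Iio j, N i := by
    rw [hA, Fintype.card_piFinset]
    have h1 : ∀ i : Fin c,
        ((if (i : ℕ) < (j : ℕ) then (Finset.univ : Finset (Fin (N i))) else {w i})).card
          = if (i : ℕ) < (j : ℕ) then N i else 1 := by
      intro i; split <;> simp
    simp_rw [h1]
    rw [← Finset.prod_filter]
    congr 1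
    ext i
    simp only [Finset.mem_filter, Finset.mem_univ, true_and, Finset.mem_Iio, Fin.lt_def]
  -- the target Finset S
  set S : Finset ((∀ k : Fin c, Fin (N k)) × Fin (N j)) :=
    (A ×ˢ Finset.univ) \ (A.image fun u => (u, (hexm u).choose j)) with hS
  have hinj : Function.Injective
      (fun u : (∀ k : Fin c, Fin (N k)) => (u, (hexm u).choose j)) := by
    intro u v huv
    exact (Prod.ext_iff.mp huv).1
  have himsub : (A.image fun u => (u, (hexm u).choose j)) ⊆ A ×ˢ Finset.univ := by
    intro p hp
    obtain ⟨u, hu, rfl⟩ := Finset.mem_image.mp hp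
    exact Finset.mem_product.mpr ⟨hu, Finset.mem_univ _⟩
  have hScard : S.card = (N j - 1) * ∏ i ∈ Finset.Iio j, N i := by
    rw [hS, Finset.card_sdiff_of_subset himsub, Finset.card_product, Finset.card_univ,
      Fintype.card_fin, Finset.card_image_of_injective _ hinj, ← hAcard,
      tsub_mul, one_mul, mul_comm]
  -- index bookkeeping
  have hzlen : (L.zip L.tail).length ≤ L.length - 1 := by
    rw [List.length_zip, List.length_tail]
    omega
  have hk0 : ∀ k : Fin (L.zip L.tail).length, (k : ℕ) < L.length := by
    intro k
    have := k.2
    omega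
  have hk1 : ∀ k : Fin (L.zip L.tail).length, (k : ℕ) + 1 < L.length := by
    intro k
    have := k.2
    omega
  have hPk : ∀ k : Fin (L.zip L.tail).length,
      (L.zip L.tail).get k = (L[(k : ℕ)]'(hk0 k), L[(k : ℕ) + 1]'(hk1 k)) := by
    intro k
    have h1 := List.getElem_zip (l := L) (l' := L.tail) (i := (k : ℕ)) (h := k.2)
    rw [List.get_eq_getElem, h1, List.getElem_tail]
  -- sortedness at indices
  have hsorted' : ∀ k1 k2 (h1 : k1 < L.length) (h2 : k2 < L.length), k1 ≤ k2 →
      le (L[k1]'h1) (L[k2]'h2) := by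
    intro k1 k2 h1 h2 hle
    rcases Nat.eq_or_lt_of_le hle with rfl | hlt
    · exact refl_of le _
    · exact List.pairwise_iff_getElem.mp hLs k1 k2 h1 h2 hlt
  -- Gray property at indices
  have hgrayk : ∀ (kk : ℕ) (hkk : kk + 1 < L.length),
      (L[kk]'(by omega)) j ≠ (L[kk + 1]'hkk) j →
      ∀ i : Fin c, i ≠ j → (L[kk]'(by omega)) i = (L[kk + 1]'hkk) i := by
    intro kk hkk hcj i hij
    obtain ⟨i0, hi0, huniq⟩ := List.isChain_iff_getElem.mp hch kk hkk
    have hj0 : j = i0 := huniq j hcj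
    by_contra hne
    exact hij ((huniq i hne).trans hj0.symm)
  -- main counting
  rw [chgP, countP_eq_card_filter_univ]
  rw [← hScard]
  refine Finset.card_le_card_of_injOn
    (fun k => ((fun i : Fin c => if (i : ℕ) < (j : ℕ) then (L[(k : ℕ)]'(hk0 k)) i else w i),
      (L[(k : ℕ) + 1]'(hk1 k)) j)) ?_ ?_
  · -- maps into S
    intro k hk
    simp only [Finset.coe_filter, Set.mem_setOf_eq, Finset.mem_filter, Finset.mem_univ, true_and, hPk k, decide_eq_true_eq] at hk
    rw [Finset.mem_coe, hS, Finset.mem_sdiff]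
    constructor
    · refine Finset.mem_product.mpr ⟨?_, Finset.mem_univ _⟩
      rw [hA, Fintype.mem_piFinset]
      intro i
      by_cases hi : (i : ℕ) < (j : ℕ) <;> simp [hi]
    · intro hmem'
      obtain ⟨u, hu, hequ⟩ := Finset.mem_image.mp hmem'
      have hu1 : u = fun i : Fin c =>
          if (i : ℕ) < (j : ℕ) then (L[(k : ℕ)]'(hk0 k)) i else w i :=
        (Prod.ext_iff.mp hequ).1
      have hu2 : (hexm u).choose j = (L[(k : ℕ) + 1]'(hk1 k)) j := (Prod.ext_iff.mp hequ).2
      have hma : le ((hexm u).choose) (L[(k : ℕ)]'(hk0 k)) := by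
        refine hm_min u _ ?_
        intro i hi
        rw [hu1]
        simp [hi]
      have hlab : le (L[(k : ℕ)]'(hk0 k)) (L[(k : ℕ) + 1]'(hk1 k)) :=
        hsorted' _ _ _ _ (Nat.le_succ _)
      have hagree : ∀ i : Fin c, (i : ℕ) < (j : ℕ) + 1 →
          (hexm u).choose i = (L[(k : ℕ) + 1]'(hk1 k)) i := by
        intro i hi
        rcases Nat.lt_or_ge (i : ℕ) (j : ℕ) with hlt | hge
        · have hblk : (hexm u).choose i = (L[(k : ℕ)]'(hk0 k)) i := by
            rw [hm_mem u i hlt, hu1]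
            simp [hlt]
          rw [hblk]
          exact hgrayk (k : ℕ) (hk1 k) hk i (by intro h; rw [h] at hlt; omega)
        · have hij : i = j := Fin.ext (by omega)
          rw [hij, hu2]
      have hres := hrec ((j : ℕ) + 1) ((hexm u).choose) (L[(k : ℕ)]'(hk0 k))
        (L[(k : ℕ) + 1]'(hk1 k)) hma hlab hagree j (Nat.lt_succ_self _)
      exact hk (hres.trans hu2)
  · -- injectivity
    intro k1 hk1' k2 hk2' heq
    simp only [Finset.coe_filter, Set.mem_setOf_eq, Finset.mem_univ, true_and, hPk,
      decide_eq_true_eq] at hk1' hk2'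
    have hzz : ∀ i : Fin c, (i : ℕ) < (j : ℕ) →
        (L[(k1 : ℕ)]'(hk0 k1)) i = (L[(k2 : ℕ)]'(hk0 k2)) i := by
      intro i hi
      have := congrFun (Prod.ext_iff.mp heq).1 i
      simpa [hi] using this
    have hbb : (L[(k1 : ℕ) + 1]'(hk1 k1)) j = (L[(k2 : ℕ) + 1]'(hk1 k2)) j :=
      (Prod.ext_iff.mp heq).2
    have main : ∀ k1 k2 : Fin (L.zip L.tail).length,
        (L[(k1 : ℕ)]'(hk0 k1)) j ≠ (L[(k1 : ℕ) + 1]'(hk1 k1)) j →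
        (L[(k2 : ℕ)]'(hk0 k2)) j ≠ (L[(k2 : ℕ) + 1]'(hk1 k2)) j →
        (∀ i : Fin c, (i : ℕ) < (j : ℕ) →
          (L[(k1 : ℕ)]'(hk0 k1)) i = (L[(k2 : ℕ)]'(hk0 k2)) i) →
        (L[(k1 : ℕ) + 1]'(hk1 k1)) j = (L[(k2 : ℕ) + 1]'(hk1 k2)) j →
        ¬ (k1 : ℕ) < (k2 : ℕ) := by
      intro k1 k2 hc1 hc2 hzz' hbb' hlt
      have h1 : le (L[(k1 : ℕ) + 1]'(hk1 k1)) (L[(k2 : ℕ)]'(hk0 k2)) :=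
        hsorted' _ _ _ _ (by omega)
      have h2 : le (L[(k2 : ℕ)]'(hk0 k2)) (L[(k2 : ℕ) + 1]'(hk1 k2)) :=
        hsorted' _ _ _ _ (Nat.le_succ _)
      have hagree : ∀ i : Fin c, (i : ℕ) < (j : ℕ) + 1 →
          (L[(k1 : ℕ) + 1]'(hk1 k1)) i = (L[(k2 : ℕ) + 1]'(hk1 k2)) i := by
        intro i hi
        rcases Nat.lt_or_ge (i : ℕ) (j : ℕ) with hilt | hge
        · have hij : i ≠ j := by intro h; rw [h] at hilt; omega
          rw [← hgrayk (k1 : ℕ) (hk1 k1) hc1 i hij, hzz' i hilt,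
            hgrayk (k2 : ℕ) (hk1 k2) hc2 i hij]
        · have hij : i = j := Fin.ext (by omega)
          rw [hij]; exact hbb'
      have hres := hrec ((j : ℕ) + 1) (L[(k1 : ℕ) + 1]'(hk1 k1)) (L[(k2 : ℕ)]'(hk0 k2))
        (L[(k2 : ℕ) + 1]'(hk1 k2)) h1 h2 hagree j (Nat.lt_succ_self _)
      exact hc2 (hres.trans (hagree j (Nat.lt_succ_self _)))
    have h12 := main k1 k2 hk1' hk2' hzz hbb
    have h21 := main k2 k1 hk2' hk1' (fun i hi => (hzz i hi).symm) hbb.symm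
    exact Fin.ext (by omega)

lemma runsCol_eq_chgP {c : ℕ} {N : Fin c → ℕ} (j : Fin c) (a : ∀ k : Fin c, Fin (N k))
    (t : List (∀ k : Fin c, Fin (N k))) :
    runsCol j (a :: t) = 1 + chgP (fun x => x j) (a :: t) := rfl

/-- On a table `T` of `n ≥ 1` distinct rows, any recursive Gray-code order (a
recursive order whose sorted enumeration of all tuples has consecutive tuples
differing in exactly one component) yields at most
`min (n, 1 + (N_j − 1)·∏_{i<j} N_i)` runs in column `j`, hence its RunCount is at
most `μ_GC = (∑_j min (n, 1 + (N_j − 1)·∏_{i<j} N_i)) / (n + c − 1)` times the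
RunCount of any ordering of the rows of `T`. -/
theorem recursive_gray_order_muGC_optimal {c : ℕ} {N : Fin c → ℕ}
    (T : Finset (∀ k : Fin c, Fin (N k))) (hT : 1 ≤ T.card)
    (le : (∀ k : Fin c, Fin (N k)) → (∀ k : Fin c, Fin (N k)) → Prop)
    (hlin : IsLinearOrder _ le) (hrec : IsRecursiveOrder N le)
    (hgray : ∀ L : List (∀ k : Fin c, Fin (N k)),
      L.Pairwise le → L.Nodup → (∀ x, x ∈ L) →
      L.Chain' (fun a b => ∃! i : Fin c, a i ≠ b i))
    (l : List (∀ k : Fin c, Fin (N k)))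
    (hs : l.Pairwise le) (hnd : l.Nodup) (hmem : ∀ x, x ∈ l ↔ x ∈ T) :
    (∀ j : Fin c,
      runsCol j l ≤ min T.card (1 + (N j - 1) * ∏ i ∈ Finset.Iio j, N i)) ∧
    (∀ l' : List (∀ k : Fin c, Fin (N k)), l'.Nodup → (∀ x, x ∈ l' ↔ x ∈ T) →
      (runCount l : ℝ) ≤
        (((∑ j : Fin c, min T.card (1 + (N j - 1) * ∏ i ∈ Finset.Iio j, N i) : ℕ) : ℝ) /
            ((T.card : ℝ) + (c : ℝ) - 1)) * (runCount l' : ℝ)) := by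
  classical
  haveI := hlin
  letI : DecidableRel le := fun a b => Classical.dec _
  obtain ⟨w, hw⟩ : T.Nonempty := Finset.card_pos.mp hT
  have hlen : ∀ q : List (∀ k : Fin c, Fin (N k)), q.Nodup → (∀ x, x ∈ q ↔ x ∈ T) →
      q.length = T.card := by
    intro q hq hmq
    rw [← List.toFinset_card_of_nodup hq]
    congr 1
    ext x
    rw [List.mem_toFinset, hmq]
  have hne : ∀ q : List (∀ k : Fin c, Fin (N k)), (∀ x, x ∈ q ↔ x ∈ T) → q ≠ [] := by
    intro q hmq h
    subst h
    exact absurd ((hmq w).mpr hw) (by simp)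
  set L : List (∀ k : Fin c, Fin (N k)) := Finset.univ.sort le with hL
  have hLs : L.Pairwise le := Finset.pairwise_sort _ le
  have hLn : L.Nodup := Finset.sort_nodup _ le
  have hLc : ∀ x, x ∈ L := fun x => (Finset.mem_sort le).mpr (Finset.mem_univ x)
  have hch := hgray L hLs hLn hLc
  have hsubl : l.Sublist L := List.sublist_of_subperm_of_pairwise
    (List.subperm_of_subset hnd (fun x _ => hLc x)) hs hLs
  have h1 : ∀ j : Fin c,
      runsCol j l ≤ min T.card (1 + (N j - 1) * ∏ i ∈ Finset.Iio j, N i) := by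
    intro j
    obtain ⟨a, t, hat⟩ := List.exists_cons_of_ne_nil (hne l hmem)
    refine le_min ?_ ?_
    · have he : runsCol j l = 1 + ((a :: t).zip t).countP
          (fun ab => decide (ab.1 j ≠ ab.2 j)) := by rw [hat]; rfl
      rw [he]
      have h2 := List.countP_le_length (p := fun ab => decide (ab.1 j ≠ ab.2 j))
        (l := (a :: t).zip t)
      have h3 : ((a :: t).zip t).length = t.length := by
        rw [List.length_zip]; simp
      have h4 : l.length = T.card := hlen l hnd hmem
      rw [hat] at h4
      simp only [List.length_cons] at h4
      omega
    · have he : runsCol j l = 1 + chgP (fun x => x j) l := by rw [hat]; exact rfl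
      rw [he]
      have h2 := chgP_sublist (fun x => x j) hsubl
      have hkey := key_bound le hlin hrec w L hLs hch j
      exact Nat.add_le_add_left (le_trans h2 hkey) 1
  refine ⟨h1, ?_⟩
  intro l' hnd' hmem'
  set Sb : ℕ := ∑ j : Fin c, min T.card (1 + (N j - 1) * ∏ i ∈ Finset.Iio j, N i) with hSb
  have hub : runCount l ≤ Sb := Finset.sum_le_sum (fun j _ => h1 j)
  have hlb : T.card + c - 1 ≤ runCount l' := by
    obtain ⟨a, t, hat⟩ := List.exists_cons_of_ne_nil (hne l' hmem')
    have hsum : runCount l' = ∑ j : Fin c, (1 + chgP (fun x => x j) l') := by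
      rw [runCount]
      refine Finset.sum_congr rfl (fun j _ => ?_)
      rw [hat]; exact rfl
    have hchain : ∀ x ∈ l'.zip l'.tail, x.1 ≠ x.2 := zip_tail_rel (List.Pairwise.isChain hnd')
    have hcnt : (l'.zip l'.tail).length ≤ ∑ j : Fin c, chgP (fun x => x j) l' := by
      refine length_le_sum_countP_s4 (l'.zip l'.tail)
        (fun (j : Fin c) (ab : (∀ k : Fin c, Fin (N k)) × (∀ k : Fin c, Fin (N k))) =>
          decide (ab.1 j ≠ ab.2 j)) ?_
      intro x hx
      obtain ⟨jj, hjj⟩ := Function.ne_iff.mp (hchain x hx)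
      exact ⟨jj, decide_eq_true hjj⟩
    have hzl : (l'.zip l'.tail).length = l'.length - 1 := by
      rw [List.length_zip, List.length_tail]
      exact min_eq_right (Nat.sub_le _ _)
    have hl'len : l'.length = T.card := hlen l' hnd' hmem'
    have h6 : T.card - 1 ≤ ∑ j : Fin c, chgP (fun x => x j) l' := by
      rw [← hl'len, ← hzl]; exact hcnt
    rw [hsum, Finset.sum_add_distrib, Finset.sum_const, Finset.card_univ, Fintype.card_fin,
      smul_eq_mul, mul_one]
    calc T.card + c - 1 = (T.card - 1) + c := Nat.sub_add_comm hT
      _ ≤ (∑ j : Fin c, chgP (fun x => x j) l') + c := Nat.add_le_add_right h6 _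
      _ = c + ∑ j : Fin c, chgP (fun x => x j) l' := Nat.add_comm _ _
  by_cases hD : (T.card : ℝ) + (c : ℝ) - 1 = 0
  · have hnc : T.card + c = 1 := by
      have h : ((T.card + c : ℕ) : ℝ) = 1 := by push_cast; linarith
      exact_mod_cast h
    have hc0 : c = 0 := by omega
    subst hc0
    have hrc0 : runCount l = 0 := by simp [runCount]
    rw [hD, div_zero, zero_mul, hrc0]
    simp
  · have h1R : (1 : ℝ) ≤ (T.card : ℝ) := by exact_mod_cast hT
    have hcR : (0 : ℝ) ≤ (c : ℝ) := Nat.cast_nonneg c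
    have hDpos : 0 < (T.card : ℝ) + (c : ℝ) - 1 := lt_of_le_of_ne (by linarith) (Ne.symm hD)
    rw [div_mul_eq_mul_div, le_div_iff₀ hDpos]
    have h2' : (T.card : ℝ) + (c : ℝ) - 1 ≤ (runCount l' : ℝ) := by
      have h1n : 1 ≤ T.card + c := by omega
      have hc : ((T.card + c - 1 : ℕ) : ℝ) = (T.card : ℝ) + (c : ℝ) - 1 := by
        rw [Nat.cast_sub h1n]
        push_cast
        ring
      rw [← hc]
      exact_mod_cast hlb
    have h1' : (runCount l : ℝ) ≤ (Sb : ℝ) := by exact_mod_cast hub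
    exact mul_le_mul h1' h2' (by linarith) (by positivity)
end

section
/- Let c ≥ 1, let N_1,…,N_c be integers with N_i ≥ 2 for all i, let n ≥ 1 be an integer, and let m = min_{1≤i≤c} N_i. Then ∑_{j=1}^c min(n, 1 + (N_j − 1)·∏_{i=1}^{j−1} N_i) > ((m − 1)/m) · ∑_{j=1}^c min(n, ∏_{i=1}^{j} N_i). (Equivalently, with μ = (∑_{j=1}^c min(n, ∏_{i≤j} N_i))/(n+c−1) and μ_GC = (∑_{j=1}^c min(n, 1+(N_j−1)∏_{i<j} N_i))/(n+c−1), one has μ_GC > ((m−1)/m)·μ.) -/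
/-- With `m = min_i N_i` (all `N_i ≥ 2`), the numerator of the Gray-code
suboptimality bound `μ_GC` is strictly larger than `(m−1)/m` times the numerator
of the recursive-order suboptimality bound `μ`; equivalently,
`μ_GC > ((m−1)/m)·μ`. -/
theorem muGC_gt_mu (c : ℕ) (hc : 1 ≤ c) (N : Fin c → ℕ) (hN : ∀ i, 2 ≤ N i)
    (n : ℕ) (hn : 1 ≤ n) (m : ℕ) (hm1 : ∃ i, N i = m) (hm2 : ∀ i, m ≤ N i) :
    (((m : ℝ) - 1) / (m : ℝ)) *
        ((∑ j : Fin c, min n (∏ i ∈ Finset.Iic j, N i) : ℕ) : ℝ)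
      < ((∑ j : Fin c, min n (1 + (N j - 1) * ∏ i ∈ Finset.Iio j, N i) : ℕ) : ℝ) := by
  have hm : 2 ≤ m := by
    obtain ⟨i, hi⟩ := hm1
    have := hN i; omega
  set A := ∑ j : Fin c, min n (∏ i ∈ Finset.Iic j, N i) with hA
  set B := ∑ j : Fin c, min n (1 + (N j - 1) * ∏ i ∈ Finset.Iio j, N i) with hB
  have key : (m - 1) * A + c ≤ m * B := by
    have : (m - 1) * A + c
        = ∑ j : Fin c, ((m - 1) * min n (∏ i ∈ Finset.Iic j, N i) + 1) := by
      rw [hA, Finset.mul_sum, Finset.sum_add_distrib, Finset.sum_const,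
        Finset.card_univ, Fintype.card_fin, smul_eq_mul, mul_one]
    rw [this, hB, Finset.mul_sum]
    apply Finset.sum_le_sum
    intro j _
    set Q := ∏ i ∈ Finset.Iio j, N i with hQ
    have hQ1 : 1 ≤ Q := by
      rw [hQ]
      exact Finset.one_le_prod' (fun i _ => le_trans one_le_two (hN i))
    have hP : ∏ i ∈ Finset.Iic j, N i = N j * Q := by
      rw [hQ, ← Finset.prod_insert (by simp)]
      congr 1
      ext x
      simp [Finset.mem_insert, le_iff_lt_or_eq, or_comm, eq_comm]
    have hNj := hN j
    have hmNj := hm2 j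
    rcases le_or_gt n (1 + (N j - 1) * Q) with h | h
    · have hb : min n (1 + (N j - 1) * Q) = n := min_eq_left h
      have ha : min n (∏ i ∈ Finset.Iic j, N i) ≤ n := min_le_left _ _
      rw [hb]
      have h2 : m - 1 + 1 = m := by omega
      calc (m - 1) * (n ⊓ ∏ i ∈ Finset.Iic j, N i) + 1
          ≤ (m - 1) * n + n := add_le_add (Nat.mul_le_mul_left _ ha) hn
        _ = (m - 1 + 1) * n := by ring
        _ = m * n := by rw [h2]
    · have hb : min n (1 + (N j - 1) * Q) = 1 + (N j - 1) * Q := min_eq_right h.le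
      have ha : min n (∏ i ∈ Finset.Iic j, N i) ≤ N j * Q := by
        rw [hP] at *; exact min_le_right _ _
      rw [hb]
      have h1 : N j - 1 + 1 = N j := by omega
      have h2 : m - 1 + 1 = m := by omega
      -- (m-1)*(Nj*Q)+1 ≤ m*(1+(Nj-1)*Q)
      have : (m - 1) * (N j * Q) + 1 ≤ m * (1 + (N j - 1) * Q) := by
        have expand : m * (1 + (N j - 1) * Q) = m + m * ((N j - 1) * Q) := by ring
        have cmp : (m - 1) * (N j * Q) ≤ m * ((N j - 1) * Q) := by
          have : (m - 1) * N j ≤ m * (N j - 1) := by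
            cases' Nat.exists_eq_add_of_le hmNj with k hk
            have : 1 ≤ m := by omega
            zify [this, hNj] at *
            nlinarith
          calc (m - 1) * (N j * Q) = (m - 1) * N j * Q := by ring
            _ ≤ m * (N j - 1) * Q := Nat.mul_le_mul_right Q this
            _ = m * ((N j - 1) * Q) := by ring
        omega
      calc (m - 1) * min n (∏ i ∈ Finset.Iic j, N i) + 1
          ≤ (m - 1) * (N j * Q) + 1 := by
            exact add_le_add_left (Nat.mul_le_mul_left _ ha) 1
        _ ≤ m * (1 + (N j - 1) * Q) := this
  have key2 : (m - 1) * A < m * B := by omega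
  have hmpos : (0 : ℝ) < (m : ℝ) := by
    have : 0 < m := by omega
    exact_mod_cast this
  rw [div_mul_eq_mul_div, div_lt_iff₀ hmpos]
  have hcast : ((m - 1 : ℕ) : ℝ) * (A : ℝ) < (m : ℝ) * (B : ℝ) := by exact_mod_cast key2
  rw [Nat.cast_sub (by omega : 1 ≤ m)] at hcast
  push_cast at hcast ⊢
  linarith
end

section
/- Let T be a uniformly distributed random table with density p ∈ [0,1] on ∏_{i=1}^c {1,…,N_i} and let ⪯ be any recursive order on this tuple space. For each column i, let R_i be the expected number of runs and S_i the expected number of seamless joins in column i of the ⪯-sorted list of T. Then R_i + S_i = (∏_{k=1}^{i} N_k) · (1 − (1−p)^{∏_{k=i+1}^{c} N_k}) for every i. In particular, the expected sum of runs and seamless joins in each column is the same for all recursive orders. -/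
/-- The number of seamless joins in column `i`: adjacent pairs of rows with equal
`i`-th components that differ in some earlier component. -/
def seamlessCol {c : ℕ} {N : Fin c → ℕ} (i : Fin c) :
    List (∀ k : Fin c, Fin (N k)) → ℕ
  | [] => 0
  | a :: l => ((a :: l).zip l).countP
      (fun ab => decide (ab.1 i = ab.2 i ∧ ∃ j : Fin c, j < i ∧ ab.1 j ≠ ab.2 j))

/-- Expected value of `f` over the random subset of `α` in which each element is
included independently with probability `p`. -/
noncomputable def expVal {α : Type*} [Fintype α] [DecidableEq α] (p : ℝ)
    (f : Finset α → ℝ) : ℝ :=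
  ∑ S ∈ (Finset.univ : Finset α).powerset,
    p ^ S.card * (1 - p) ^ (Fintype.card α - S.card) * f S

set_option linter.unusedSectionVars false


variable {α : Type*} [Fintype α] [DecidableEq α]

lemma sum_powerset_prob (p : ℝ) (A : Finset α) :
    ∑ S ∈ A.powerset, p ^ S.card * (1 - p) ^ (A.card - S.card) = 1 := by
  have h := Finset.prod_add (fun _ : α => p) (fun _ => 1 - p) A
  simp only [add_sub_cancel, Finset.prod_const, one_pow] at h
  refine Eq.trans ?_ h.symm
  apply Finset.sum_congr rfl
  intro S hS
  rw [Finset.mem_powerset] at hS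
  rw [Finset.card_sdiff_of_subset hS]

lemma sum_prob_disjoint (p : ℝ) (A : Finset α) :
    ∑ S ∈ (Finset.univ : Finset α).powerset,
      p ^ S.card * (1 - p) ^ (Fintype.card α - S.card) * (if Disjoint S A then 1 else 0)
      = (1 - p) ^ A.card := by
  have h1 : ∀ S : Finset α, Disjoint S A ↔ S ⊆ Aᶜ := by
    intro S
    constructor
    · intro h x hx
      exact Finset.mem_compl.mpr (fun hxA => Finset.disjoint_left.mp h hx hxA)
    · intro h
      rw [Finset.disjoint_left]
      intro x hx hxA
      exact Finset.mem_compl.mp (h hx) hxA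
  calc ∑ S ∈ (Finset.univ : Finset α).powerset,
      p ^ S.card * (1 - p) ^ (Fintype.card α - S.card) * (if Disjoint S A then 1 else 0)
      = ∑ S ∈ (Finset.univ : Finset α).powerset,
        (if S ∈ Aᶜ.powerset then p ^ S.card * (1 - p) ^ (Fintype.card α - S.card) else 0) := by
        refine Finset.sum_congr rfl fun S _ => ?_
        by_cases h : Disjoint S A
        · rw [if_pos h, if_pos (Finset.mem_powerset.mpr ((h1 S).mp h)), mul_one]
        · rw [if_neg h, if_neg (fun hc => h ((h1 S).mpr (Finset.mem_powerset.mp hc))), mul_zero]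
    _ = ∑ S ∈ Aᶜ.powerset, p ^ S.card * (1 - p) ^ (Fintype.card α - S.card) := by
        rw [Finset.sum_ite_mem]
        congr 1
        rw [Finset.inter_eq_right.mpr (fun S _ => Finset.mem_powerset.mpr (Finset.subset_univ S))]
    _ = (1 - p) ^ A.card * ∑ S ∈ Aᶜ.powerset, p ^ S.card * (1 - p) ^ (Aᶜ.card - S.card) := by
        rw [Finset.mul_sum]
        apply Finset.sum_congr rfl
        intro S hS
        rw [Finset.mem_powerset] at hS
        have h2 : S.card ≤ Aᶜ.card := Finset.card_le_card hS
        have h3 : Aᶜ.card = Fintype.card α - A.card := Finset.card_compl A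
        have h4 : A.card ≤ Fintype.card α := Finset.card_le_univ A
        have h5 : Fintype.card α - S.card = A.card + (Aᶜ.card - S.card) := by omega
        rw [h5, pow_add]
        ring
    _ = (1 - p) ^ A.card := by rw [sum_powerset_prob, mul_one]

section comb
variable {c : ℕ} {N : Fin c → ℕ}

def proj (i : Fin c) (x : ∀ k : Fin c, Fin (N k)) : ∀ k : {k : Fin c // k ≤ i}, Fin (N k.1) :=
  fun k => x k.1

lemma proj_eq_iff {i : Fin c} {a b : ∀ k : Fin c, Fin (N k)} :
    proj i a = proj i b ↔ ∀ k : Fin c, k ≤ i → a k = b k :=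
  ⟨fun h k hk => congrFun h ⟨k, hk⟩, fun h => funext fun k => h k.1 k.2⟩

lemma countP_or {γ : Type*} (p q r : γ → Bool)
    (h : ∀ a, (p a = true ∨ q a = true ↔ r a = true) ∧ ¬(p a = true ∧ q a = true)) :
    ∀ l : List γ, l.countP p + l.countP q = l.countP r := by
  intro l
  induction l with
  | nil => simp
  | cons a l ih =>
    rw [List.countP_cons, List.countP_cons, List.countP_cons]
    obtain ⟨h1, h2⟩ := h a
    cases hp : p a <;> cases hq : q a <;> simp_all <;> omega

lemma key_count (le : (∀ k : Fin c, Fin (N k)) → (∀ k : Fin c, Fin (N k)) → Prop)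
    (hlin : IsLinearOrder _ le) (hrec : IsRecursiveOrder N le) (i : Fin c) :
    ∀ L : List (∀ k : Fin c, Fin (N k)), L.Pairwise le → L ≠ [] →
      1 + (L.zip L.tail).countP (fun ab => decide (proj i ab.1 ≠ proj i ab.2))
        = (L.map (proj i)).toFinset.card := by
  intro L
  induction L with
  | nil => intro _ h; exact absurd rfl h
  | cons x t ih =>
    intro hs _
    cases t with
    | nil => simp
    | cons y L =>
      have hs' : (y :: L).Pairwise le := hs.of_cons
      have ih' := ih hs' (by simp)
      simp only [List.tail_cons] at ih'
      have hzip : (x :: y :: L).zip (x :: y :: L).tail = (x, y) :: ((y :: L).zip L) := rfl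
      rw [hzip, List.countP_cons, List.map_cons, List.toFinset_cons]
      by_cases h : proj i x = proj i y
      · have : decide (proj i x ≠ proj i y) = false := by simp [h]
        rw [this]
        have hmem : proj i x ∈ ((y :: L).map (proj i)).toFinset := by
          simp only [List.toFinset_cons, List.map_cons, h]
          exact Finset.mem_insert_self _ _
        rw [Finset.card_insert_of_mem hmem]
        simpa using ih'
      · have hd : decide (proj i x ≠ proj i y) = true := by simp [h]
        rw [hd]
        have hnotmem : proj i x ∉ ((y :: L).map (proj i)).toFinset := by
          intro hmem
          rw [List.mem_toFinset, List.mem_map] at hmem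
          obtain ⟨z, hz, hπ⟩ := hmem
          have hxy : le x y := List.rel_of_pairwise_cons hs (by simp)
          have hyz : le y z := by
            rcases List.mem_cons.mp hz with rfl | hz'
            · exact hlin.toIsPartialOrder.toIsPreorder.toRefl.refl _
            · exact List.rel_of_pairwise_cons hs' hz'
          have hagree : ∀ k : Fin c, (k : ℕ) < (i : ℕ) + 1 → x k = z k := by
            intro k hk
            exact (proj_eq_iff.mp hπ k (by rw [Fin.le_def]; omega)).symm
          have hyx := hrec ((i : ℕ) + 1) x y z hxy hyz hagree
          apply h
          exact (proj_eq_iff.mpr (fun k hk => (hyx k (by rw [Fin.le_def] at hk; omega)))).symm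
        rw [Finset.card_insert_of_notMem hnotmem, ← ih']
        have : (if true = true then 1 else 0) = 1 := rfl
        rw [this]
        omega

lemma runs_seamless_eq_card
    (le : (∀ k : Fin c, Fin (N k)) → (∀ k : Fin c, Fin (N k)) → Prop)
    (hlin : IsLinearOrder _ le) (hrec : IsRecursiveOrder N le) (i : Fin c)
    (L : List (∀ k : Fin c, Fin (N k))) (hs : L.Pairwise le) :
    runsCol i L + seamlessCol i L = (L.map (proj i)).toFinset.card := by
  cases L with
  | nil => simp [runsCol, seamlessCol]
  | cons a l =>
    show 1 + ((a :: l).zip l).countP _ + ((a :: l).zip l).countP _ = _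
    rw [add_assoc, countP_or _ _ (fun ab => decide (proj i ab.1 ≠ proj i ab.2))]
    · exact key_count le hlin hrec i (a :: l) hs (by simp)
    · rintro ⟨x, y⟩
      simp only [decide_eq_true_iff]
      constructor
      · constructor
        · rintro (h1 | ⟨he, j, hj, hne⟩) heq
          · exact h1 (proj_eq_iff.mp heq i le_rfl)
          · exact hne (proj_eq_iff.mp heq j hj.le)
        · intro hne
          by_cases hi : x i = y i
          · have : ¬ ∀ k : Fin c, k ≤ i → x k = y k := fun hall => hne (proj_eq_iff.mpr hall)
            push_neg at this
            obtain ⟨k, hk, hkne⟩ := this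
            have hki : k ≠ i := fun hki => hkne (hki ▸ hi)
            exact Or.inr ⟨hi, k, lt_of_le_of_ne hk hki, hkne⟩
          · exact Or.inl hi
      · rintro ⟨h1, h2, -⟩
        exact h1 h2

end comb

section fiber
variable {c : ℕ} {N : Fin c → ℕ}

lemma card_prefixSpace (i : Fin c) :
    Fintype.card (∀ k : {k : Fin c // k ≤ i}, Fin (N k.1)) = ∏ k ∈ Finset.Iic i, N k := by
  rw [Fintype.card_pi]
  simp only [Fintype.card_fin]
  exact (Finset.prod_subtype (Finset.Iic i) (fun k => Finset.mem_Iic) N).symm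

lemma card_fiber (i : Fin c) (q : ∀ k : {k : Fin c // k ≤ i}, Fin (N k.1)) :
    (Finset.univ.filter (fun x : ∀ k : Fin c, Fin (N k) => proj i x = q)).card
      = ∏ k ∈ Finset.Ioi i, N k := by
  rw [← Fintype.card_subtype]
  have e : {x : ∀ k : Fin c, Fin (N k) // proj i x = q}
      ≃ (∀ k : {k : Fin c // ¬ k ≤ i}, Fin (N k.1)) :=
    { toFun := fun x k => x.1 k.1
      invFun := fun g => ⟨fun k => if h : k ≤ i then q ⟨k, h⟩ else g ⟨k, h⟩,
        funext fun k => by simp only [proj]; rw [dif_pos k.2]⟩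
      left_inv := fun x => Subtype.ext (funext fun k => by
        by_cases h : k ≤ i
        · simp only [dif_pos h]
          exact (congrFun x.2 ⟨k, h⟩).symm
        · simp only [dif_neg h])
      right_inv := fun g => funext fun k => by simp only; rw [dif_neg k.2] }
  rw [Fintype.card_congr e, Fintype.card_pi]
  simp only [Fintype.card_fin]
  refine (Finset.prod_subtype (Finset.Ioi i) (fun k => ?_) N).symm
  rw [Finset.mem_Ioi]
  exact not_le.symm

end fiber

lemma expVal_card_image {α : Type*} {β : Type*} [Fintype α] [DecidableEq α]
    [Fintype β] [DecidableEq β] (p : ℝ) (π : α → β) :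
    ∑ S ∈ (Finset.univ : Finset α).powerset,
        p ^ S.card * (1 - p) ^ (Fintype.card α - S.card) * ((S.image π).card : ℝ)
      = ∑ q : β, (1 - (1 - p) ^ (Finset.univ.filter (fun x => π x = q)).card) := by
  have hcard : ∀ S : Finset α, ((S.image π).card : ℝ)
      = ∑ q : β, (if q ∈ S.image π then (1 : ℝ) else 0) := by
    intro S
    rw [Finset.sum_ite_mem, Finset.univ_inter, Finset.sum_const, nsmul_eq_mul, mul_one]
  simp_rw [hcard, Finset.mul_sum]
  rw [Finset.sum_comm]
  refine Finset.sum_congr rfl fun q _ => ?_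
  have hiff : ∀ S : Finset α,
      (q ∈ S.image π ↔ ¬ Disjoint S (Finset.univ.filter (fun x => π x = q))) := by
    intro S
    rw [Finset.mem_image, Finset.disjoint_left]
    push_neg
    constructor
    · rintro ⟨x, hx, rfl⟩; exact ⟨x, hx, by simp⟩
    · rintro ⟨x, hx, hx2⟩
      simp only [Finset.mem_filter, Finset.mem_univ, true_and] at hx2
      exact ⟨x, hx, hx2⟩
  have hsub : ∀ S : Finset α, (if q ∈ S.image π then (1 : ℝ) else 0)
      = 1 - (if Disjoint S (Finset.univ.filter (fun x => π x = q)) then (1 : ℝ) else 0) := by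
    intro S
    by_cases h : Disjoint S (Finset.univ.filter (fun x => π x = q))
    · rw [if_pos h, if_neg (fun hc => (hiff S).mp hc h)]; ring
    · rw [if_neg h, if_pos ((hiff S).mpr h)]; ring
  simp_rw [hsub, mul_sub, mul_one]
  rw [Finset.sum_sub_distrib, sum_prob_disjoint]
  have h1 := sum_powerset_prob p (Finset.univ : Finset α)
  rw [Finset.card_univ] at h1
  rw [h1]

/-- For a uniformly distributed random table with density `p ∈ [0,1]` sorted by
any recursive order, the expected number of runs plus seamless joins in column
`i` equals `(∏_{k ≤ i} N_k) · (1 − (1−p)^{∏_{k > i} N_k})`; in particular it is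
the same for all recursive orders. -/
theorem expected_runs_plus_seamless {c : ℕ} {N : Fin c → ℕ}
    (p : ℝ) (hp0 : 0 ≤ p) (hp1 : p ≤ 1)
    (le : (∀ k : Fin c, Fin (N k)) → (∀ k : Fin c, Fin (N k)) → Prop)
    (hlin : IsLinearOrder _ le) (hrec : IsRecursiveOrder N le)
    (sortedOf : Finset (∀ k : Fin c, Fin (N k)) → List (∀ k : Fin c, Fin (N k)))
    (hsorted : ∀ S, (sortedOf S).Pairwise le ∧ (sortedOf S).Nodup ∧
      ∀ x, x ∈ sortedOf S ↔ x ∈ S)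
    (i : Fin c) :
    expVal p (fun S => (runsCol i (sortedOf S) : ℝ))
        + expVal p (fun S => (seamlessCol i (sortedOf S) : ℝ))
      = (∏ k ∈ Finset.Iic i, (N k : ℝ)) *
          (1 - (1 - p) ^ (∏ k ∈ Finset.Ioi i, N k)) := by
  classical
  have himg : ∀ S : Finset (∀ k : Fin c, Fin (N k)),
      ((sortedOf S).map (proj i)).toFinset = S.image (proj i) := by
    intro S
    ext q
    simp only [List.mem_toFinset, List.mem_map, Finset.mem_image]
    constructor
    · rintro ⟨x, hx, rfl⟩; exact ⟨x, ((hsorted S).2.2 x).mp hx, rfl⟩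
    · rintro ⟨x, hx, rfl⟩; exact ⟨x, ((hsorted S).2.2 x).mpr hx, rfl⟩
  have hcomb : ∀ S : Finset (∀ k : Fin c, Fin (N k)),
      (runsCol i (sortedOf S) : ℝ) + (seamlessCol i (sortedOf S) : ℝ)
        = ((S.image (proj i)).card : ℝ) := by
    intro S
    rw [← himg S, ← runs_seamless_eq_card le hlin hrec i _ (hsorted S).1]
    push_cast
    ring
  rw [expVal, expVal, ← Finset.sum_add_distrib]
  have step : ∀ S ∈ (Finset.univ : Finset (∀ k : Fin c, Fin (N k))).powerset,
      p ^ S.card * (1 - p) ^ (Fintype.card (∀ k : Fin c, Fin (N k)) - S.card)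
          * (runsCol i (sortedOf S) : ℝ)
        + p ^ S.card * (1 - p) ^ (Fintype.card (∀ k : Fin c, Fin (N k)) - S.card)
          * (seamlessCol i (sortedOf S) : ℝ)
      = p ^ S.card * (1 - p) ^ (Fintype.card (∀ k : Fin c, Fin (N k)) - S.card)
          * ((S.image (proj i)).card : ℝ) := by
    intro S _
    rw [← mul_add, hcomb S]
  rw [Finset.sum_congr rfl step, expVal_card_image]
  simp_rw [card_fiber i]
  rw [Finset.sum_const, Finset.card_univ, card_prefixSpace i, nsmul_eq_mul]
  push_cast
  ring
end

section
/- Fix p ∈ (0,1] and define, for a sequence of positive integers (M_1,…,M_c), f(M_1,…,M_c) = ∑_{i=1}^c (∏_{k=1}^{i} M_k) · (1 − (1−p)^{∏_{k=i+1}^{c} M_k}). If N_1 ≤ N_2 ≤ … ≤ N_c are positive integers, then for every permutation σ of {1,…,c}, f(N_1,…,N_c) ≤ f(N_{σ(1)},…,N_{σ(c)}). That is, the expected sum of runs and seamless joins over a uniformly distributed random table is minimized when the columns are ordered by increasing cardinality. -/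
open Finset

lemma strictMono_fin_le_apply {t : ℕ} {f : Fin t → ℕ} (hf : StrictMono f) :
    ∀ (v : ℕ) (hv : v < t), v ≤ f ⟨v, hv⟩ := by
  intro v
  induction v with
  | zero => intro hv; exact Nat.zero_le _
  | succ v ih =>
    intro hv
    have hv' : v < t := by omega
    have h1 := hf (show (⟨v, hv'⟩ : Fin t) < ⟨v + 1, hv⟩ by simp [Fin.lt_def])
    have h2 := ih hv'
    omega

lemma geom_avg {q : ℝ} (hq0 : 0 ≤ q) (hq1 : q ≤ 1) {n m : ℕ} (h : n ≤ m) :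
    (n : ℝ) * ∑ j ∈ range m, q ^ j ≤ (m : ℝ) * ∑ j ∈ range n, q ^ j := by
  have hsplit : ∑ j ∈ range m, q ^ j = ∑ j ∈ range n, q ^ j + ∑ j ∈ Ico n m, q ^ j := by
    simp only [range_eq_Ico]
    exact (sum_Ico_consecutive _ (Nat.zero_le n) h).symm
  have h1 : ∑ j ∈ Ico n m, q ^ j ≤ (m - n : ℕ) * q ^ n := by
    have := Finset.sum_le_card_nsmul (Ico n m) (fun j => q ^ j) (q ^ n)
      (fun j hj => pow_le_pow_of_le_one hq0 hq1 (mem_Ico.1 hj).1)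
    simpa [Nat.card_Ico, nsmul_eq_mul] using this
  have h2 : (n : ℝ) * q ^ n ≤ ∑ j ∈ range n, q ^ j := by
    have := Finset.card_nsmul_le_sum (range n) (fun j => q ^ j) (q ^ n)
      (fun j hj => pow_le_pow_of_le_one hq0 hq1 (le_of_lt (mem_range.1 hj)))
    simpa [nsmul_eq_mul] using this
  have hmn : ((m - n : ℕ) : ℝ) = (m : ℝ) - n := by
    rw [Nat.cast_sub h]
  have hn0 : (0:ℝ) ≤ n := Nat.cast_nonneg n
  have hmn0 : (0:ℝ) ≤ (m:ℝ) - n := by rw [← hmn]; exact Nat.cast_nonneg _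
  rw [hsplit]
  have hA : (n : ℝ) * ∑ j ∈ Ico n m, q ^ j ≤ ((m:ℝ) - n) * ∑ j ∈ range n, q ^ j := by
    calc (n : ℝ) * ∑ j ∈ Ico n m, q ^ j ≤ (n : ℝ) * (((m - n : ℕ)) * q ^ n) :=
          mul_le_mul_of_nonneg_left h1 hn0
      _ = ((m:ℝ) - n) * ((n:ℝ) * q ^ n) := by rw [hmn]; ring
      _ ≤ ((m:ℝ) - n) * ∑ j ∈ range n, q ^ j := mul_le_mul_of_nonneg_left h2 hmn0
  nlinarith [hA]

lemma key_mono {q : ℝ} (hq0 : 0 ≤ q) (hq1 : q ≤ 1) {a b m n : ℕ}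
    (ha : 1 ≤ a) (hab : a ≤ b) (h : a * m = b * n) :
    (a : ℝ) * (1 - q ^ m) ≤ (b : ℝ) * (1 - q ^ n) := by
  have hb : 1 ≤ b := ha.trans hab
  have hnm : n ≤ m := by
    have : b * n ≤ b * m := by rw [← h]; exact Nat.mul_le_mul_right m hab
    exact Nat.le_of_mul_le_mul_left this (by omega)
  rcases Nat.eq_zero_or_pos n with hn | hn
  · subst hn
    have hm : m = 0 := by
      have h0 : a * m = 0 := by omega
      exact (Nat.mul_eq_zero.1 h0).resolve_left (by omega)
    subst hm; simp
  · have egeom : ∀ t : ℕ, 1 - q ^ t = (1 - q) * ∑ j ∈ range t, q ^ j := by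
      intro t
      linear_combination geom_sum_mul q t
    rw [egeom, egeom]
    have havg := geom_avg hq0 hq1 hnm
    have hcast : (a : ℝ) * m = (b : ℝ) * n := by exact_mod_cast h
    have hkey : (a : ℝ) * ∑ j ∈ range m, q ^ j ≤ (b : ℝ) * ∑ j ∈ range n, q ^ j := by
      have h1 : (a:ℝ) * ((n : ℝ) * ∑ j ∈ range m, q ^ j)
          ≤ (a:ℝ) * ((m : ℝ) * ∑ j ∈ range n, q ^ j) :=
        mul_le_mul_of_nonneg_left havg (Nat.cast_nonneg a)
      have h2 : (a:ℝ) * ((m : ℝ) * ∑ j ∈ range n, q ^ j)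
          = (b:ℝ) * ((n : ℝ) * ∑ j ∈ range n, q ^ j) := by
        rw [← mul_assoc, ← mul_assoc, hcast]
      have h3 : ((a:ℝ) * ∑ j ∈ range m, q ^ j) * n ≤ ((b:ℝ) * ∑ j ∈ range n, q ^ j) * n := by
        nlinarith [h1, h2]
      exact le_of_mul_le_mul_right h3 (by exact_mod_cast hn)
    have h1q : (0:ℝ) ≤ 1 - q := by linarith
    nlinarith [mul_le_mul_of_nonneg_left hkey h1q]

lemma prod_Iic_le_perm {c : ℕ} (N : Fin c → ℕ) (hpos : ∀ i, 1 ≤ N i)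
    (hmono : Monotone N) (σ : Equiv.Perm (Fin c)) (i : Fin c) :
    ∏ k ∈ Iic i, N k ≤ ∏ k ∈ Iic i, N (σ k) := by
  classical
  set t := i.val + 1 with ht
  have htc : t ≤ c := i.isLt
  set S : Finset (Fin c) := (Iic i).image σ with hS
  have hScard : S.card = t := by
    rw [hS, Finset.card_image_of_injective _ σ.injective, Fin.card_Iic]
  set e : Fin t ↪o Fin c := S.orderEmbOfFin hScard with he
  have hA : ∏ k ∈ S, N k = ∏ k ∈ Iic i, N (σ k) :=
    Finset.prod_image (fun a _ b _ h => σ.injective h)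
  have himg : Finset.image (⇑e) Finset.univ = S := by
    rw [← Finset.coe_inj, Finset.coe_image, Finset.coe_univ, Set.image_univ]
    exact range_orderEmbOfFin S hScard
  have hrhs : ∏ k ∈ Iic i, N (σ k) = ∏ j : Fin t, N (e j) := by
    rw [← hA, ← himg, Finset.prod_image (fun a _ b _ h => e.injective h)]
  set g : Fin t → Fin c := fun j => ⟨j.val, lt_of_lt_of_le j.isLt htc⟩ with hg
  have hlhs : ∏ k ∈ Iic i, N k = ∏ j : Fin t, N (g j) := by
    have hIic : Iic i = Finset.image g Finset.univ := by
      ext k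
      simp only [mem_Iic, Finset.mem_image, Finset.mem_univ, true_and]
      constructor
      · intro hk
        exact ⟨⟨k.val, by have := (Fin.le_def.1 hk); omega⟩, Fin.ext rfl⟩
      · rintro ⟨j, rfl⟩
        rw [Fin.le_def]
        have := j.isLt
        simp only [hg]
        omega
    rw [hIic, Finset.prod_image (fun a _ b _ h => by
      apply Fin.ext
      have : (g a).val = (g b).val := congrArg Fin.val h
      simpa [hg] using this)]
  rw [hrhs, hlhs]
  apply Finset.prod_le_prod'
  intro j _
  apply hmono
  rw [Fin.le_def]
  have hsm : StrictMono (fun j : Fin t => ((e j : Fin c) : ℕ)) := fun a b hab =>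
    Fin.lt_def.1 (e.strictMono hab)
  have := strictMono_fin_le_apply hsm j.val j.isLt
  simpa [hg] using this

/-- Fix `p ∈ (0,1]` and let
`f(M_1,…,M_c) = ∑_i (∏_{k ≤ i} M_k) · (1 − (1−p)^{∏_{k > i} M_k})`, the expected
sum of runs and seamless joins of a uniformly distributed random table with
density `p` sorted by any recursive order. If `N` is nondecreasing then `f(N)` is
at most `f(N ∘ σ)` for every permutation `σ` of the columns: the expected sum of
runs and seamless joins is minimized when columns are ordered by increasing
cardinality. -/
theorem increasing_cardinality_minimizes_runs_plus_seamless
    (p : ℝ) (hp0 : 0 < p) (hp1 : p ≤ 1) (c : ℕ) (N : Fin c → ℕ)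
    (hpos : ∀ i, 1 ≤ N i) (hmono : Monotone N) (σ : Equiv.Perm (Fin c)) :
    ∑ i : Fin c, (∏ k ∈ Finset.Iic i, (N k : ℝ)) *
        (1 - (1 - p) ^ (∏ k ∈ Finset.Ioi i, N k))
      ≤ ∑ i : Fin c, (∏ k ∈ Finset.Iic i, (N (σ k) : ℝ)) *
          (1 - (1 - p) ^ (∏ k ∈ Finset.Ioi i, N (σ k))) := by
  classical
  apply Finset.sum_le_sum
  intro i _
  have hcompl : Ioi i = (Iic i)ᶜ := by
    ext k; simp [not_le]
  have hprod : ∀ f : Fin c → ℕ,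
      (∏ k ∈ Iic i, f k) * (∏ k ∈ Ioi i, f k) = ∏ k, f k := by
    intro f
    rw [hcompl]
    exact Finset.prod_mul_prod_compl _ _
  have hT : (∏ k ∈ Iic i, N k) * (∏ k ∈ Ioi i, N k)
      = (∏ k ∈ Iic i, N (σ k)) * (∏ k ∈ Ioi i, N (σ k)) := by
    rw [hprod N, hprod (fun k => N (σ k)), Equiv.prod_comp σ N]
  have ha : 1 ≤ ∏ k ∈ Iic i, N k := Finset.one_le_prod' fun k _ => hpos k
  have hab := prod_Iic_le_perm N hpos hmono σ i
  have h1 : ∏ k ∈ Iic i, (N k : ℝ) = ((∏ k ∈ Iic i, N k : ℕ) : ℝ) := by push_cast; rfl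
  have h2 : ∏ k ∈ Iic i, (N (σ k) : ℝ) = ((∏ k ∈ Iic i, N (σ k) : ℕ) : ℝ) := by
    push_cast; rfl
  rw [h1, h2]
  exact key_mono (by linarith) (by linarith) ha hab hT
end

section
/- Let N_1 ≤ N_2 ≤ … ≤ N_c be positive integers, let p ∈ (0,1], and let m = min_{1≤k≤c} N_k = N_1. Consider uniformly distributed random tables with density p. Let R↑ be the expected RunCount of the sorted random table on ∏_{i=1}^c {1,…,N_i} under any fixed recursive order (columns ordered in increasing cardinality), and let R_opt be the smallest expected RunCount obtainable by choosing any permutation σ of the columns and any recursive order on the σ-permuted tuple space. Then (R↑ − R_opt)/R↑ ≤ 1/m; that is, sorting a table recursively with the columns ordered in increasing cardinality is asymptotically optimal for large minimum column cardinality. -/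
namespace RC

open Finset

variable {α : Type*}

/-- count of adjacent pairs satisfying `Gd`. -/
def cntAdj (Gd : α → α → Bool) : List α → ℕ
  | [] => 0
  | [_] => 0
  | a :: b :: l => (if Gd a b then 1 else 0) + cntAdj Gd (b :: l)

@[simp] lemma cntAdj_nil (Gd : α → α → Bool) : cntAdj Gd [] = 0 := rfl
@[simp] lemma cntAdj_single (Gd : α → α → Bool) (a : α) : cntAdj Gd [a] = 0 := rfl
@[simp] lemma cntAdj_cons_cons (Gd : α → α → Bool) (a b : α) (l : List α) :
    cntAdj Gd (a :: b :: l) = (if Gd a b then 1 else 0) + cntAdj Gd (b :: l) := rfl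

lemma countP_zip_eq_cntAdj (Gd : α → α → Bool) :
    ∀ (l : List α) (a : α),
      ((a :: l).zip l).countP (fun ab => Gd ab.1 ab.2) = cntAdj Gd (a :: l)
  | [], _ => rfl
  | b :: l, a => by
    rw [List.zip_cons_cons, List.countP_cons]
    rw [countP_zip_eq_cntAdj Gd l b, cntAdj_cons_cons]
    by_cases h : Gd a b <;> simp [h] <;> omega

/-- runs count: 0 for empty list, else 1 + adjacent differing pairs. -/
def runsP (Gd : α → α → Bool) : List α → ℕ
  | [] => 0
  | a :: l => 1 + cntAdj Gd (a :: l)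

@[simp] lemma runsP_nil (Gd : α → α → Bool) : runsP Gd [] = 0 := rfl
lemma runsP_cons (Gd : α → α → Bool) (a : α) (l : List α) :
    runsP Gd (a :: l) = 1 + cntAdj Gd (a :: l) := rfl

lemma cntAdj_split (f g h : α → α → Bool)
    (hfgh : ∀ x y, (if f x y then 1 else 0) + (if g x y then 1 else 0)
      = (if h x y then (1:ℕ) else 0)) :
    ∀ l : List α, cntAdj f l + cntAdj g l = cntAdj h l
  | [] => rfl
  | [_] => rfl
  | a :: b :: l => by
    have := cntAdj_split f g h hfgh (b :: l)
    simp only [cntAdj_cons_cons]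
    have h2 := hfgh a b
    omega

/-- runs of a `g`-grouped sorted list equals the number of distinct `g`-values. -/
lemma runsP_grouped {γ : Type*} [DecidableEq γ] (le : α → α → Prop) (g : α → γ)
    (H : ∀ x y z, le x y → le y z → g x = g z → g y = g x) :
    ∀ l : List α, l.Pairwise le →
      runsP (fun x y => decide (g x ≠ g y)) l = ((l.map g).toFinset).card
  | [] , _ => by simp
  | [a], _ => by simp [runsP]
  | a :: b :: l, hs => by
    have hs' : (b :: l).Pairwise le := hs.of_cons
    have hab : le a b := (List.pairwise_cons.1 hs).1 b (by simp)
    have ih := runsP_grouped le g H (b :: l) hs'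
    by_cases hgab : g a = g b
    · have h1 : runsP (fun x y => decide (g x ≠ g y)) (a :: b :: l)
          = runsP (fun x y => decide (g x ≠ g y)) (b :: l) := by
        simp [runsP_cons, cntAdj_cons_cons, hgab]
      have h2 : ((a :: b :: l).map g).toFinset = ((b :: l).map g).toFinset := by
        simp only [List.map_cons, List.toFinset_cons, hgab]
        exact Finset.insert_eq_self.2 (by simp)
      rw [h1, ih, h2]
    · have h1 : runsP (fun x y => decide (g x ≠ g y)) (a :: b :: l)
          = 1 + runsP (fun x y => decide (g x ≠ g y)) (b :: l) := by
        have hd : (decide (g a ≠ g b)) = true := decide_eq_true hgab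
        simp only [runsP_cons, cntAdj_cons_cons, hd]
        simp

      have hnot : g a ∉ ((b :: l).map g).toFinset := by
        simp only [List.mem_toFinset, List.mem_map]
        rintro ⟨z, hz, hgz⟩
        rcases List.mem_cons.1 hz with hz | hz
        · exact hgab (hz ▸ hgz.symm)
        · have hbz : le b z := (List.pairwise_cons.1 hs').1 z hz
          exact hgab (H a b z hab hbz hgz.symm).symm
      have h2 : ((a :: b :: l).map g).toFinset
          = insert (g a) ((b :: l).map g).toFinset := by
        simp [List.map_cons, List.toFinset_cons]
      rw [h1, ih, h2, Finset.card_insert_of_notMem hnot]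
      omega

lemma toFinset_map' {β : Type*} [DecidableEq α] [DecidableEq β] (f : α → β) (l : List α) :
    (l.map f).toFinset = l.toFinset.image f := by
  ext b
  simp [List.mem_map]

end RC

section Part2
namespace RC
open Finset

section BexpDef
variable {β : Type*}

/-- "Bernoulli expectation" of a list functional, computed recursively. -/
noncomputable def bexp (p : ℝ) : (List β → ℝ) → List β → ℝ
  | g, [] => g []
  | g, a :: t => p * bexp p (fun L => g (a :: L)) t + (1 - p) * bexp p g t

@[simp] lemma bexp_nil (p : ℝ) (g : List β → ℝ) : bexp p g [] = g [] := rfl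
lemma bexp_cons (p : ℝ) (g : List β → ℝ) (a : β) (t : List β) :
    bexp p g (a :: t) = p * bexp p (fun L => g (a :: L)) t + (1 - p) * bexp p g t := rfl

lemma bexp_congr (p : ℝ) (g g' : List β → ℝ) (h : ∀ L, g L = g' L) :
    ∀ l, bexp p g l = bexp p g' l
  | [] => h []
  | a :: t => by
    rw [bexp_cons, bexp_cons, bexp_congr p _ _ (fun L => h (a :: L)) t,
      bexp_congr p _ _ h t]

lemma bexp_add_const (p : ℝ) (cst : ℝ) (g : List β → ℝ) :
    ∀ l, bexp p (fun L => cst + g L) l = cst + bexp p g l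
  | [] => rfl
  | a :: t => by
    rw [bexp_cons, bexp_cons, bexp_add_const p cst (fun L => g (a :: L)) t,
      bexp_add_const p cst g t]
    ring

end BexpDef

variable {α : Type*} [Fintype α] [DecidableEq α]

lemma sum_pow_card (C : Finset α) (p q : ℝ) :
    ∑ S ∈ C.powerset, p ^ S.card * q ^ (C.card - S.card) = (p + q) ^ C.card := by
  have h := Finset.prod_add (fun _ : α => p) (fun _ : α => q) C
  simp only [Finset.prod_const] at h
  rw [show ∑ S ∈ C.powerset, p ^ S.card * q ^ (C.card - S.card)
      = ∑ S ∈ C.powerset, p ^ S.card * q ^ ((C \ S).card) from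
    Finset.sum_congr rfl fun S hS => by
      rw [Finset.card_sdiff_of_subset (Finset.mem_powerset.1 hS)]]
  exact h.symm

lemma expVal_one (p : ℝ) : expVal p (fun _ : Finset α => (1:ℝ)) = 1 := by
  unfold expVal
  simp only [mul_one]
  rw [show Fintype.card α = (Finset.univ : Finset α).card from rfl]
  rw [sum_pow_card]
  simp

lemma expVal_empty_inter (p : ℝ) (F : Finset α) :
    expVal p (fun S => if S ∩ F = ∅ then (1:ℝ) else 0) = (1-p) ^ F.card := by
  unfold expVal
  have h1 : ∀ S : Finset α, p ^ S.card * (1-p) ^ (Fintype.card α - S.card) *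
      (if S ∩ F = ∅ then (1:ℝ) else 0)
      = if S ∩ F = ∅ then p ^ S.card * (1-p) ^ (Fintype.card α - S.card) else 0 := by
    intro S; split <;> ring
  simp only [h1]
  rw [Finset.sum_ite, Finset.sum_const, smul_zero, add_zero]
  have h2 : (Finset.univ : Finset α).powerset.filter (fun S => S ∩ F = ∅) = Fᶜ.powerset := by
    ext S
    simp only [Finset.mem_filter, Finset.mem_powerset, Finset.subset_univ, true_and,
      Finset.subset_compl_comm]
    constructor
    · intro h
      intro x hx
      simp only [Finset.mem_compl]
      intro hxS
      exact Finset.eq_empty_iff_forall_notMem.1 h x (Finset.mem_inter.2 ⟨hxS, hx⟩)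
    · intro h
      apply Finset.eq_empty_iff_forall_notMem.2
      intro x hx
      rcases Finset.mem_inter.1 hx with ⟨h1, h2⟩
      exact Finset.mem_compl.1 (h h2) h1
  rw [h2]
  have h3 : ∀ S ∈ Fᶜ.powerset, p ^ S.card * (1-p) ^ (Fintype.card α - S.card)
      = (1-p) ^ F.card * (p ^ S.card * (1-p) ^ (Fᶜ.card - S.card)) := by
    intro S hS
    have hS' := Finset.mem_powerset.1 hS
    have hc : S.card ≤ Fᶜ.card := Finset.card_le_card hS'
    have hcc : Fᶜ.card = Fintype.card α - F.card := Finset.card_compl F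
    have hF : F.card ≤ Fintype.card α := Finset.card_le_univ F
    have : Fintype.card α - S.card = F.card + (Fᶜ.card - S.card) := by omega
    rw [this, pow_add]; ring
  rw [Finset.sum_congr rfl h3, ← Finset.mul_sum, sum_pow_card]
  simp

lemma expVal_sum {ι : Type*} (p : ℝ) (I : Finset ι) (f : ι → Finset α → ℝ) :
    expVal p (fun S => ∑ i ∈ I, f i S) = ∑ i ∈ I, expVal p (f i) := by
  unfold expVal
  rw [Finset.sum_comm]
  congr 1
  ext S
  rw [Finset.mul_sum]

lemma expVal_add (p : ℝ) (f g : Finset α → ℝ) :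
    expVal p (fun S => f S + g S) = expVal p f + expVal p g := by
  unfold expVal
  rw [← Finset.sum_add_distrib]
  congr 1; ext S; ring

lemma expVal_sub (p : ℝ) (f g : Finset α → ℝ) :
    expVal p (fun S => f S - g S) = expVal p f - expVal p g := by
  unfold expVal
  rw [← Finset.sum_sub_distrib]
  congr 1; ext S; ring

lemma expVal_congr (p : ℝ) (f g : Finset α → ℝ) (h : ∀ S, f S = g S) :
    expVal p f = expVal p g := by
  unfold expVal; exact Finset.sum_congr rfl fun S _ => by rw [h S]

lemma expVal_nonneg (p : ℝ) (hp0 : 0 ≤ p) (hp1 : p ≤ 1) (f : Finset α → ℝ)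
    (hf : ∀ S, 0 ≤ f S) : 0 ≤ expVal p f := by
  unfold expVal
  apply Finset.sum_nonneg
  intro S _
  have h1 : (0:ℝ) ≤ 1 - p := by linarith
  exact mul_nonneg (mul_nonneg (pow_nonneg hp0 _) (pow_nonneg h1 _)) (hf S)

lemma sum_powerset_eq_bexp (p : ℝ) (g : List α → ℝ) :
    ∀ l : List α, l.Nodup →
      ∑ S ∈ l.toFinset.powerset,
        p ^ S.card * (1-p) ^ (l.length - S.card) * g (l.filter (· ∈ S))
      = bexp p g l
  | [], _ => by simp
  | a :: t, hnd => by
    have hat : a ∉ t := (List.nodup_cons.1 hnd).1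
    have hnt : t.Nodup := (List.nodup_cons.1 hnd).2
    have hafin : a ∉ t.toFinset := by simp [hat]
    rw [List.toFinset_cons, Finset.sum_powerset_insert hafin]
    have hlen : t.toFinset.card = t.length := List.toFinset_card_of_nodup hnt
    have e1 : ∑ S ∈ t.toFinset.powerset,
        p ^ S.card * (1-p) ^ ((a :: t).length - S.card) * g ((a :: t).filter (· ∈ S))
        = (1-p) * bexp p g t := by
      rw [← sum_powerset_eq_bexp p g t hnt, Finset.mul_sum]
      refine Finset.sum_congr rfl ?_
      intro S hS
      have hSc : S.card ≤ t.length := hlen ▸ Finset.card_le_card (Finset.mem_powerset.1 hS)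
      have hmem : a ∉ S := fun h => hafin (Finset.mem_powerset.1 hS h)
      have hfil : (a :: t).filter (· ∈ S) = t.filter (· ∈ S) := by
        rw [List.filter_cons]
        simp [hmem]
      rw [hfil]
      have : (a :: t).length - S.card = (t.length - S.card) + 1 := by
        simp only [List.length_cons]; omega
      rw [this, pow_succ]
      ring
    have e2 : ∑ S ∈ t.toFinset.powerset,
        p ^ (insert a S).card * (1-p) ^ ((a :: t).length - (insert a S).card)
          * g ((a :: t).filter (· ∈ insert a S))
        = p * bexp p (fun L => g (a :: L)) t := by
      rw [← sum_powerset_eq_bexp p (fun L => g (a :: L)) t hnt, Finset.mul_sum]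
      refine Finset.sum_congr rfl ?_
      intro S hS
      have hmem : a ∉ S := fun h => hafin (Finset.mem_powerset.1 hS h)
      have hcard : (insert a S).card = S.card + 1 := Finset.card_insert_of_notMem hmem
      have hSc : S.card ≤ t.length := hlen ▸ Finset.card_le_card (Finset.mem_powerset.1 hS)
      have hfil : (a :: t).filter (· ∈ insert a S) = a :: t.filter (· ∈ S) := by
        rw [List.filter_cons]
        simp only [Finset.mem_insert, true_or, decide_true, if_true]
        congr 1
        apply List.filter_congr
        intro x hx
        have hxa : x ≠ a := fun h => hat (h ▸ hx)
        simp [Finset.mem_insert, hxa]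
      rw [hfil, hcard]
      have : (a :: t).length - (S.card + 1) = t.length - S.card := by
        simp only [List.length_cons]; omega
      rw [this, pow_succ]
      ring
    rw [e1, e2, bexp_cons]
    ring

lemma expVal_eq_bexp (p : ℝ) (g : List α → ℝ) (l : List α) (hnd : l.Nodup)
    (hall : ∀ x, x ∈ l) :
    expVal p (fun S => g (l.filter (· ∈ S))) = bexp p g l := by
  have htf : l.toFinset = (Finset.univ : Finset α) := by
    ext x; simp [hall x]
  have hlen : l.length = Fintype.card α := by
    rw [← List.toFinset_card_of_nodup hnd, htf, Finset.card_univ]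
  unfold expVal
  rw [← sum_powerset_eq_bexp p g l hnd, htf, hlen]

end RC
end Part2

section Part3
namespace RC
open Finset

variable {α : Type*}

/-- expected indicator that the first present element of `l` is a good partner of `x`. -/
noncomputable def Wg (p : ℝ) (Gd : α → α → Bool) (x : α) : List α → ℝ
  | [] => 0
  | a :: t => (if Gd x a then p else 0) + (1 - p) * Wg p Gd x t

@[simp] lemma Wg_nil (p : ℝ) (Gd : α → α → Bool) (x : α) : Wg p Gd x [] = 0 := rfl
lemma Wg_cons (p : ℝ) (Gd : α → α → Bool) (x a : α) (t : List α) :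
    Wg p Gd x (a :: t) = (if Gd x a then p else 0) + (1 - p) * Wg p Gd x t := rfl

/-- expected number of adjacent good pairs. -/
noncomputable def Tg (p : ℝ) (Gd : α → α → Bool) : List α → ℝ
  | [] => 0
  | a :: t => Tg p Gd t + p * Wg p Gd a t

@[simp] lemma Tg_nil (p : ℝ) (Gd : α → α → Bool) : Tg p Gd [] = 0 := rfl
lemma Tg_cons (p : ℝ) (Gd : α → α → Bool) (a : α) (t : List α) :
    Tg p Gd (a :: t) = Tg p Gd t + p * Wg p Gd a t := rfl

def consOpt : Option α → List α → List α
  | none, L => L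
  | some x, L => x :: L

lemma bexp_cntAdj_gen (p : ℝ) (Gd : α → α → Bool) :
    ∀ (l : List α) (o : Option α),
      bexp p (fun L => (cntAdj Gd (consOpt o L) : ℝ)) l
        = Tg p Gd l + o.elim 0 (fun x => Wg p Gd x l)
  | [], o => by
    cases o <;> simp [consOpt]
  | a :: t, o => by
    rw [bexp_cons]
    have h1 : bexp p (fun L => (cntAdj Gd (consOpt o (a :: L)) : ℝ)) t
        = o.elim 0 (fun x => if Gd x a then (1:ℝ) else 0)
          + (Tg p Gd t + Wg p Gd a t) := by
      cases o with
      | none =>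
        have h := bexp_cntAdj_gen p Gd t (some a)
        simp only [consOpt] at h ⊢
        rw [h]; simp [Option.elim]
      | some x =>
        have heq : ∀ L, (cntAdj Gd (consOpt (some x) (a :: L)) : ℝ)
            = (if Gd x a then (1:ℝ) else 0) + (cntAdj Gd (consOpt (some a) L) : ℝ) := by
          intro L
          simp only [consOpt, cntAdj_cons_cons]
          push_cast
          split <;> ring
        rw [bexp_congr p _ _ heq t, bexp_add_const]
        rw [bexp_cntAdj_gen p Gd t (some a)]
        simp [Option.elim]
    have h2 : bexp p (fun L => (cntAdj Gd (consOpt o L) : ℝ)) t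
        = Tg p Gd t + o.elim 0 (fun x => Wg p Gd x t) :=
      bexp_cntAdj_gen p Gd t o
    rw [h1, h2]
    cases o with
    | none => simp only [Option.elim, Tg_cons]; ring
    | some x => simp only [Option.elim, Tg_cons, Wg_cons]; split <;> ring

lemma bexp_cntAdj (p : ℝ) (Gd : α → α → Bool) (l : List α) :
    bexp p (fun L => (cntAdj Gd L : ℝ)) l = Tg p Gd l := by
  have h := bexp_cntAdj_gen p Gd l none
  simpa [consOpt] using h

lemma Wg_nonneg {p : ℝ} (hp0 : 0 < p) (hp1 : p ≤ 1) (Gd : α → α → Bool) (x : α) :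
    ∀ l : List α, 0 ≤ Wg p Gd x l
  | [] => le_refl 0
  | a :: t => by
    rw [Wg_cons]
    have h1 := Wg_nonneg hp0 hp1 Gd x t
    have h2 : (0:ℝ) ≤ 1 - p := by linarith
    have h3 : (0:ℝ) ≤ if Gd x a then p else 0 := by split <;> linarith
    nlinarith

lemma Wg_append (p : ℝ) (Gd : α → α → Bool) (x : α) :
    ∀ (u s : List α), Wg p Gd x (u ++ s)
      = Wg p Gd x u + (1-p) ^ u.length * Wg p Gd x s
  | [], s => by simp
  | a :: u, s => by
    simp only [List.cons_append, Wg_cons, Wg_append p Gd x u s, List.length_cons]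
    ring

lemma Wg_eq_zero (p : ℝ) (Gd : α → α → Bool) (x : α) :
    ∀ (u : List α), (∀ y ∈ u, Gd x y = false) → Wg p Gd x u = 0
  | [], _ => rfl
  | a :: u, h => by
    rw [Wg_cons, Wg_eq_zero p Gd x u (fun y hy => h y (List.mem_cons_of_mem a hy))]
    rw [h a (List.mem_cons_self)]
    simp

lemma Wg_le {p : ℝ} (hp0 : 0 < p) (hp1 : p ≤ 1) (Gd : α → α → Bool) (x : α) :
    ∀ (u : List α), Wg p Gd x u ≤ 1 - (1-p) ^ (u.countP (Gd x))
  | [] => by simp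
  | a :: u => by
    have ih := Wg_le hp0 hp1 Gd x u
    have hq0 : (0:ℝ) ≤ 1 - p := by linarith
    have hq1 : (1:ℝ) - p ≤ 1 := by linarith
    rw [Wg_cons, List.countP_cons]
    by_cases h : Gd x a
    · rw [h]
      simp only [if_true, decide_true]
      rw [pow_succ]
      have hpow : (0:ℝ) ≤ (1-p) ^ (u.countP (Gd x)) := pow_nonneg hq0 _
      have hpow1 : (1-p) ^ (u.countP (Gd x)) ≤ 1 := pow_le_one₀ hq0 hq1
      nlinarith
    · have hb : (Gd x a) = false := by simp [h]
      rw [hb]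
      simp only [if_false, Nat.add_zero, Bool.false_eq_true]
      have hpow : (1-p) ^ (u.countP (Gd x)) ≤ 1 := pow_le_one₀ hq0 hq1
      have hpow0 : (0:ℝ) ≤ (1-p) ^ (u.countP (Gd x)) := pow_nonneg hq0 _
      nlinarith

lemma Wg_join {p : ℝ} (hp0 : 0 < p) (hp1 : p ≤ 1) (Gd : α → α → Bool) (x : α) (B P' : ℕ) :
    ∀ bs : List (List α), (∀ b ∈ bs, b.length = B) →
      (∀ b ∈ bs, b.countP (Gd x) ≤ P') →
      Wg p Gd x bs.flatten * (1 - (1-p) ^ B) ≤ 1 - (1-p) ^ P'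
  | [], _, _ => by
    have hq0 : (0:ℝ) ≤ 1 - p := by linarith
    have hq1 : (1:ℝ) - p ≤ 1 := by linarith
    have h := pow_le_one₀ hq0 hq1 (n := P')
    simp only [List.flatten_nil, Wg_nil, zero_mul]
    linarith
  | b :: bs, hlen, hcnt => by
    have hq0 : (0:ℝ) ≤ 1 - p := by linarith
    have hq1 : (1:ℝ) - p ≤ 1 := by linarith
    have ih := Wg_join hp0 hp1 Gd x B P' bs (fun b hb => hlen b (List.mem_cons_of_mem _ hb))
      (fun b hb => hcnt b (List.mem_cons_of_mem _ hb))
    simp only [List.flatten_cons]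
    rw [Wg_append p Gd x b bs.flatten, hlen b (List.mem_cons_self)]
    have h1 : Wg p Gd x b ≤ 1 - (1-p) ^ P' := by
      refine (Wg_le hp0 hp1 Gd x b).trans ?_
      have h2 : (1-p) ^ P' ≤ (1-p) ^ (b.countP (Gd x)) :=
        pow_le_pow_of_le_one hq0 hq1 (hcnt b (List.mem_cons_self))
      linarith
    have hBpow0 : (0:ℝ) ≤ (1-p) ^ B := pow_nonneg hq0 _
    have hBpow1 : (1-p) ^ B ≤ 1 := pow_le_one₀ hq0 hq1
    nlinarith [Wg_nonneg hp0 hp1 Gd x bs.flatten]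

lemma Tg_nonneg {p : ℝ} (hp0 : 0 < p) (hp1 : p ≤ 1) (Gd : α → α → Bool) :
    ∀ l : List α, 0 ≤ Tg p Gd l
  | [] => le_refl 0
  | a :: t => by
    rw [Tg_cons]
    have h1 := Tg_nonneg hp0 hp1 Gd t
    have h2 := Wg_nonneg hp0 hp1 Gd a t
    nlinarith

lemma Tg_block {p : ℝ} (hp0 : 0 < p) (hp1 : p ≤ 1) (Gd : α → α → Bool) (C : ℝ) (hC : 0 ≤ C) :
    ∀ (u s : List α), (∀ x ∈ u, ∀ y ∈ u, Gd x y = false) →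
      (∀ x ∈ u, Wg p Gd x s ≤ C) →
      Tg p Gd (u ++ s) ≤ Tg p Gd s + (1 - (1-p) ^ u.length) * C
  | [], s, _, _ => by simp
  | x :: u, s, hin, hW => by
    have hq0 : (0:ℝ) ≤ 1 - p := by linarith
    have ih := Tg_block hp0 hp1 Gd C hC u s
      (fun a ha b hb => hin a (List.mem_cons_of_mem _ ha) b (List.mem_cons_of_mem _ hb))
      (fun a ha => hW a (List.mem_cons_of_mem _ ha))
    simp only [List.cons_append, Tg_cons, List.length_cons]
    have hWx : Wg p Gd x (u ++ s) = (1-p) ^ u.length * Wg p Gd x s := by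
      rw [Wg_append p Gd x u s,
        Wg_eq_zero p Gd x u
          (fun y hy => hin x (List.mem_cons_self) y (List.mem_cons_of_mem _ hy))]
      ring
    rw [hWx]
    have hWxs : Wg p Gd x s ≤ C := hW x (List.mem_cons_self)
    have hpow : (0:ℝ) ≤ (1-p) ^ u.length := pow_nonneg hq0 _
    have hWge : 0 ≤ Wg p Gd x s := Wg_nonneg hp0 hp1 Gd x s
    have key : p * ((1-p) ^ u.length * Wg p Gd x s) ≤ p * ((1-p) ^ u.length * C) := by
      have h3 := mul_le_mul_of_nonneg_left hWxs hpow
      nlinarith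
    calc Tg p Gd (u ++ s) + p * ((1-p) ^ u.length * Wg p Gd x s)
        ≤ Tg p Gd s + (1 - (1-p) ^ u.length) * C + p * ((1-p) ^ u.length * C) := by
          linarith [ih]
      _ = Tg p Gd s + (1 - (1-p) ^ (u.length + 1)) * C := by rw [pow_succ]; ring

lemma Tg_join {p : ℝ} (hp0 : 0 < p) (hp1 : p ≤ 1) (Gd : α → α → Bool) (B P' : ℕ) (hB : 1 ≤ B) :
    ∀ bs : List (List α),
      (∀ b ∈ bs, b.length = B) →
      (∀ (x : α), ∀ b ∈ bs, b.countP (Gd x) ≤ P') →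
      (∀ b ∈ bs, ∀ x ∈ b, ∀ y ∈ b, Gd x y = false) →
      Tg p Gd bs.flatten ≤ bs.length * (1 - (1-p) ^ P')
  | [], _, _, _ => by simp
  | b :: bs, hlen, hcnt, hin => by
    have hq0 : (0:ℝ) ≤ 1 - p := by linarith
    have hq1 : (1:ℝ) - p < 1 := by linarith
    have hBpow : (1-p) ^ B < 1 := by
      apply pow_lt_one₀ hq0 hq1
      omega
    have hBpos : (0:ℝ) < 1 - (1-p) ^ B := by linarith
    have hP'0 : (0:ℝ) ≤ 1 - (1-p) ^ P' := by
      have h := pow_le_one₀ hq0 (by linarith : (1:ℝ) - p ≤ 1) (n := P')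
      linarith
    set C : ℝ := (1 - (1-p) ^ P') / (1 - (1-p) ^ B) with hCdef
    have hC0 : 0 ≤ C := div_nonneg hP'0 (le_of_lt hBpos)
    have ih := Tg_join hp0 hp1 Gd B P' hB bs (fun b hb => hlen b (List.mem_cons_of_mem _ hb))
      (fun x b hb => hcnt x b (List.mem_cons_of_mem _ hb))
      (fun b hb => hin b (List.mem_cons_of_mem _ hb))
    simp only [List.flatten_cons]
    have hWC : ∀ x ∈ b, Wg p Gd x bs.flatten ≤ C := by
      intro x _
      rw [hCdef, le_div_iff₀ hBpos]
      exact Wg_join hp0 hp1 Gd x B P' bs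
        (fun b' hb' => hlen b' (List.mem_cons_of_mem _ hb'))
        (fun b' hb' => hcnt x b' (List.mem_cons_of_mem _ hb'))
    have hblk := Tg_block hp0 hp1 Gd C hC0 b bs.flatten
      (hin b (List.mem_cons_self)) hWC
    rw [hlen b (List.mem_cons_self)] at hblk
    have hCB : (1 - (1-p) ^ B) * C = 1 - (1-p) ^ P' := by
      rw [hCdef, mul_div_cancel₀]
      exact ne_of_gt hBpos
    simp only [List.length_cons]
    push_cast
    nlinarith [hblk, ih]

end RC
end Part3

section Part4
namespace RC
open Finset

variable {c : ℕ} {N : Fin c → ℕ}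

/-- prefix of the first `j` coordinates, as a function into ℕ. -/
def pref (j : ℕ) (t : ∀ k : Fin c, Fin (N k)) : Fin c → ℕ :=
  fun k => if (k : ℕ) < j then (t k : ℕ) else 0

lemma pref_eq_iff (j : ℕ) (s t : ∀ k : Fin c, Fin (N k)) :
    pref j s = pref j t ↔ ∀ k : Fin c, (k : ℕ) < j → s k = t k := by
  constructor
  · intro h k hk
    have := congrFun h k
    simp only [pref, if_pos hk] at this
    exact Fin.val_injective this
  · intro h
    funext k
    simp only [pref]
    split
    · exact congrArg Fin.val (h k ‹_›)
    · rfl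

/-- product of the first `j` cardinalities. -/
def aP (N : Fin c → ℕ) (j : ℕ) : ℕ :=
  ∏ k ∈ Finset.univ.filter (fun k : Fin c => (k : ℕ) < j), N k

/-- product of the remaining cardinalities. -/
def uP (N : Fin c → ℕ) (j : ℕ) : ℕ :=
  ∏ k ∈ Finset.univ.filter (fun k : Fin c => ¬ (k : ℕ) < j), N k

lemma aP_mul_uP (j : ℕ) : aP N j * uP N j = ∏ k, N k :=
  Finset.prod_filter_mul_prod_filter_not _ _ _

lemma aP_pos (hpos : ∀ k, 1 ≤ N k) (j : ℕ) : 0 < aP N j :=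
  Finset.prod_pos (fun k _ => hpos k)

lemma uP_pos (hpos : ∀ k, 1 ≤ N k) (j : ℕ) : 0 < uP N j :=
  Finset.prod_pos (fun k _ => hpos k)

lemma aP_succ (j : ℕ) (hj : j < c) :
    aP N (j + 1) = aP N j * N ⟨j, hj⟩ := by
  unfold aP
  have h : Finset.univ.filter (fun k : Fin c => (k : ℕ) < j + 1)
      = insert (⟨j, hj⟩ : Fin c) (Finset.univ.filter (fun k : Fin c => (k : ℕ) < j)) := by
    ext k
    simp only [Finset.mem_filter, Finset.mem_univ, true_and, Finset.mem_insert]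
    constructor
    · intro hk
      rcases Nat.lt_succ_iff_lt_or_eq.1 hk with h | h
      · exact Or.inr h
      · exact Or.inl (Fin.ext h)
    · rintro (rfl | h)
      · simp
      · omega
  rw [h, Finset.prod_insert (by simp)]
  ring

/-- the set of tuples agreeing with `x` on the first `j` coordinates has size `uP N j`. -/
lemma card_agree (j : ℕ) (x : ∀ k : Fin c, Fin (N k)) :
    (Finset.univ.filter
      (fun t : ∀ k : Fin c, Fin (N k) => ∀ k : Fin c, (k : ℕ) < j → t k = x k)).card
      = uP N j := by
  classical
  have e : {t : ∀ k : Fin c, Fin (N k) // ∀ k : Fin c, (k : ℕ) < j → t k = x k}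
      ≃ (∀ k : {k : Fin c // ¬ (k : ℕ) < j}, Fin (N k.1)) :=
    { toFun := fun t k => t.1 k.1
      invFun := fun f =>
        ⟨fun k => if h : (k : ℕ) < j then x k else f ⟨k, h⟩, fun k hk => dif_pos hk⟩
      left_inv := fun t => Subtype.ext (funext fun k => by
        change (if h : (k : ℕ) < j then x k else t.1 k) = t.1 k
        by_cases h : (k : ℕ) < j
        · rw [dif_pos h]; exact (t.2 k h).symm
        · rw [dif_neg h])
      right_inv := fun f => funext fun k => by
        change (if h : (k.1 : ℕ) < j then x k.1 else f ⟨k.1, h⟩) = f k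
        exact dif_neg k.2 }
  rw [← Fintype.card_subtype, Fintype.card_congr e, Fintype.card_pi]
  simp only [Fintype.card_fin]
  unfold uP
  exact (Finset.prod_subtype (Finset.univ.filter (fun k : Fin c => ¬ (k : ℕ) < j))
    (fun k => by simp) (fun k => N k)).symm

lemma pref_fiber_eq (j : ℕ) (x : ∀ k : Fin c, Fin (N k)) :
    (Finset.univ.filter
      (fun t : ∀ k : Fin c, Fin (N k) => pref j t = pref j x))
      = (Finset.univ.filter
      (fun t : ∀ k : Fin c, Fin (N k) => ∀ k : Fin c, (k : ℕ) < j → t k = x k)) := by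
  apply Finset.filter_congr
  intro t _
  simp only [pref_eq_iff]

lemma card_tup : Fintype.card (∀ k : Fin c, Fin (N k)) = ∏ k, N k := by
  simp [Fintype.card_pi]

lemma card_image_pref (hpos : ∀ k, 1 ≤ N k) (j : ℕ) :
    ((Finset.univ : Finset (∀ k : Fin c, Fin (N k))).image (pref j)).card = aP N j := by
  classical
  have h := Finset.card_eq_sum_card_image (pref j) (Finset.univ : Finset (∀ k : Fin c, Fin (N k)))
  have h2 : ∀ v ∈ (Finset.univ : Finset (∀ k : Fin c, Fin (N k))).image (pref j),
      ((Finset.univ : Finset (∀ k : Fin c, Fin (N k))).filter (fun t => pref j t = v)).card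
        = uP N j := by
    intro v hv
    rcases Finset.mem_image.1 hv with ⟨x, _, rfl⟩
    rw [pref_fiber_eq j x, card_agree j x]
  rw [Finset.sum_congr rfl h2, Finset.sum_const, Finset.card_univ, card_tup, smul_eq_mul] at h
  have h3 : aP N j * uP N j = ((Finset.univ : Finset (∀ k : Fin c, Fin (N k))).image (pref j)).card * uP N j := by
    rw [aP_mul_uP]; exact h
  exact (Nat.eq_of_mul_eq_mul_right (uP_pos hpos j) h3).symm

/-- expected number of distinct `j`-prefixes in the random subset. -/
lemma expVal_card_image_pref (hpos : ∀ k, 1 ≤ N k) (p : ℝ) (j : ℕ) :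
    expVal p (fun S : Finset (∀ k : Fin c, Fin (N k)) => ((S.image (pref j)).card : ℝ))
      = (aP N j : ℝ) * (1 - (1-p) ^ uP N j) := by
  classical
  set U := (Finset.univ : Finset (∀ k : Fin c, Fin (N k))).image (pref j) with hU
  have key : ∀ S : Finset (∀ k : Fin c, Fin (N k)),
      ((S.image (pref j)).card : ℝ)
        = ∑ v ∈ U, (1 - if S ∩ (Finset.univ.filter (fun t => pref j t = v)) = ∅ then (1:ℝ) else 0) := by
    intro S
    have hsub : S.image (pref j) ⊆ U := by
      rw [hU]; exact Finset.image_subset_image (Finset.subset_univ S)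
    have hcard : ((S.image (pref j)).card : ℝ)
        = ∑ v ∈ U, (if v ∈ S.image (pref j) then (1:ℝ) else 0) := by
      rw [Finset.sum_ite_mem]
      rw [Finset.inter_eq_right.2 hsub]
      simp
    rw [hcard]
    apply Finset.sum_congr rfl
    intro v _
    by_cases hv : v ∈ S.image (pref j)
    · rw [if_pos hv]
      have : ¬ (S ∩ (Finset.univ.filter (fun t => pref j t = v)) = ∅) := by
        rcases Finset.mem_image.1 hv with ⟨x, hx, rfl⟩
        apply Finset.ne_empty_of_mem (a := x)
        simp [Finset.mem_inter, hx]
      rw [if_neg this]; ring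
    · rw [if_neg hv]
      have : S ∩ (Finset.univ.filter (fun t => pref j t = v)) = ∅ := by
        apply Finset.eq_empty_iff_forall_notMem.2
        intro x hx
        rcases Finset.mem_inter.1 hx with ⟨h1, h2⟩
        exact hv (Finset.mem_image.2 ⟨x, h1, (Finset.mem_filter.1 h2).2⟩)
      rw [if_pos this]; ring
  rw [expVal_congr p _ _ key, expVal_sum]
  have hterm : ∀ v ∈ U,
      expVal p (fun S : Finset (∀ k : Fin c, Fin (N k)) =>
        (1 - if S ∩ (Finset.univ.filter (fun t => pref j t = v)) = ∅ then (1:ℝ) else 0))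
        = 1 - (1-p) ^ uP N j := by
    intro v hv
    rcases Finset.mem_image.1 hv with ⟨x, _, rfl⟩
    rw [expVal_sub, expVal_one, expVal_empty_inter]
    rw [pref_fiber_eq j x, card_agree j x]
  rw [Finset.sum_congr rfl hterm, Finset.sum_const]
  have hcU : U.card = aP N j := by rw [hU]; exact card_image_pref hpos j
  rw [hcU, nsmul_eq_mul]

end RC
end Part4

section Part5
namespace RC
open Finset

variable {α : Type*}

lemma dropWhile_head_false (pr : α → Bool) :
    ∀ (l : List α) (w : α) (r' : List α), l.dropWhile pr = w :: r' → pr w = false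
  | [], w, r', h => by simp at h
  | a :: t, w, r', h => by
    by_cases ha : pr a
    · rw [List.dropWhile_cons_of_pos ha] at h
      exact dropWhile_head_false pr t w r' h
    · rw [List.dropWhile_cons_of_neg ha] at h
      injection h with h1 h2
      rw [← h1]
      simpa using ha

lemma exists_blocks_aux {γ : Type*} [DecidableEq γ] (g : α → γ) (le : α → α → Prop)
    (H : ∀ x y z, le x y → le y z → g x = g z → g y = g x) :
    ∀ (n : ℕ) (l : List α), l.length ≤ n → l.Pairwise le →
      ∃ Bs : List (List α), l = Bs.flatten ∧ ∀ b ∈ Bs, b.Sublist l ∧ b ≠ [] ∧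
        ∃ x0, (∀ y ∈ b, g y = g x0) ∧ (∀ y ∈ l, g y = g x0 → y ∈ b)
  | 0, [], _, _ => ⟨[], by simp, by simp⟩
  | 0, a :: t, hlen, _ => by simp at hlen
  | n + 1, [], _, _ => ⟨[], by simp, by simp⟩
  | n + 1, a :: t, hlen, hs => by
    set pr : α → Bool := fun y => decide (g y = g a) with hpr
    set b₀ : List α := (a :: t).takeWhile pr with hb₀def
    set r : List α := (a :: t).dropWhile pr with hrdef
    have hsplit : b₀ ++ r = a :: t := List.takeWhile_append_dropWhile
    have hb₀cons : b₀ = a :: t.takeWhile pr := by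
      rw [hb₀def, List.takeWhile_cons_of_pos (by simp [hpr])]
    have hrt : r = t.dropWhile pr := by
      rw [hrdef, List.dropWhile_cons_of_pos (by simp [hpr])]
    have hrsubt : r.Sublist t := hrt ▸ List.dropWhile_sublist pr
    have hrsubl : r.Sublist (a :: t) := hrsubt.trans (List.sublist_cons_self a t)
    have hrlen : r.length ≤ n := by
      have h1 := hrsubt.length_le
      simp only [List.length_cons] at hlen
      omega
    have hrsorted : r.Pairwise le := List.Pairwise.sublist hrsubl hs
    -- no `g a`-elements in `r`
    have hnoa : ∀ z ∈ r, g z ≠ g a := by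
      intro z hz hgz
      rcases hr' : r with _ | ⟨w, r'⟩
      · rw [hr'] at hz; simp at hz
      · rw [hr'] at hz
        have hw : pr w = false := dropWhile_head_false pr (a :: t) w r' (hrdef ▸ hr')
        have hwa : g w ≠ g a := by
          intro h; rw [hpr] at hw; simp [h] at hw
        have hwl : w ∈ t := hrsubt.mem (hr' ▸ List.mem_cons_self)
        have haw : le a w := (List.pairwise_cons.1 hs).1 w hwl
        rcases List.mem_cons.1 hz with rfl | hz'
        · exact hwa hgz
        · have hwz : le w z := by
            have := List.pairwise_cons.1 (hr' ▸ hrsorted)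
            exact this.1 z hz'
          exact hwa (H a w z haw hwz hgz.symm)
    obtain ⟨Bs', hjoin', hBs'⟩ := exists_blocks_aux g le H n r hrlen hrsorted
    refine ⟨b₀ :: Bs', ?_, ?_⟩
    · simp only [List.flatten_cons, ← hjoin']
      exact hsplit.symm
    · intro b hb
      rcases List.mem_cons.1 hb with rfl | hb'
      · refine ⟨hb₀def ▸ List.takeWhile_sublist pr, by rw [hb₀cons]; simp, a, ?_, ?_⟩
        · intro y hy
          have := List.mem_takeWhile_imp (hb₀def ▸ hy)
          rw [hpr] at this
          exact of_decide_eq_true this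
        · intro y hyl hgy
          have : y ∈ b₀ ++ r := hsplit.symm ▸ hyl
          rcases List.mem_append.1 this with h | h
          · exact h
          · exact absurd hgy (hnoa y h)
      · obtain ⟨hsub, hne, x0, hall, hcomp⟩ := hBs' b hb'
        refine ⟨hsub.trans hrsubl, hne, x0, hall, ?_⟩
        intro y hyl hgy
        have hy2 : y ∈ b₀ ++ r := hsplit.symm ▸ hyl
        rcases List.mem_append.1 hy2 with h | h
        · exfalso
          obtain ⟨w0, hw0⟩ := List.exists_mem_of_ne_nil b hne
          have hw0r : w0 ∈ r := hsub.mem hw0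
          have hw0x0 : g w0 = g x0 := hall w0 hw0
          have hya : g y = g a := by
            have := List.mem_takeWhile_imp (hb₀def ▸ h)
            rw [hpr] at this
            exact of_decide_eq_true this
          exact hnoa w0 hw0r (hw0x0.trans (hgy.symm.trans hya))
        · exact hcomp y h hgy

lemma exists_blocks {γ : Type*} [DecidableEq γ] (g : α → γ) (le : α → α → Prop)
    (H : ∀ x y z, le x y → le y z → g x = g z → g y = g x)
    (l : List α) (hs : l.Pairwise le) :
    ∃ Bs : List (List α), l = Bs.flatten ∧ ∀ b ∈ Bs, b.Sublist l ∧ b ≠ [] ∧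
      ∃ x0, (∀ y ∈ b, g y = g x0) ∧ (∀ y ∈ l, g y = g x0 → y ∈ b) :=
  exists_blocks_aux g le H l.length l (le_refl _) hs

/-- geometric comparison: if `a ≤ b` and `a*u = b*v` then `a(1-q^u) ≤ b(1-q^v)`. -/
lemma geom_comp {q : ℝ} (hq0 : 0 ≤ q) (hq1 : q ≤ 1) {a b u v : ℕ}
    (ha : 0 < a) (hv : 0 < v) (hab : a ≤ b) (h : a * u = b * v) :
    (a : ℝ) * (1 - q ^ u) ≤ (b : ℝ) * (1 - q ^ v) := by
  have huv : v ≤ u := by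
    have h1 : a * v ≤ a * u := by
      rw [h]
      exact Nat.mul_le_mul_right v hab
    exact Nat.le_of_mul_le_mul_left h1 ha
  set G : ℕ → ℝ := fun n => ∑ i ∈ Finset.range n, q ^ i with hG
  have hg : ∀ n, (1 - q) * G n = 1 - q ^ n := by
    intro n
    have h1 := geom_sum_mul q n
    rw [hG]
    nlinarith [h1]
  have hsplit : G u = G v + ∑ i ∈ Finset.Ico v u, q ^ i := by
    rw [hG]
    simp only [Finset.range_eq_Ico]
    rw [← Finset.sum_Ico_consecutive (fun i => q ^ i) (Nat.zero_le v) huv]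
  have hS : ∑ i ∈ Finset.Ico v u, q ^ i ≤ ((u - v : ℕ) : ℝ) * q ^ v := by
    have h1 := Finset.sum_le_card_nsmul (Finset.Ico v u) (fun i => q ^ i) (q ^ v)
      (fun i hi => pow_le_pow_of_le_one hq0 hq1 (Finset.mem_Ico.1 hi).1)
    rwa [Nat.card_Ico, nsmul_eq_mul] at h1
  have hGv : ((v : ℕ) : ℝ) * q ^ v ≤ G v := by
    have h1 := Finset.card_nsmul_le_sum (Finset.range v) (fun i => q ^ i) (q ^ v)
      (fun i hi => pow_le_pow_of_le_one hq0 hq1 (le_of_lt (Finset.mem_range.1 hi)))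
    rwa [Finset.card_range, nsmul_eq_mul] at h1
  have hcast : ((u - v : ℕ) : ℝ) = (u : ℝ) - (v : ℝ) := by
    rw [Nat.cast_sub huv]
  have core : (v : ℝ) * G u ≤ (u : ℝ) * G v := by
    have h1 : (v : ℝ) * (∑ i ∈ Finset.Ico v u, q ^ i) ≤ (v : ℝ) * (((u - v : ℕ) : ℝ) * q ^ v) :=
      mul_le_mul_of_nonneg_left hS (Nat.cast_nonneg v)
    have h2 : ((u : ℝ) - (v : ℝ)) * ((v : ℝ) * q ^ v) ≤ ((u : ℝ) - (v : ℝ)) * G v := by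
      have huv' : (v : ℝ) ≤ (u : ℝ) := Nat.cast_le.2 huv
      have h0 : (0:ℝ) ≤ (u : ℝ) - (v : ℝ) := by linarith
      exact mul_le_mul_of_nonneg_left hGv h0
    rw [hsplit]
    rw [hcast] at h1
    nlinarith
  have hvpos : (0 : ℝ) < (v : ℝ) := Nat.cast_pos.2 hv
  have hchain : (v : ℝ) * ((a : ℝ) * (1 - q ^ u)) ≤ (v : ℝ) * ((b : ℝ) * (1 - q ^ v)) := by
    have e1 : (v : ℝ) * ((a : ℝ) * (1 - q ^ u)) = (a : ℝ) * (1 - q) * ((v : ℝ) * G u) := by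
      rw [← hg u]; ring
    have e2 : (v : ℝ) * ((b : ℝ) * (1 - q ^ v)) = (b : ℝ) * (1 - q) * ((v : ℝ) * G v) := by
      rw [← hg v]; ring
    have e3 : (a : ℝ) * (1 - q) * ((u : ℝ) * G v) = (b : ℝ) * (1 - q) * ((v : ℝ) * G v) := by
      have : (a : ℝ) * (u : ℝ) = (b : ℝ) * (v : ℝ) := by
        have := congrArg (fun n : ℕ => (n : ℝ)) h
        push_cast at this
        exact this
      linear_combination (1 - q) * G v * this
    rw [e1, e2, ← e3]
    apply mul_le_mul_of_nonneg_left core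
    exact mul_nonneg (Nat.cast_nonneg a) (by linarith)
  exact le_of_mul_le_mul_left hchain hvpos

/-- the product of the `j` smallest cardinalities is at most the product over any
`j`-element subset of the columns. -/
lemma aP_le_prod_subset {c : ℕ} (N : Fin c → ℕ) (hmono : Monotone N)
    (j : ℕ) (hj : j ≤ c) (K : Finset (Fin c)) (hK : K.card = j) :
    aP N j ≤ ∏ k ∈ K, N k := by
  classical
  have e := K.orderIsoOfFin hK
  have hsm : StrictMono (fun t : Fin j => ((e t : Fin c) : ℕ)) := by
    intro s t hst
    have h1 : (e s : { x // x ∈ K }) < e t := e.strictMono hst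
    exact h1
  have key : ∀ (n : ℕ) (h : n < j), n ≤ ((e ⟨n, h⟩ : Fin c) : ℕ) := by
    intro n
    induction n with
    | zero => intro h; exact Nat.zero_le _
    | succ m ih =>
      intro h
      have hm : m < j := Nat.lt_of_succ_lt h
      have h1 := ih hm
      have h2 : ((e ⟨m, hm⟩ : Fin c) : ℕ) < ((e ⟨m + 1, h⟩ : Fin c) : ℕ) := by
        apply hsm
        simp [Fin.lt_def]
      omega
  have hprodK : ∏ k ∈ K, N k = ∏ t : Fin j, N (e t) := by
    rw [← Finset.prod_coe_sort K N]
    exact (Equiv.prod_comp e.toEquiv (fun i : { x // x ∈ K } => N i)).symm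
  have hprodF : aP N j = ∏ t : Fin j, N ⟨t.1, lt_of_lt_of_le t.2 hj⟩ := by
    unfold aP
    rw [Finset.prod_subtype (Finset.univ.filter (fun k : Fin c => (k : ℕ) < j))
      (p := fun k : Fin c => (k : ℕ) < j) (fun k => by simp) (fun k => N k)]
    exact (Equiv.prod_comp
      (⟨fun t => ⟨⟨t.1, lt_of_lt_of_le t.2 hj⟩, t.2⟩, fun k => ⟨k.1.1, k.2⟩,
        fun t => Fin.ext rfl, fun k => Subtype.ext (Fin.ext rfl)⟩ :
        Fin j ≃ {k : Fin c // (k : ℕ) < j})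
      (fun k : {k : Fin c // (k : ℕ) < j} => N k.1)).symm
  rw [hprodK, hprodF]
  apply Finset.prod_le_prod'
  intro t _
  apply hmono
  rw [Fin.le_def]
  have h5 := key t.1 t.2
  rw [Fin.eta] at h5
  exact h5

end RC
end Part5

section Part6
namespace RC
open Finset

variable {c : ℕ} {Nf : Fin c → ℕ}

lemma runsCol_eq_runsP (i : Fin c) :
    ∀ l : List (∀ k : Fin c, Fin (Nf k)),
      runsCol i l = runsP (fun x y => decide (x i ≠ y i)) l
  | [] => rfl
  | a :: t => by
    show 1 + _ = 1 + _
    rw [countP_zip_eq_cntAdj (fun x y => decide (x i ≠ y i)) t a]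

lemma seamlessCol_eq_cntAdj (i : Fin c) (l : List (∀ k : Fin c, Fin (Nf k))) :
      seamlessCol i l = cntAdj
        (fun x y => decide (x i = y i ∧ ∃ j : Fin c, j < i ∧ x j ≠ y j)) l := by
  cases l with
  | nil => rfl
  | cons a t =>
    exact countP_zip_eq_cntAdj
      (fun x y => decide (x i = y i ∧ ∃ j : Fin c, j < i ∧ x j ≠ y j)) t a

lemma runsCol_add_seamlessCol (i : Fin c) (l : List (∀ k : Fin c, Fin (Nf k))) :
    runsCol i l + seamlessCol i l
      = runsP (fun x y => decide (pref (i.1 + 1) x ≠ pref (i.1 + 1) y)) l := by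
  rw [runsCol_eq_runsP i l, seamlessCol_eq_cntAdj i l]
  have hptw : ∀ x y : (∀ k : Fin c, Fin (Nf k)),
      ((if decide (x i ≠ y i) then 1 else 0)
        + if decide (x i = y i ∧ ∃ j : Fin c, j < i ∧ x j ≠ y j) then 1 else 0)
      = (if decide (pref (i.1 + 1) x ≠ pref (i.1 + 1) y) then (1:ℕ) else 0) := by
    intro x y
    by_cases hxy : x i = y i
    · by_cases hex : ∃ j : Fin c, j < i ∧ x j ≠ y j
      · have hf : decide (x i ≠ y i) = false := by simp [hxy]
        have hg : decide (x i = y i ∧ ∃ j : Fin c, j < i ∧ x j ≠ y j) = true :=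
          decide_eq_true ⟨hxy, hex⟩
        have hh : pref (i.1 + 1) x ≠ pref (i.1 + 1) y := by
          obtain ⟨j, hj, hne⟩ := hex
          intro hpe
          exact hne ((pref_eq_iff _ _ _).1 hpe j (by
            have := (Fin.lt_def).1 hj
            omega))
        have hh' : decide (pref (i.1 + 1) x ≠ pref (i.1 + 1) y) = true := decide_eq_true hh
        simp [hf, hg, hh']
      · have hf : decide (x i ≠ y i) = false := by simp [hxy]
        have hg : decide (x i = y i ∧ ∃ j : Fin c, j < i ∧ x j ≠ y j) = false := by
          simp only [decide_eq_false_iff_not]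
          rintro ⟨_, hex'⟩
          exact hex hex'
        have hh : pref (i.1 + 1) x = pref (i.1 + 1) y := by
          apply (pref_eq_iff _ _ _).2
          intro k hk
          rcases Nat.lt_succ_iff_lt_or_eq.1 hk with h | h
          · by_contra hne
            exact hex ⟨k, (Fin.lt_def).2 h, hne⟩
          · have : k = i := Fin.ext h
            rw [this]; exact hxy
        have hh' : decide (pref (i.1 + 1) x ≠ pref (i.1 + 1) y) = false := by
          simp [hh]
        simp [hf, hg, hh']
    · have hf : decide (x i ≠ y i) = true := decide_eq_true hxy
      have hg : decide (x i = y i ∧ ∃ j : Fin c, j < i ∧ x j ≠ y j) = false := by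
        simp only [decide_eq_false_iff_not]
        rintro ⟨h, _⟩
        exact hxy h
      have hh : pref (i.1 + 1) x ≠ pref (i.1 + 1) y := by
        intro hpe
        exact hxy ((pref_eq_iff _ _ _).1 hpe i (by omega))
      have hh' : decide (pref (i.1 + 1) x ≠ pref (i.1 + 1) y) = true := decide_eq_true hh
      simp [hf, hg, hh']
  have hsplit := cntAdj_split (fun x y => decide (x i ≠ y i))
    (fun x y => decide (x i = y i ∧ ∃ j : Fin c, j < i ∧ x j ≠ y j))
    (fun x y => decide (pref (i.1 + 1) x ≠ pref (i.1 + 1) y)) hptw l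
  cases l with
  | nil => rfl
  | cons a t =>
    rw [runsP_cons, runsP_cons, ← hsplit]
    ring

lemma map_length_sum_const {β : Type*} (B : ℕ) :
    ∀ Bs : List (List β), (∀ b ∈ Bs, b.length = B) →
      (Bs.map List.length).sum = Bs.length * B
  | [], _ => by simp
  | b :: bs, h => by
    simp only [List.map_cons, List.sum_cons, List.length_cons,
      map_length_sum_const B bs (fun b' hb' => h b' (List.mem_cons_of_mem _ hb')),
      h b (List.mem_cons_self)]
    ring

section Master
variable (hpos : ∀ k, 1 ≤ Nf k) (p : ℝ) (hp0 : 0 < p) (hp1 : p ≤ 1)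
  (le : (∀ k : Fin c, Fin (Nf k)) → (∀ k : Fin c, Fin (Nf k)) → Prop)
  (hlin : IsLinearOrder _ le) (hrec : IsRecursiveOrder Nf le)
  (sortedOf : Finset (∀ k : Fin c, Fin (Nf k)) → List (∀ k : Fin c, Fin (Nf k)))
  (hsorted : ∀ S, (sortedOf S).Pairwise le ∧ (sortedOf S).Nodup ∧
    ∀ x, x ∈ sortedOf S ↔ x ∈ S)

include hrec in
lemma grouped_of_recursive (j : ℕ) :
    ∀ x y z, le x y → le y z → pref j x = pref j z → pref j y = pref j x := by
  intro x y z hxy hyz he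
  exact (pref_eq_iff _ _ _).2 (hrec j x y z hxy hyz ((pref_eq_iff _ _ _).1 he))

include hpos hlin hrec hsorted in
lemma master_runs_add_seam (i : Fin c) :
    expVal p (fun S => (runsCol i (sortedOf S) : ℝ))
      + expVal p (fun S => (seamlessCol i (sortedOf S) : ℝ))
      = (aP Nf (i.1 + 1) : ℝ) * (1 - (1-p) ^ uP Nf (i.1 + 1)) := by
  classical
  rw [← expVal_add]
  have hpt : ∀ S : Finset (∀ k : Fin c, Fin (Nf k)),
      ((runsCol i (sortedOf S) : ℝ) + (seamlessCol i (sortedOf S) : ℝ))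
        = ((S.image (pref (i.1 + 1))).card : ℝ) := by
    intro S
    rw [← Nat.cast_add]
    congr 1
    rw [runsCol_add_seamlessCol i (sortedOf S)]
    rw [runsP_grouped le (pref (i.1 + 1)) (grouped_of_recursive le hrec (i.1 + 1))
      (sortedOf S) (hsorted S).1]
    have hts : (sortedOf S).toFinset = S := by
      ext x
      rw [List.mem_toFinset]
      exact (hsorted S).2.2 x
    rw [toFinset_map', hts]
  rw [expVal_congr p _ _ hpt]
  exact expVal_card_image_pref hpos p (i.1 + 1)

include hpos hlin hrec hsorted hp0 hp1 in
lemma master_seam_le (i : Fin c) :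
    expVal p (fun S => (seamlessCol i (sortedOf S) : ℝ))
      ≤ (aP Nf i.1 : ℝ) * (1 - (1-p) ^ uP Nf (i.1 + 1)) := by
  classical
  haveI : IsAntisymm _ le := hlin.toIsPartialOrder.toAntisymm
  set L₀ := sortedOf Finset.univ with hL₀def
  have hL₀sorted : L₀.Pairwise le := (hsorted Finset.univ).1
  have hL₀nodup : L₀.Nodup := (hsorted Finset.univ).2.1
  have hL₀all : ∀ x, x ∈ L₀ := fun x => ((hsorted Finset.univ).2.2 x).2 (Finset.mem_univ x)
  have hfil : ∀ S, sortedOf S = L₀.filter (· ∈ S) := by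
    intro S
    apply List.Perm.eq_of_pairwise' (hsorted S).1 (List.Pairwise.sublist
      (List.filter_sublist (l := L₀)) hL₀sorted)
    apply (List.perm_ext_iff_of_nodup (hsorted S).2.1 (hL₀nodup.filter _)).2
    intro x
    rw [List.mem_filter, (hsorted S).2.2 x]
    simp [hL₀all x]
  set Gd : (∀ k : Fin c, Fin (Nf k)) → (∀ k : Fin c, Fin (Nf k)) → Bool :=
    fun x y => decide (x i = y i ∧ ∃ j : Fin c, j < i ∧ x j ≠ y j) with hGddef
  have heval : expVal p (fun S => (seamlessCol i (sortedOf S) : ℝ)) = Tg p Gd L₀ := by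
    have hstep : ∀ S, ((seamlessCol i (sortedOf S) : ℕ) : ℝ)
        = ((cntAdj Gd (L₀.filter (· ∈ S)) : ℕ) : ℝ) := by
      intro S
      rw [hfil S, seamlessCol_eq_cntAdj i]
    rw [expVal_congr p _ _ hstep,
      expVal_eq_bexp p (fun L => ((cntAdj Gd L : ℕ) : ℝ)) L₀ hL₀nodup hL₀all]
    exact bexp_cntAdj p Gd L₀
  rw [heval]
  -- block decomposition
  obtain ⟨Bs, hjoin, hprops⟩ := exists_blocks (pref i.1) le
    (grouped_of_recursive le hrec i.1) L₀ hL₀sorted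
  set B := uP Nf i.1 with hBdef
  set P' := uP Nf (i.1 + 1) with hP'def
  have hB1 : 1 ≤ B := uP_pos hpos i.1
  have hlenb : ∀ b ∈ Bs, b.length = B := by
    intro b hb
    obtain ⟨hsub, hne, x0, hall, hcomp⟩ := hprops b hb
    have hbnd : b.Nodup := hsub.nodup hL₀nodup
    have hbf : b.toFinset = Finset.univ.filter
        (fun t : ∀ k : Fin c, Fin (Nf k) => pref i.1 t = pref i.1 x0) := by
      ext y
      rw [List.mem_toFinset, Finset.mem_filter]
      constructor
      · intro hy; exact ⟨Finset.mem_univ _, hall y hy⟩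
      · intro ⟨_, hy⟩; exact hcomp y (hL₀all y) hy
    rw [← List.toFinset_card_of_nodup hbnd, hbf, pref_fiber_eq, card_agree]
  have hcnt : ∀ (x : ∀ k : Fin c, Fin (Nf k)), ∀ b ∈ Bs, b.countP (Gd x) ≤ P' := by
    intro x b hb
    obtain ⟨hsub, hne, x0, hall, hcomp⟩ := hprops b hb
    have hbnd : b.Nodup := hsub.nodup hL₀nodup
    rw [List.countP_eq_length_filter]
    have hFnd : (b.filter (Gd x)).Nodup := hbnd.filter _
    by_cases hFe : b.filter (Gd x) = []
    · rw [hFe]; exact Nat.zero_le _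
    · obtain ⟨y0, hy0⟩ := List.exists_mem_of_ne_nil _ hFe
      have hmem : ∀ y ∈ b.filter (Gd x),
          y ∈ b ∧ (x i = y i ∧ ∃ j : Fin c, j < i ∧ x j ≠ y j) := by
        intro y hy
        have h1 := List.mem_of_mem_filter hy
        have h2 := List.of_mem_filter hy
        rw [hGddef] at h2
        exact ⟨h1, of_decide_eq_true h2⟩
      have hagree : ∀ y ∈ b.filter (Gd x), ∀ k : Fin c, (k : ℕ) < i.1 + 1 → y k = y0 k := by
        intro y hy k hk
        obtain ⟨hyb, hyi, _⟩ := hmem y hy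
        obtain ⟨hy0b, hy0i, _⟩ := hmem y0 hy0
        rcases Nat.lt_succ_iff_lt_or_eq.1 hk with h | h
        · have e1 : y k = x0 k := (pref_eq_iff _ _ _).1 (hall y hyb) k h
          have e2 : y0 k = x0 k := (pref_eq_iff _ _ _).1 (hall y0 hy0b) k h
          rw [e1, e2]
        · have hki : k = i := Fin.ext h
          rw [hki, ← hyi, hy0i]
      have hFsub : (b.filter (Gd x)).toFinset ⊆ Finset.univ.filter
          (fun t : ∀ k : Fin c, Fin (Nf k) => ∀ k : Fin c, (k : ℕ) < i.1 + 1 → t k = y0 k) := by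
        intro y hy
        rw [List.mem_toFinset] at hy
        rw [Finset.mem_filter]
        exact ⟨Finset.mem_univ _, hagree y hy⟩
      calc (b.filter (Gd x)).length = (b.filter (Gd x)).toFinset.card :=
            (List.toFinset_card_of_nodup hFnd).symm
        _ ≤ _ := Finset.card_le_card hFsub
        _ = P' := card_agree (i.1 + 1) y0
  have hinb : ∀ b ∈ Bs, ∀ x ∈ b, ∀ y ∈ b, Gd x y = false := by
    intro b hb x hx y hy
    obtain ⟨hsub, hne, x0, hall, hcomp⟩ := hprops b hb
    rw [hGddef]
    simp only [decide_eq_false_iff_not]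
    rintro ⟨_, j, hj, hne'⟩
    have hj' : (j : ℕ) < i.1 := (Fin.lt_def).1 hj
    have e1 : x j = x0 j := (pref_eq_iff _ _ _).1 (hall x hx) j hj'
    have e2 : y j = x0 j := (pref_eq_iff _ _ _).1 (hall y hy) j hj'
    exact hne' (e1.trans e2.symm)
  have hBslen : Bs.length = aP Nf i.1 := by
    have h1 : L₀.length = Fintype.card (∀ k : Fin c, Fin (Nf k)) := by
      have htf : L₀.toFinset = Finset.univ := by
        ext x; simp [hL₀all x]
      rw [← List.toFinset_card_of_nodup hL₀nodup, htf, Finset.card_univ]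
    have h2 : L₀.length = Bs.length * B := by
      rw [hjoin, List.length_flatten, map_length_sum_const B Bs hlenb]
    have h3 : Bs.length * B = aP Nf i.1 * B := by
      rw [← h2, h1, card_tup, ← aP_mul_uP (N := Nf) i.1, hBdef]
    exact Nat.eq_of_mul_eq_mul_right (hB1) h3
  calc Tg p Gd L₀ = Tg p Gd Bs.flatten := by rw [← hjoin]
    _ ≤ Bs.length * (1 - (1-p) ^ P') := Tg_join hp0 hp1 Gd B P' hB1 Bs hlenb hcnt hinb
    _ = (aP Nf i.1 : ℝ) * (1 - (1-p) ^ uP Nf (i.1 + 1)) := by rw [hBslen, hP'def]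

end Master
end RC
end Part6

section Part7
namespace RC
open Finset

lemma card_filter_lt {c : ℕ} (j : ℕ) (hj : j ≤ c) :
    (Finset.univ.filter (fun k : Fin c => (k : ℕ) < j)).card = j := by
  classical
  rw [← Fintype.card_subtype]
  rw [Fintype.card_congr
    (⟨fun k => ⟨k.1.1, k.2⟩, fun t => ⟨⟨t.1, lt_of_lt_of_le t.2 hj⟩, t.2⟩,
      fun k => Subtype.ext (Fin.ext rfl), fun t => Fin.ext rfl⟩ :
      {k : Fin c // (k : ℕ) < j} ≃ Fin j)]
  exact Fintype.card_fin j

lemma expVal_image_bij {α β : Type*} [Fintype α] [Fintype β] [DecidableEq α] [DecidableEq β]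
    (p : ℝ) (f : α → β) (hf : Function.Bijective f) (h : Finset β → ℝ) :
    expVal p (fun S : Finset α => h (S.image f)) = expVal p h := by
  classical
  set e := Equiv.ofBijective f hf with hedef
  have hcard : Fintype.card α = Fintype.card β := Fintype.card_of_bijective hf
  unfold expVal
  apply Finset.sum_bij' (i := fun (S : Finset α) (_ : S ∈ (Finset.univ : Finset α).powerset) => S.image f)
    (j := fun (T : Finset β) (_ : T ∈ (Finset.univ : Finset β).powerset) => T.image e.symm)
  · intro S _
    exact Finset.mem_powerset.2 (Finset.subset_univ _)
  · intro T _
    exact Finset.mem_powerset.2 (Finset.subset_univ _)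
  · intro S _
    rw [Finset.image_image]
    have : (e.symm ∘ f) = id := by
      funext a
      exact e.symm_apply_apply a
    rw [this, Finset.image_id]
  · intro T _
    rw [Finset.image_image]
    have : (f ∘ e.symm) = id := by
      funext b
      exact e.apply_symm_apply b
    rw [this, Finset.image_id]
  · intro S _
    rw [Finset.card_image_of_injective S hf.injective, hcard]

end RC



open RC in
/-- Let `N_1 ≤ … ≤ N_c` (with minimum `m = N_1`) and `p ∈ (0,1]`. Let `R↑` be the
expected RunCount of a uniformly distributed random table with density `p`
sorted by any recursive order with the columns in increasing cardinality, and
let `R'` be the expected RunCount of the `σ`-permuted table sorted by any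
recursive order on the permuted tuple space. Then `(R↑ − R')/R↑ ≤ 1/m`; since
this holds for all `σ` and recursive orders, `(R↑ − R_opt)/R↑ ≤ 1/m`. -/
theorem increasing_cardinality_asymptotically_optimal
    {c : ℕ} (hc : 0 < c) (N : Fin c → ℕ) (hpos : ∀ i, 1 ≤ N i) (hmono : Monotone N)
    (p : ℝ) (hp0 : 0 < p) (hp1 : p ≤ 1)
    (le : (∀ k : Fin c, Fin (N k)) → (∀ k : Fin c, Fin (N k)) → Prop)
    (hlin : IsLinearOrder _ le) (hrec : IsRecursiveOrder N le)
    (sortedOf : Finset (∀ k : Fin c, Fin (N k)) → List (∀ k : Fin c, Fin (N k)))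
    (hsorted : ∀ S, (sortedOf S).Pairwise le ∧ (sortedOf S).Nodup ∧
      ∀ x, x ∈ sortedOf S ↔ x ∈ S)
    (σ : Equiv.Perm (Fin c))
    (le' : (∀ k : Fin c, Fin (N (σ k))) → (∀ k : Fin c, Fin (N (σ k))) → Prop)
    (hlin' : IsLinearOrder _ le') (hrec' : IsRecursiveOrder (fun k => N (σ k)) le')
    (sortedOf' : Finset (∀ k : Fin c, Fin (N (σ k))) → List (∀ k : Fin c, Fin (N (σ k))))
    (hsorted' : ∀ S, (sortedOf' S).Pairwise le' ∧ (sortedOf' S).Nodup ∧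
      ∀ x, x ∈ sortedOf' S ↔ x ∈ S) :
    (expVal p (fun S => (runCount (sortedOf S) : ℝ))
        - expVal p (fun S =>
            (runCount (sortedOf' (S.image (fun (t : ∀ k : Fin c, Fin (N k)) (k : Fin c) => t (σ k)))) : ℝ)))
      / expVal p (fun S => (runCount (sortedOf S) : ℝ))
      ≤ 1 / (N ⟨0, hc⟩ : ℝ) := by
  classical
  set Nf' : Fin c → ℕ := fun k => N (σ k) with hNf'def
  have hpos' : ∀ k, 1 ≤ Nf' k := fun k => hpos (σ k)
  set m : ℕ := N ⟨0, hc⟩ with hmdef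
  have hm1 : 1 ≤ m := hpos _
  have hmR : (1 : ℝ) ≤ (m : ℝ) := by exact_mod_cast hm1
  have hmpos : (0 : ℝ) < (m : ℝ) := by linarith
  have hq0 : (0:ℝ) ≤ 1 - p := by linarith
  have hq1 : (1:ℝ) - p ≤ 1 := by linarith
  -- the permutation map is bijective
  set φ : (∀ k : Fin c, Fin (N k)) → (∀ k : Fin c, Fin (Nf' k)) :=
    fun t k => t (σ k) with hφdef
  have hφbij : Function.Bijective φ :=
    (Equiv.piCongrLeft' (fun k => Fin (N k)) σ.symm).bijective
  -- abbreviations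
  set R : ℝ := expVal p (fun S => (runCount (sortedOf S) : ℝ)) with hRdef
  set R' : ℝ := expVal p (fun S : Finset (∀ k : Fin c, Fin (Nf' k)) =>
    (runCount (sortedOf' S) : ℝ)) with hR'def
  have hchange : expVal p (fun S =>
      (runCount (sortedOf' (S.image φ)) : ℝ)) = R' :=
    expVal_image_bij p φ hφbij
      (fun S' : Finset (∀ k : Fin c, Fin (Nf' k)) => (runCount (sortedOf' S') : ℝ))
  -- decompositions
  set Es : Fin c → ℝ := fun i => expVal p (fun S => (seamlessCol i (sortedOf S) : ℝ)) with hEsdef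
  set Es' : Fin c → ℝ := fun i => expVal p
    (fun S : Finset (∀ k : Fin c, Fin (Nf' k)) => (seamlessCol i (sortedOf' S) : ℝ)) with hEs'def
  set A : Fin c → ℝ := fun i => (aP N (i.1 + 1) : ℝ) * (1 - (1-p) ^ uP N (i.1 + 1)) with hAdef
  set A' : Fin c → ℝ := fun i => (aP Nf' (i.1 + 1) : ℝ) * (1 - (1-p) ^ uP Nf' (i.1 + 1)) with hA'def
  have hRdec : R + ∑ i : Fin c, Es i = ∑ i : Fin c, A i := by
    have h1 : R = ∑ i : Fin c, expVal p (fun S => (runsCol i (sortedOf S) : ℝ)) := by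
      rw [hRdef, ← expVal_sum]
      apply expVal_congr
      intro S
      unfold runCount
      push_cast
      rfl
    rw [h1, ← Finset.sum_add_distrib]
    apply Finset.sum_congr rfl
    intro i _
    exact master_runs_add_seam hpos p le hlin hrec sortedOf hsorted i
  have hR'dec : R' + ∑ i : Fin c, Es' i = ∑ i : Fin c, A' i := by
    have h1 : R' = ∑ i : Fin c, expVal p
        (fun S : Finset (∀ k : Fin c, Fin (Nf' k)) => (runsCol i (sortedOf' S) : ℝ)) := by
      rw [hR'def, ← expVal_sum]
      apply expVal_congr
      intro S
      unfold runCount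
      push_cast
      rfl
    rw [h1, ← Finset.sum_add_distrib]
    apply Finset.sum_congr rfl
    intro i _
    exact master_runs_add_seam hpos' p le' hlin' hrec' sortedOf' hsorted' i
  -- nonnegativity
  have hEs_nonneg : ∀ i : Fin c, 0 ≤ Es i := by
    intro i
    apply expVal_nonneg p (le_of_lt hp0) hp1
    intro S
    positivity
  have hEs'_nonneg : ∀ i : Fin c, 0 ≤ Es' i := by
    intro i
    apply expVal_nonneg p (le_of_lt hp0) hp1
    intro S
    positivity
  have hR_nonneg : 0 ≤ R := by
    rw [hRdef]
    apply expVal_nonneg p (le_of_lt hp0) hp1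
    intro S
    positivity
  -- seam bound: m * Es' i ≤ A' i
  have hseam : ∀ i : Fin c, (m : ℝ) * Es' i ≤ A' i := by
    intro i
    have h1 : Es' i ≤ (aP Nf' i.1 : ℝ) * (1 - (1-p) ^ uP Nf' (i.1 + 1)) :=
      master_seam_le hpos' p hp0 hp1 le' hlin' hrec' sortedOf' hsorted' i
    have hmN : (m : ℝ) ≤ (Nf' i : ℝ) := by
      have : m ≤ Nf' i := hmono (by
        rw [Fin.le_def]
        exact Nat.zero_le _)
      exact_mod_cast this
    have hfac : (0:ℝ) ≤ (aP Nf' i.1 : ℝ) * (1 - (1-p) ^ uP Nf' (i.1 + 1)) := by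
      have h2 : (1-p) ^ uP Nf' (i.1 + 1) ≤ 1 := pow_le_one₀ hq0 hq1
      have h3 : (0:ℝ) ≤ (aP Nf' i.1 : ℝ) := Nat.cast_nonneg _
      nlinarith
    have haPs : aP Nf' (i.1 + 1) = aP Nf' i.1 * Nf' i := aP_succ i.1 i.isLt
    have hA'eq : A' i = (Nf' i : ℝ) * ((aP Nf' i.1 : ℝ) * (1 - (1-p) ^ uP Nf' (i.1 + 1))) := by
      simp only [hA'def]
      rw [haPs]
      push_cast
      ring
    calc (m : ℝ) * Es' i ≤ (m : ℝ) * ((aP Nf' i.1 : ℝ) * (1 - (1-p) ^ uP Nf' (i.1 + 1))) := by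
          apply mul_le_mul_of_nonneg_left h1 (by linarith)
      _ ≤ (Nf' i : ℝ) * ((aP Nf' i.1 : ℝ) * (1 - (1-p) ^ uP Nf' (i.1 + 1))) :=
          mul_le_mul_of_nonneg_right hmN hfac
      _ = A' i := hA'eq.symm
  -- comparison A i ≤ A' i
  have hAA' : ∀ i : Fin c, A i ≤ A' i := by
    intro i
    set j := i.1 + 1 with hjdef
    have hj : j ≤ c := i.isLt
    have hab : aP N j ≤ aP Nf' j := by
      have h1 : aP Nf' j = ∏ k ∈ (Finset.univ.filter (fun k : Fin c => (k : ℕ) < j)).image σ, N k := by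
        rw [Finset.prod_image (fun x _ y _ h => σ.injective h)]
        rfl
      rw [h1]
      apply aP_le_prod_subset N hmono j hj
      rw [Finset.card_image_of_injective _ σ.injective]
      exact card_filter_lt j hj
    have hMeq : aP N j * uP N j = aP Nf' j * uP Nf' j := by
      rw [aP_mul_uP, aP_mul_uP]
      exact (Equiv.prod_comp σ N).symm
    exact geom_comp hq0 hq1 (aP_pos hpos j) (uP_pos hpos' j) hab hMeq
  -- assemble
  have hSA : ∑ i : Fin c, A i ≤ ∑ i : Fin c, A' i :=
    Finset.sum_le_sum (fun i _ => hAA' i)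
  have hES'sum : (m : ℝ) * ∑ i : Fin c, Es' i ≤ ∑ i : Fin c, A' i := by
    rw [Finset.mul_sum]
    exact Finset.sum_le_sum (fun i _ => hseam i)
  have hESsum : 0 ≤ ∑ i : Fin c, Es i := Finset.sum_nonneg (fun i _ => hEs_nonneg i)
  have hES'nonneg : 0 ≤ ∑ i : Fin c, Es' i := Finset.sum_nonneg (fun i _ => hEs'_nonneg i)
  rw [hchange]
  set SA := ∑ i : Fin c, A i
  set SA' := ∑ i : Fin c, A' i
  set ES := ∑ i : Fin c, Es i
  set ES' := ∑ i : Fin c, Es' i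
  -- final arithmetic
  rcases eq_or_lt_of_le hR_nonneg with hR0 | hRpos
  · rw [← hR0, div_zero]
    positivity
  · rw [div_le_div_iff₀ hRpos hmpos]
    have e2 : (m:ℝ) * R + (m:ℝ) * ES = (m:ℝ) * SA := by
      rw [← mul_add, hRdec]
    have e1 : (m:ℝ) * R' + (m:ℝ) * ES' = (m:ℝ) * SA' := by
      rw [← mul_add, hR'dec]
    have k1 : (m:ℝ) * SA - SA ≤ (m:ℝ) * SA' - SA' := by
      have h := mul_le_mul_of_nonneg_left hSA (show (0:ℝ) ≤ (m:ℝ) - 1 by linarith)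
      nlinarith
    have k2 : (m:ℝ) * R - R ≤ (m:ℝ) * SA - SA := by
      have hRS : R ≤ SA := by linarith
      have h := mul_le_mul_of_nonneg_left hRS (show (0:ℝ) ≤ (m:ℝ) - 1 by linarith)
      nlinarith
    have hmES : 0 ≤ (m:ℝ) * ES := mul_nonneg (by linarith) hESsum
    linarith
end Part7
end

section
/- Fix an integer N ≥ 2. For c ≥ 1, let L(c) = (N^{c+1} − 1)/(N − 1) − 1 (the RunCount of the complete c-column table with all column cardinalities N sorted lexicographically) and G(c) = N^c + c − 1 (its RunCount under any Gray-code order). Then the relative benefit g(c) = (L(c) − G(c))/L(c) is monotonically increasing in c, satisfies g(c) < 1/N for all c ≥ 1, and converges to 1/N as c → ∞. -/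
open Filter

private lemma gray_nat_key (N : ℕ) (hN : 2 ≤ N) (c₁ : ℕ) (hc₁ : 1 ≤ c₁) :
    ∀ c₂, c₁ ≤ c₂ → c₂ * N ^ c₁ + c₁ ≤ c₁ * N ^ c₂ + c₂ := by
  intro c₂ h
  induction c₂, h using Nat.le_induction with
  | base => omega
  | succ m hm ih =>
    have h1 : N ^ c₁ ≤ N ^ m := Nat.pow_le_pow_right (by omega) hm
    have h2 : N ^ (m + 1) = N * N ^ m := by ring
    have h3 : 1 ≤ N ^ m := Nat.one_le_pow _ _ (by omega)
    have h4 : c₁ * (2 * N ^ m) ≤ c₁ * (N * N ^ m) :=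
      Nat.mul_le_mul_left _ (Nat.mul_le_mul_right _ hN)
    have h5 : N ^ m ≤ c₁ * N ^ m := Nat.le_mul_of_pos_left _ (by omega)
    rw [h2]
    linarith

/-- For a complete `c`-column table with all column cardinalities `N ≥ 2`, with
`L(c) = (N^{c+1} − 1)/(N − 1) − 1` its lexicographic RunCount and
`G(c) = N^c + c − 1` its Gray-code RunCount, the relative benefit
`g(c) = (L(c) − G(c))/L(c)` is monotonically increasing in `c ≥ 1`, is always
less than `1/N`, and converges to `1/N` as `c → ∞`. -/
theorem gray_relative_benefit (N : ℕ) (hN : 2 ≤ N) :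
    let L : ℕ → ℝ := fun c => ((N : ℝ) ^ (c + 1) - 1) / ((N : ℝ) - 1) - 1
    let G : ℕ → ℝ := fun c => (N : ℝ) ^ c + (c : ℝ) - 1
    let g : ℕ → ℝ := fun c => (L c - G c) / L c
    (∀ c₁ c₂ : ℕ, 1 ≤ c₁ → c₁ ≤ c₂ → g c₁ ≤ g c₂) ∧
    (∀ c : ℕ, 1 ≤ c → g c < 1 / (N : ℝ)) ∧
    Filter.Tendsto g Filter.atTop (nhds (1 / (N : ℝ))) := by
  intro L G g
  set x : ℝ := (N : ℝ) with hx
  have hx2 : (2 : ℝ) ≤ x := by rw [hx]; exact_mod_cast hN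
  have hx0 : (0 : ℝ) < x := by linarith
  have hx1 : (1 : ℝ) < x := by linarith
  have hxm1 : (0 : ℝ) < x - 1 := by linarith
  have hpow : ∀ c : ℕ, 1 ≤ c → 1 < x ^ c := fun c hc =>
    one_lt_pow₀ hx1 (by omega)
  -- key identity
  have hid : ∀ c : ℕ, 1 ≤ c →
      g c = 1 / x - ((x - 1) / x) * ((c : ℝ) / (x ^ c - 1)) := by
    intro c hc
    have h1 : 1 < x ^ c := hpow c hc
    have hne : x ^ c - 1 ≠ 0 := by linarith
    have hxne : x ≠ 0 := by linarith
    have hxm1ne : x - 1 ≠ 0 := by linarith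
    have hLne : L c ≠ 0 := by
      simp only [L]
      have : ((x : ℝ) ^ (c + 1) - 1) / (x - 1) - 1 = x * (x ^ c - 1) / (x - 1) := by
        rw [pow_succ']
        field_simp
        ring
      rw [this]
      positivity
    simp only [g, G, L] at *
    rw [div_eq_iff hLne] at *
    rw [← hx] at hLne ⊢
    field_simp
    ring
  have hkey : ∀ c₁ c₂ : ℕ, 1 ≤ c₁ → c₁ ≤ c₂ →
      (c₂ : ℝ) * (x ^ c₁ - 1) ≤ (c₁ : ℝ) * (x ^ c₂ - 1) := by
    intro c₁ c₂ h1 h12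
    have := gray_nat_key N hN c₁ h1 c₂ h12
    have : (c₂ : ℝ) * x ^ c₁ + c₁ ≤ (c₁ : ℝ) * x ^ c₂ + c₂ := by
      rw [hx]; exact_mod_cast this
    nlinarith
  refine ⟨?_, ?_, ?_⟩
  · -- monotone
    intro c₁ c₂ h1 h12
    have h2 : 1 ≤ c₂ := le_trans h1 h12
    rw [hid c₁ h1, hid c₂ h2]
    have p1 : (0:ℝ) < x ^ c₁ - 1 := by have := hpow c₁ h1; linarith
    have p2 : (0:ℝ) < x ^ c₂ - 1 := by have := hpow c₂ h2; linarith
    have hdiv : (c₂ : ℝ) / (x ^ c₂ - 1) ≤ (c₁ : ℝ) / (x ^ c₁ - 1) := by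
      rw [div_le_div_iff₀ p2 p1]
      nlinarith [hkey c₁ c₂ h1 h12]
    have hc : (0:ℝ) ≤ (x - 1) / x := by positivity
    nlinarith [mul_le_mul_of_nonneg_left hdiv hc]
  · -- bound
    intro c hc
    rw [hid c hc]
    have p1 : (0:ℝ) < x ^ c - 1 := by have := hpow c hc; linarith
    have hcpos : (0:ℝ) < (c : ℝ) := by exact_mod_cast hc
    have : (0:ℝ) < ((x - 1) / x) * ((c : ℝ) / (x ^ c - 1)) := by positivity
    linarith
  · -- limit
    have h0 : Tendsto (fun c : ℕ => (c : ℝ) / (x ^ c - 1)) atTop (nhds 0) := by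
      have hmain : Tendsto (fun c : ℕ => 2 * ((c : ℝ) ^ 1 / x ^ c)) atTop (nhds (2 * 0)) :=
        (tendsto_pow_const_div_const_pow_of_one_lt 1 hx1).const_mul 2
      rw [mul_zero] at hmain
      apply squeeze_zero' (g := fun c : ℕ => 2 * ((c : ℝ) ^ 1 / x ^ c)) ?_ ?_ hmain
      · filter_upwards [eventually_ge_atTop 1] with c hc
        have p1 : (0:ℝ) < x ^ c - 1 := by have := hpow c hc; linarith
        positivity
      · filter_upwards [eventually_ge_atTop 1] with c hc
        have h1 : 1 < x ^ c := hpow c hc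
        have h2 : (2:ℝ) ≤ x ^ c := by
          calc (2:ℝ) ≤ x := hx2
          _ = x ^ 1 := (pow_one x).symm
          _ ≤ x ^ c := pow_le_pow_right₀ (by linarith) hc
        have p1 : (0:ℝ) < x ^ c - 1 := by linarith
        have p2 : (0:ℝ) < x ^ c := by linarith
        have hcnn : (0:ℝ) ≤ (c : ℝ) := Nat.cast_nonneg c
        rw [pow_one, ← mul_div_assoc, div_le_div_iff₀ p1 p2]
        nlinarith [mul_nonneg hcnn (by linarith : (0:ℝ) ≤ x ^ c - 2)]
    have hlim : Tendsto (fun c : ℕ => 1 / x - ((x - 1) / x) * ((c : ℝ) / (x ^ c - 1)))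
        atTop (nhds (1 / x)) := by
      have := tendsto_const_nhds (x := (1 : ℝ) / x) (f := atTop (α := ℕ))
      have h2 := (h0.const_mul ((x - 1) / x))
      rw [mul_zero] at h2
      simpa using this.sub h2
    apply hlim.congr'
    filter_upwards [eventually_ge_atTop 1] with c hc
    exact (hid c hc).symm
end

section
/- Let c ≥ 1 and let N_1,…,N_c be integers with N_i ≥ 2 for all i. In the list of all ∏_{i=1}^c N_i tuples of ∏_{i=1}^c {1,…,N_i} sorted in lexicographic order, the number of runs in column j equals ∏_{i=1}^{j} N_i for every j ∈ {1,…,c}; consequently the RunCount of this list equals ∑_{j=1}^c ∏_{i=1}^{j} N_i. -/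
/-- The lexicographic order on tuples: compare at the first differing component. -/
def lexLe {c : ℕ} {N : Fin c → ℕ} (a b : ∀ k : Fin c, Fin (N k)) : Prop :=
  a = b ∨ ∃ j : Fin c, (∀ i : Fin c, i < j → a i = b i) ∧ a j < b j


section Helpers

variable {c : ℕ} {N : Fin c → ℕ}

private lemma lexLe_refl (a : ∀ k : Fin c, Fin (N k)) : lexLe a a := Or.inl rfl

private lemma lexLe_antisymm {a b : ∀ k : Fin c, Fin (N k)}
    (h1 : lexLe a b) (h2 : lexLe b a) : a = b := by
  rcases h1 with rfl | ⟨j1, hj1, hlt1⟩; · rfl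
  rcases h2 with rfl | ⟨j2, hj2, hlt2⟩; · rfl
  exfalso
  rcases lt_trichotomy j1 j2 with h | h | h
  · exact absurd (hj2 j1 h) (ne_of_gt hlt1)
  · subst h; exact absurd (hlt1.trans hlt2) (lt_irrefl _)
  · exact absurd (hj1 j2 h) (ne_of_gt hlt2)

private lemma lex_recursive (j : Fin c) {a b x : ∀ k : Fin c, Fin (N k)}
    (hab : lexLe a b) (hbx : lexLe b x)
    (hax : ∀ i, i ≤ j → a i = x i) : ∀ i, i ≤ j → b i = a i := by
  intro i hi
  by_contra hne
  rcases hab with rfl | ⟨j1, hj1, hlt1⟩; · exact hne rfl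
  have hj1i : j1 ≤ i := by
    by_contra h
    push_neg at h
    exact hne (hj1 i h).symm
  have hj1j : j1 ≤ j := hj1i.trans hi
  rcases hbx with rfl | ⟨j2, hj2, hlt2⟩
  · exact absurd (hax j1 hj1j) (ne_of_lt hlt1)
  rcases lt_trichotomy j2 j1 with h | h | h
  · exact absurd ((hj1 j2 h).symm.trans (hax j2 (le_of_lt (h.trans_le hj1j)))) (ne_of_lt hlt2)
  · subst h
    rw [(hax j2 hj1j).symm] at hlt2
    exact absurd (hlt1.trans hlt2) (lt_irrefl _)
  · exact absurd ((hj2 j1 h).trans (hax j1 hj1j).symm) (ne_of_gt hlt1)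

private lemma mem_zip_tail {α : Type*} :
    ∀ {l : List α} {ab : α × α}, ab ∈ l.zip l.tail →
      ∃ l1 l2, l = l1 ++ ab.1 :: ab.2 :: l2 := by
  intro l
  induction l with
  | nil => intro ab h; simp at h
  | cons a t ih =>
    intro ab h
    cases t with
    | nil => simp at h
    | cons b t2 =>
      rcases List.mem_cons.mp h with h | h
      · subst h; exact ⟨[], t2, rfl⟩
      · obtain ⟨l1, l2, hl⟩ := ih h
        exact ⟨a :: l1, l2, by rw [List.cons_append, ← hl]⟩

private lemma no_between {l1 l2 : List (∀ k : Fin c, Fin (N k))}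
    {a b x : ∀ k : Fin c, Fin (N k)}
    (hs : (l1 ++ a :: b :: l2).Pairwise lexLe) (hx : x ∈ l1 ++ a :: b :: l2)
    (hax : lexLe a x) (hxb : lexLe x b) : x = a ∨ x = b := by
  obtain ⟨h1, h2, h12⟩ := List.pairwise_append.mp hs
  rcases List.mem_append.mp hx with hxl | hxr
  · exact Or.inl (lexLe_antisymm (h12 x hxl a (by simp)) hax)
  · rcases List.mem_cons.mp hxr with h | h
    · exact Or.inl h
    rcases List.mem_cons.mp h with h | h
    · exact Or.inr h
    · have hbx : lexLe b x := ((List.pairwise_cons.mp (List.pairwise_cons.mp h2).2).1 x h)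
      exact Or.inr (lexLe_antisymm hxb hbx)

private lemma adj_ne {l1 l2 : List (∀ k : Fin c, Fin (N k))}
    {a b : ∀ k : Fin c, Fin (N k)} (hN : ∀ i, 2 ≤ N i)
    (hs : (l1 ++ a :: b :: l2).Pairwise lexLe)
    (hall : ∀ x, x ∈ l1 ++ a :: b :: l2) (j : Fin c)
    (hpre : ∃ i, i ≤ j ∧ a i ≠ b i) : a j ≠ b j := by
  intro hj
  obtain ⟨i, hij, hine⟩ := hpre
  have hab : lexLe a b := by
    obtain ⟨h1, h2, h12⟩ := List.pairwise_append.mp hs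
    exact (List.pairwise_cons.mp h2).1 b (by simp)
  rcases hab with rfl | ⟨j', hj', hlt⟩; · exact hine rfl
  have hj'i : j' ≤ i := by
    by_contra h
    push_neg at h
    exact hine (hj' i h)
  have hj'j : j' < j := by
    rcases lt_or_eq_of_le (hj'i.trans hij) with h | h
    · exact h
    · exact absurd (h ▸ hlt) (by rw [hj]; exact lt_irrefl _)
  by_cases h1 : ((a j : ℕ) + 1) < N j
  · set x := Function.update a j ⟨(a j : ℕ) + 1, h1⟩ with hxdef
    have hax : lexLe a x := Or.inr ⟨j,
      fun i hij' => (Function.update_of_ne (ne_of_lt hij') _ _).symm,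
      by rw [hxdef, Function.update_self]; exact Nat.lt_succ_self _⟩
    have hxb : lexLe x b := Or.inr ⟨j',
      fun i hij' => by
        rw [hxdef, Function.update_of_ne (ne_of_lt (hij'.trans hj'j))]
        exact hj' i hij',
      by rw [hxdef, Function.update_of_ne (ne_of_lt hj'j)]; exact hlt⟩
    have hxa : x ≠ a := by
      intro h
      have := congrFun h j
      rw [hxdef, Function.update_self, Fin.ext_iff] at this
      simp only [Fin.val_mk] at this
      omega
    have hxb' : x ≠ b := by
      intro h
      have := congrFun h j'
      rw [hxdef, Function.update_of_ne (ne_of_lt hj'j)] at this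
      exact (ne_of_lt hlt) this
    rcases no_between hs (hall x) hax hxb with h | h
    · exact hxa h
    · exact hxb' h
  · have hbpos : 0 < (b j : ℕ) := by
      have h2 := hN j
      have h3 : (a j : ℕ) = (b j : ℕ) := congrArg Fin.val hj
      omega
    set x := Function.update b j ⟨0, lt_of_lt_of_le two_pos (hN j)⟩ with hxdef
    have hax : lexLe a x := Or.inr ⟨j',
      fun i hij' => by
        rw [hxdef, Function.update_of_ne (ne_of_lt (hij'.trans hj'j))]
        exact hj' i hij',
      by rw [hxdef, Function.update_of_ne (ne_of_lt hj'j)]; exact hlt⟩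
    have hxb : lexLe x b := Or.inr ⟨j,
      fun i hij' => Function.update_of_ne (ne_of_lt hij') _ _,
      by rw [hxdef, Function.update_self]; exact hbpos⟩
    have hxa : x ≠ a := by
      intro h
      have := congrFun h j'
      rw [hxdef, Function.update_of_ne (ne_of_lt hj'j)] at this
      exact (ne_of_lt hlt) this.symm
    have hxb' : x ≠ b := by
      intro h
      have := congrFun h j
      rw [hxdef, Function.update_self, Fin.ext_iff] at this
      simp only [Fin.val_mk] at this
      omega
    rcases no_between hs (hall x) hax hxb with h | h
    · exact hxa h
    · exact hxb' h

private lemma count_key {β : Type*} [DecidableEq β] (f : (∀ k : Fin c, Fin (N k)) → β)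
    (hf : ∀ a b x, lexLe a b → lexLe b x → f a = f x → f b = f a) :
    ∀ l : List (∀ k : Fin c, Fin (N k)), l.Pairwise lexLe → l ≠ [] →
      1 + (l.zip l.tail).countP (fun ab => decide (f ab.1 ≠ f ab.2))
        = (l.map f).toFinset.card := by
  intro l
  induction l with
  | nil => intro _ h; exact absurd rfl h
  | cons a t ih =>
    intro hs _
    cases t with
    | nil => simp
    | cons b t2 =>
      have hst : (b :: t2).Pairwise lexLe := hs.of_cons
      have hab : lexLe a b := (List.pairwise_cons.mp hs).1 b (by simp)
      have key := ih hst (by simp)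
      simp only [ne_eq] at key
      have hzip : ((a :: b :: t2).zip (a :: b :: t2).tail)
          = (a, b) :: ((b :: t2).zip (b :: t2).tail) := rfl
      by_cases hfab : f a = f b
      · rw [hzip, List.countP_cons]
        simp only [hfab, ne_eq, not_true_eq_false, decide_false, Bool.false_eq_true,
          if_false, Nat.add_zero]
        rw [key]
        have hmem : f a ∈ ((b :: t2).map f).toFinset := by simp [hfab]
        conv_rhs => rw [List.map_cons, List.toFinset_cons]
        rw [Finset.insert_eq_self.mpr hmem]
      · rw [hzip, List.countP_cons]
        simp only [ne_eq, hfab, not_false_eq_true, decide_true, if_true]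
        have hnotmem : f a ∉ ((b :: t2).map f).toFinset := by
          simp only [List.mem_toFinset, List.mem_map, not_exists, not_and]
          intro x hx
          have hbx : lexLe b x := by
            rcases List.mem_cons.mp hx with h | h
            · exact h ▸ lexLe_refl b
            · exact (List.pairwise_cons.mp hst).1 x h
          intro hfx
          exact hfab (hf a b x hab hbx hfx.symm).symm
        conv_rhs => rw [List.map_cons, List.toFinset_cons]
        rw [Finset.card_insert_of_notMem hnotmem, ← key]
        omega

/-- truncation to the first components `i ≤ j` -/
private def pre (hN : ∀ i, 2 ≤ N i) (j : Fin c) (x : ∀ k : Fin c, Fin (N k)) :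
    ∀ k : Fin c, Fin (N k) :=
  fun i => if i ≤ j then x i else ⟨0, lt_of_lt_of_le two_pos (hN i)⟩

private lemma card_image_pre (hN : ∀ i, 2 ≤ N i) (j : Fin c) :
    (Finset.image (pre hN j) Finset.univ).card = ∏ i ∈ Finset.Iic j, N i := by
  have hcard : (Finset.image (pre hN j) Finset.univ).card
      = (Finset.univ : Finset (∀ i : Fin c, Fin (if i ≤ j then N i else 1))).card := by
    apply Finset.card_nbij'
      (fun x i => if h : i ≤ j then Fin.cast (if_pos h).symm (x i)
        else Fin.cast (if_neg h).symm 0)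
      (fun t i => if h : i ≤ j then Fin.cast (if_pos h) (t i)
        else ⟨0, lt_of_lt_of_le two_pos (hN i)⟩)
    · intro a _; exact Finset.mem_univ _
    · intro t _
      refine Finset.mem_image.mpr ⟨fun i => if h : i ≤ j then Fin.cast (if_pos h) (t i)
        else ⟨0, lt_of_lt_of_le two_pos (hN i)⟩, Finset.mem_univ _, ?_⟩
      funext i
      by_cases h : i ≤ j <;> simp [pre, h]
    · intro a ha
      obtain ⟨y, _, hy⟩ := Finset.mem_image.mp ha
      funext i
      by_cases h : i ≤ j
      · simp [h]
      · apply Fin.ext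
        simp only [h, dif_neg, not_false_eq_true, Fin.coe_cast]
        rw [← hy]
        simp [pre, h]
    · intro t _
      funext i
      by_cases h : i ≤ j
      · apply Fin.ext; simp [h]
      · apply Fin.ext
        simp only [h, dif_neg, not_false_eq_true, Fin.coe_cast]
        have h2 := (t i).isLt
        have h3 : (if i ≤ j then N i else 1) = 1 := if_neg h
        omega
  rw [hcard, Finset.card_univ, Fintype.card_pi]
  have : ∀ i : Fin c, Fintype.card (Fin (if i ≤ j then N i else 1))
      = if i ≤ j then N i else 1 := fun i => Fintype.card_fin _
  rw [Finset.prod_congr rfl (fun i _ => this i), ← Finset.prod_filter]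
  congr 1
  ext i
  simp [Finset.mem_Iic]

end Helpers

/-- In the lexicographically sorted list of all tuples of `∏ i, {1,…,N_i}` (all
`N_i ≥ 2`), the number of runs in column `j` equals `∏_{i ≤ j} N_i`, so the
RunCount equals `∑_j ∏_{i ≤ j} N_i`. -/
theorem lex_complete_table_runs {c : ℕ} (hc : 1 ≤ c) {N : Fin c → ℕ}
    (hN : ∀ i, 2 ≤ N i) (L : List (∀ k : Fin c, Fin (N k)))
    (hs : L.Pairwise lexLe) (hnd : L.Nodup) (hall : ∀ x, x ∈ L) :
    (∀ j : Fin c, runsCol j L = ∏ i ∈ Finset.Iic j, N i) ∧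
    runCount L = ∑ j : Fin c, ∏ i ∈ Finset.Iic j, N i := by
  have hmain : ∀ j : Fin c, runsCol j L = ∏ i ∈ Finset.Iic j, N i := by
    intro j
    cases L with
    | nil => exact absurd (hall fun i => ⟨0, lt_of_lt_of_le two_pos (hN i)⟩) (by simp)
    | cons a l =>
      show 1 + ((a :: l).zip l).countP (fun ab => decide (ab.1 j ≠ ab.2 j)) = _
      have hcong : ∀ ab ∈ (a :: l).zip l,
          (decide (ab.1 j ≠ ab.2 j) = true
            ↔ decide (pre hN j ab.1 ≠ pre hN j ab.2) = true) := by
        intro ab hab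
        obtain ⟨l1, l2, hdec⟩ := mem_zip_tail (l := a :: l) hab
        simp only [decide_eq_true_eq]
        constructor
        · intro h hp
          have := congrFun hp j
          simp only [pre, le_refl, if_pos] at this
          exact h this
        · intro hp
          have hex : ∃ i, i ≤ j ∧ ab.1 i ≠ ab.2 i := by
            by_contra h
            push_neg at h
            apply hp
            funext i
            simp only [pre]
            split
            · exact h i ‹_›
            · rfl
          exact adj_ne hN (hdec ▸ hs) (fun x => hdec ▸ hall x) j hex
      rw [List.countP_congr hcong]
      have hcont : ∀ a b x, lexLe a b → lexLe b x →
          pre hN j a = pre hN j x → pre hN j b = pre hN j a := by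
        intro a b x hab hbx hfa
        funext i
        simp only [pre]
        split
        · next h =>
          exact lex_recursive j hab hbx
            (fun i hi => by
              have := congrFun hfa i
              simpa [pre, hi] using this) i h
        · rfl
      have key := count_key (pre hN j) hcont (a :: l) hs (by simp)
      rw [show (a :: l).tail = l from rfl] at key
      rw [key]
      have himg : (List.map (pre hN j) (a :: l)).toFinset
          = Finset.image (pre hN j) Finset.univ := by
        ext y
        simp only [List.mem_toFinset, List.mem_map, Finset.mem_image, Finset.mem_univ,
          true_and]
        exact ⟨fun ⟨x, _, hx⟩ => ⟨x, hx⟩, fun ⟨x, hx⟩ => ⟨x, hall x, hx⟩⟩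
      rw [himg, card_image_pre hN j]
  exact ⟨hmain, by unfold runCount; exact Finset.sum_congr rfl fun j _ => hmain j⟩
end
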